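/- arXiv:1001.4216 — 6 statements merged into one kernel-verified Lean document; each statement's English description precedes it below -/
import Mathlib

section
/- For a closure operator S ↦ S̄ on the power set of a finite set E with lattice of closed sets F and Möbius function μ, if the empty set is closed then for each closed set A, μ(∅, A) = ∑_{S ⊆ E, S̄ = A} (-1)^{|S|}; if the empty set is not closed then ∑_{S ⊆ E, S̄ = A} (-1)^{|S|} = 0 for every closed set A. -/
open Finset in
private lemma sum_fibers {E : Type*} [Fintype E] [DecidableEq E]
    (cl : Finset E → Finset E)
    (hext : ∀ S, S ⊆ cl S)
    (hmono : ∀ S T, S ⊆ T → cl S ⊆ cl T)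
    (hidem : ∀ S, cl (cl S) = cl S)
    {B : Finset E} (hB : cl B = B) :
    ∑ A ∈ B.powerset.filter (fun A => cl A = A),
      (∑ S ∈ univ.powerset.filter (fun S => cl S = A), (-1 : ℤ) ^ S.card)
      = if B = ∅ then 1 else 0 := by
  have h1 : ∀ A ∈ B.powerset.filter (fun A => cl A = A),
      univ.powerset.filter (fun S => cl S = A) = B.powerset.filter (fun S => cl S = A) := by
    intro A hA
    rw [mem_filter, mem_powerset] at hA
    ext S
    simp only [mem_filter, mem_powerset, subset_univ, true_and]
    constructor
    · intro h; exact ⟨(hext S).trans (h ▸ hA.1), h⟩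
    · intro h; exact h.2
  rw [Finset.sum_congr rfl (fun A hA => by rw [h1 A hA])]
  have h2 : ∀ S ∈ B.powerset, cl S ∈ B.powerset.filter (fun A => cl A = A) := by
    intro S hS
    rw [mem_powerset] at hS
    rw [mem_filter, mem_powerset]
    exact ⟨hB ▸ hmono S B hS, hidem S⟩
  rw [Finset.sum_fiberwise_of_maps_to h2, Finset.sum_powerset_neg_one_pow_card]

open Finset in
private lemma uniq {E : Type*} [Fintype E] [DecidableEq E]
    (cl : Finset E → Finset E) (g h : Finset E → ℤ)
    (hgh : ∀ B, cl B = B →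
      ∑ A ∈ B.powerset.filter (fun A => cl A = A), g A =
      ∑ A ∈ B.powerset.filter (fun A => cl A = A), h A) :
    ∀ B, cl B = B → g B = h B := by
  intro B
  induction B using Finset.strongInduction with
  | _ B ih =>
    intro hB
    have hmem : B ∈ B.powerset.filter (fun A => cl A = A) := by
      rw [mem_filter, mem_powerset]; exact ⟨Subset.rfl, hB⟩
    have key := hgh B hB
    rw [← Finset.add_sum_erase _ g hmem, ← Finset.add_sum_erase _ h hmem] at key
    have heq : ∑ A ∈ (B.powerset.filter (fun A => cl A = A)).erase B, g A =
        ∑ A ∈ (B.powerset.filter (fun A => cl A = A)).erase B, h A := by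
      refine Finset.sum_congr rfl fun A hA => ?_
      rw [mem_erase, mem_filter, mem_powerset] at hA
      exact ih A (ssubset_of_subset_of_ne hA.2.1 hA.1) hA.2.2
    rw [heq] at key
    exact add_right_cancel key

open Finset in
/-- Möbius-function identity for a closure operator on the power set of a finite set `E`:
if `∅` is closed then `μ(∅, A) = ∑_{S̄ = A} (−1)^{|S|}` for every closed `A`; if `∅` is not
closed then `∑_{S̄ = A} (−1)^{|S|} = 0` for every closed `A`.  Here `μ` is the Möbius
function of the lattice of closed sets, characterized by its defining recursion. -/
theorem stmt_0 {E : Type*} [Fintype E] [DecidableEq E]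
    (cl : Finset E → Finset E)
    (hext : ∀ S, S ⊆ cl S)
    (hmono : ∀ S T, S ⊆ T → cl S ⊆ cl T)
    (hidem : ∀ S, cl (cl S) = cl S)
    (μ : Finset E → Finset E → ℤ)
    (hμ : ∀ A B, cl A = A → cl B = B → A ⊆ B →
      (∑ C ∈ B.powerset.filter (fun C => cl C = C ∧ A ⊆ C), μ A C) =
        if A = B then 1 else 0) :
    (cl ∅ = ∅ → ∀ A, cl A = A →
      μ ∅ A = ∑ S ∈ univ.powerset.filter (fun S => cl S = A), (-1 : ℤ) ^ S.card) ∧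
    (cl ∅ ≠ ∅ → ∀ A, cl A = A →
      (∑ S ∈ univ.powerset.filter (fun S => cl S = A), (-1 : ℤ) ^ S.card) = 0) := by
  constructor
  · intro h0
    refine uniq cl (μ ∅) _ (fun B hB => ?_)
    have key := hμ ∅ B h0 hB (empty_subset B)
    have hfilt : B.powerset.filter (fun C => cl C = C ∧ ∅ ⊆ C) =
        B.powerset.filter (fun C => cl C = C) := by
      apply Finset.filter_congr
      intro C _
      simp [empty_subset]
    rw [hfilt] at key
    rw [key, sum_fibers cl hext hmono hidem hB]
    simp [eq_comm]
  · intro h0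
    refine uniq cl _ (fun _ => 0) (fun B hB => ?_)
    rw [sum_fibers cl hext hmono hidem hB, Finset.sum_const_zero]
    have : B ≠ ∅ := fun hne => h0 (hne ▸ hB)
    simp [this]
end

section
/- The total chromatic polynomial of a gain graph Φ, defined by χ̃_Φ(q,z) = ∑_{S ⊆ E} (−1)^{|S|} q^{b(S)} z^{c(S)−b(S)}, satisfies the deletion-contraction identity χ̃_Φ(q,z) = χ̃_{Φ∖e}(q,z) − χ̃_{Φ/e}(q,z) for every link e. -/
/-- A finite gain graph with gain group `𝔊`: each edge is given with a chosen orientation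
`src e → tgt e` and its gain in that orientation (its gain in the reverse orientation
being the inverse). -/
structure GG (𝔊 : Type) [Group 𝔊] : Type 1 where
  V : Type
  E : Type
  fV : Fintype V
  fE : Fintype E
  src : E → V
  tgt : E → V
  gain : E → 𝔊

attribute [instance] GG.fV GG.fE

variable {𝔊 : Type} [Group 𝔊]

/-- Switching a gain graph by a switching function `η`. -/
def GG.switch (Φ : GG 𝔊) (η : Φ.V → 𝔊) : GG 𝔊 :=
  { Φ with gain := fun e => (η (Φ.src e))⁻¹ * Φ.gain e * η (Φ.tgt e) }

open Classical in
/-- Contract the edges of `S` (identifying the endpoints of each edge of `S`) and delete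
the edges of `D`, keeping the gains of the remaining edges.  `Φ.contractDel ∅ D` is
deletion of `D`, and `Φ.contractDel {e} {e}` is contraction `Φ/e` of a neutral edge `e`. -/
noncomputable def GG.contractDel (Φ : GG 𝔊) (S D : Finset Φ.E) : GG 𝔊 where
  V := Quot (fun x y : Φ.V => ∃ e ∈ S, x = Φ.src e ∧ y = Φ.tgt e)
  E := {e' : Φ.E // e' ∉ D}
  fV := @Fintype.ofSurjective _ _ (Classical.decEq _) _ (Quot.mk _)
      (fun q => Quot.exists_rep q)
  fE := inferInstance
  src := fun e' => Quot.mk _ (Φ.src e'.1)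
  tgt := fun e' => Quot.mk _ (Φ.tgt e'.1)
  gain := fun e' => Φ.gain e'.1

/-- The source of a directed edge (an edge together with a direction of traversal). -/
def GG.dsrc (Φ : GG 𝔊) (p : Φ.E × Bool) : Φ.V := if p.2 then Φ.src p.1 else Φ.tgt p.1

/-- The target of a directed edge. -/
def GG.dtgt (Φ : GG 𝔊) (p : Φ.E × Bool) : Φ.V := if p.2 then Φ.tgt p.1 else Φ.src p.1

/-- The gain of a directed edge. -/
def GG.dgain (Φ : GG 𝔊) (p : Φ.E × Bool) : 𝔊 := if p.2 then Φ.gain p.1 else (Φ.gain p.1)⁻¹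

/-- `w` is a circle of the edge set `S`: a nonempty closed walk using edges of `S`, with
no repeated edges and no repeated vertices. -/
structure GG.IsCircle (Φ : GG 𝔊) (S : Finset Φ.E) (w : List (Φ.E × Bool)) : Prop where
  ne : w ≠ []
  mem : ∀ p ∈ w, p.1 ∈ S
  chain : w.Chain' fun p q => Φ.dtgt p = Φ.dsrc q
  closed : ∀ h : w ≠ [], Φ.dtgt (w.getLast h) = Φ.dsrc (w.head h)
  edgesNodup : (w.map Prod.fst).Nodup
  vertsNodup : (w.map Φ.dsrc).Nodup

/-- The simple graph on the vertices of `Φ` whose adjacency is given by the edges in `S`. -/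
def GG.compGraph (Φ : GG 𝔊) (S : Finset Φ.E) : SimpleGraph Φ.V :=
  SimpleGraph.fromRel fun a b => ∃ e ∈ S, Φ.src e = a ∧ Φ.tgt e = b

/-- `c(S)`: the number of connected components of the spanning subgraph `(V, S)`. -/
noncomputable def GG.c (Φ : GG 𝔊) (S : Finset Φ.E) : ℕ :=
  Nat.card (Φ.compGraph S).ConnectedComponent

/-- A component of `(V, S)` is balanced if every circle of `S` lying in it has gain equal
to the identity. -/
def GG.BalancedComp (Φ : GG 𝔊) (S : Finset Φ.E) (C : (Φ.compGraph S).ConnectedComponent) :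
    Prop :=
  ∀ w, Φ.IsCircle S w → ∀ h : w ≠ [],
    (Φ.compGraph S).connectedComponentMk (Φ.dsrc (w.head h)) = C →
      (w.map Φ.dgain).prod = 1

/-- `b(S)`: the number of balanced components of `(V, S)`. -/
noncomputable def GG.b (Φ : GG 𝔊) (S : Finset Φ.E) : ℕ :=
  Nat.card {C : (Φ.compGraph S).ConnectedComponent // Φ.BalancedComp S C}

/-- The total chromatic polynomial `χ̃_Φ(q,z) = ∑_{S ⊆ E} (−1)^{|S|} q^{b(S)} z^{c(S)−b(S)}`. -/
noncomputable def GG.chiTotal (Φ : GG 𝔊) (q z : ℤ) : ℤ :=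
  ∑ S : Finset Φ.E, (-1) ^ S.card * q ^ Φ.b S * z ^ (Φ.c S - Φ.b S)

open Classical in
/-- Contraction of a link: first switch so that the link is neutral, then contract it. -/
noncomputable def GG.contractLink (Φ : GG 𝔊) (e : Φ.E) : GG 𝔊 :=
  (Φ.switch fun v => if v = Φ.tgt e then (Φ.gain e)⁻¹ else 1).contractDel {e} {e}

namespace GG

variable {Φ : GG 𝔊}

lemma compGraph_adj {S : Finset Φ.E} {a b : Φ.V} :
    (Φ.compGraph S).Adj a b ↔
      a ≠ b ∧ ((∃ e ∈ S, Φ.src e = a ∧ Φ.tgt e = b) ∨ ∃ e ∈ S, Φ.src e = b ∧ Φ.tgt e = a) := by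
  simp [compGraph, SimpleGraph.fromRel_adj]

lemma mk_src_eq_mk_tgt {S : Finset Φ.E} {e : Φ.E} (he : e ∈ S) :
    (Φ.compGraph S).connectedComponentMk (Φ.src e)
      = (Φ.compGraph S).connectedComponentMk (Φ.tgt e) := by
  by_cases h : Φ.src e = Φ.tgt e
  · rw [h]
  · exact SimpleGraph.ConnectedComponent.eq.mpr
      ((compGraph_adj.mpr ⟨h, Or.inl ⟨e, he, rfl, rfl⟩⟩).reachable)

lemma mk_dsrc_eq_mk_dtgt {S : Finset Φ.E} {p : Φ.E × Bool} (hp : p.1 ∈ S) :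
    (Φ.compGraph S).connectedComponentMk (Φ.dsrc p)
      = (Φ.compGraph S).connectedComponentMk (Φ.dtgt p) := by
  cases hb : p.2
  · simpa [dsrc, dtgt, hb] using (mk_src_eq_mk_tgt hp).symm
  · simpa [dsrc, dtgt, hb] using mk_src_eq_mk_tgt hp

lemma mk_dsrc_const {S : Finset Φ.E} :
    ∀ {w : List (Φ.E × Bool)}, (∀ p ∈ w, p.1 ∈ S) →
      (w.Chain' fun p q => Φ.dtgt p = Φ.dsrc q) → ∀ (hw : w ≠ []),
      ∀ p ∈ w,
      (Φ.compGraph S).connectedComponentMk (Φ.dsrc p)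
        = (Φ.compGraph S).connectedComponentMk (Φ.dsrc (w.head hw))
  | [], _, _, hw => absurd rfl hw
  | a :: rest, hmem, hchain, hw => by
    intro p hp
    rcases List.mem_cons.mp hp with rfl | hp'
    · rfl
    · have hrne : rest ≠ [] := List.ne_nil_of_mem hp'
      match rest, hrne with
      | b :: t, _ =>
        have hch := List.isChain_cons_cons.mp hchain
        have ih := mk_dsrc_const (fun q hq => hmem q (List.mem_cons_of_mem _ hq))
          hch.2 (List.cons_ne_nil b t) p hp'
        calc (Φ.compGraph S).connectedComponentMk (Φ.dsrc p)
            = (Φ.compGraph S).connectedComponentMk (Φ.dsrc b) := ih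
          _ = (Φ.compGraph S).connectedComponentMk (Φ.dtgt a) := by rw [hch.1]
          _ = (Φ.compGraph S).connectedComponentMk (Φ.dsrc a) :=
              (mk_dsrc_eq_mk_dtgt (hmem a (List.mem_cons_self))).symm

@[simp] lemma switch_dsrc (η : Φ.V → 𝔊) : (Φ.switch η).dsrc = Φ.dsrc := rfl
@[simp] lemma switch_dtgt (η : Φ.V → 𝔊) : (Φ.switch η).dtgt = Φ.dtgt := rfl
@[simp] lemma switch_compGraph (η : Φ.V → 𝔊) (S : Finset Φ.E) :
    (Φ.switch η).compGraph S = Φ.compGraph S := rfl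

lemma dgain_switch (η : Φ.V → 𝔊) (p : Φ.E × Bool) :
    (Φ.switch η).dgain p = (η (Φ.dsrc p))⁻¹ * Φ.dgain p * η (Φ.dtgt p) := by
  cases hb : p.2 <;> simp [switch, dgain, dsrc, dtgt, hb, mul_assoc]

lemma prod_map_dgain_switch (η : Φ.V → 𝔊) :
    ∀ {w : List (Φ.E × Bool)} (hw : w ≠ []),
      (w.Chain' fun p q => Φ.dtgt p = Φ.dsrc q) →
      (w.map (Φ.switch η).dgain).prod
        = (η (Φ.dsrc (w.head hw)))⁻¹ * (w.map Φ.dgain).prod * η (Φ.dtgt (w.getLast hw))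
  | [], hw, _ => absurd rfl hw
  | [p], _, _ => List.prod_singleton.trans ((dgain_switch η p).trans (by simp))
  | p :: q :: t, _, hchain => by
    have hch := List.isChain_cons_cons.mp hchain
    have ih := prod_map_dgain_switch η (List.cons_ne_nil q t) hch.2
    simp only [List.map_cons, List.prod_cons, List.head_cons] at ih ⊢
    change (Φ.switch η).dgain p * (List.map (Φ.switch η).dgain (q :: t)).prod = _
    erw [dgain_switch, ih, List.getLast_cons (List.cons_ne_nil q t), hch.1]
    group

lemma conj_eq_one_iff' {x p : 𝔊} : x⁻¹ * p * x = 1 ↔ p = 1 := by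
  constructor
  · intro h
    have := congrArg (fun y => x * y * x⁻¹) h
    simpa [mul_assoc] using this
  · rintro rfl; simp

lemma isCircle_switch_iff (η : Φ.V → 𝔊) {S : Finset Φ.E} {w : List (Φ.E × Bool)} :
    (Φ.switch η).IsCircle S w ↔ Φ.IsCircle S w :=
  ⟨fun ⟨a, b, c, d, f, g⟩ => ⟨a, b, c, d, f, g⟩, fun ⟨a, b, c, d, f, g⟩ => ⟨a, b, c, d, f, g⟩⟩

lemma balancedComp_switch_iff (η : Φ.V → 𝔊) {S : Finset Φ.E}
    {C : (Φ.compGraph S).ConnectedComponent} :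
    (Φ.switch η).BalancedComp S C ↔ Φ.BalancedComp S C := by
  unfold BalancedComp
  refine forall_congr' fun w => ?_
  erw [isCircle_switch_iff]
  refine imp_congr_right fun hw => forall_congr' fun h => imp_congr_right fun hC => ?_
  rw [prod_map_dgain_switch η h hw.chain, hw.closed h, conj_eq_one_iff']

lemma c_switch (η : Φ.V → 𝔊) (S : Finset Φ.E) : (Φ.switch η).c S = Φ.c S := rfl

lemma b_switch (η : Φ.V → 𝔊) (S : Finset Φ.E) : (Φ.switch η).b S = Φ.b S :=
  Nat.card_congr (Equiv.subtypeEquivRight fun _ => balancedComp_switch_iff η)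


lemma getLast_append_right {α : Type*} {a b : List α} (hb : b ≠ []) (h : a ++ b ≠ []) :
    (a ++ b).getLast h = b.getLast hb := by
  rw [List.getLast_append]
  simp [hb]

lemma head_append_left {α : Type*} {a b : List α} (ha : a ≠ []) (h : a ++ b ≠ []) :
    (a ++ b).head h = a.head ha := by
  rw [List.head_append]
  simp [ha]

lemma IsCircle.rotate {S : Finset Φ.E} {a b : List (Φ.E × Bool)}
    (h : Φ.IsCircle S (a ++ b)) : Φ.IsCircle S (b ++ a) := by
  rcases eq_or_ne a [] with rfl | ha
  · simpa using h
  rcases eq_or_ne b [] with rfl | hb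
  · simpa using h
  obtain ⟨hne, hmem, hchain, hclosed, hen, hvn⟩ := h
  rw [List.Chain', List.isChain_append] at hchain
  obtain ⟨hca, hcb, hlink⟩ := hchain
  have hlink' : Φ.dtgt (a.getLast ha) = Φ.dsrc (b.head hb) := by
    apply hlink <;> simp [List.getLast?_eq_getLast ha, List.head?_eq_head hb]
  have hclosed' : Φ.dtgt (b.getLast hb) = Φ.dsrc (a.head ha) := by
    have h2 := hclosed hne
    rwa [getLast_append_right hb, head_append_left ha] at h2
  have hperm : (a ++ b).Perm (b ++ a) := List.perm_append_comm
  refine ⟨by simp [hb], ?_, ?_, ?_, ?_, ?_⟩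
  · intro p hp
    exact hmem p (hperm.symm.subset (by simpa using hp))
  · rw [List.Chain', List.isChain_append]
    exact ⟨hcb, hca, by simp [List.getLast?_eq_getLast hb, List.head?_eq_head ha, hclosed']⟩
  · intro h'
    rw [getLast_append_right ha, head_append_left hb]
    exact hlink'
  · exact ((hperm.map Prod.fst).nodup_iff).mp hen
  · exact ((hperm.map Φ.dsrc).nodup_iff).mp hvn

lemma prod_rotate_eq_one_iff {a b : List 𝔊} :
    ((a ++ b).prod = 1) ↔ ((b ++ a).prod = 1) := by
  rw [List.prod_append, List.prod_append, mul_eq_one_iff_eq_inv, mul_eq_one_iff_eq_inv,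
    eq_comm, inv_eq_iff_eq_inv, eq_comm]


lemma reachable_const {V : Type*} {G : SimpleGraph V} {β : Sort*} (f : V → β)
    (h : ∀ v w, G.Adj v w → f v = f w) {v w : V} (hr : G.Reachable v w) : f v = f w := by
  obtain ⟨p⟩ := hr
  induction p with
  | nil => rfl
  | cons a _ ih => exact (h _ _ a).trans ih

section CD

variable (Φ : GG 𝔊) (T D : Finset Φ.E)

def qmk : Φ.V → (Φ.contractDel T D).V := Quot.mk _

def Lmap : (Φ.contractDel T D).E × Bool → Φ.E × Bool := fun p => (p.1.1, p.2)

variable {Φ T D}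

lemma qmk_sound {e' : Φ.E} (h : e' ∈ T) :
    qmk Φ T D (Φ.src e') = qmk Φ T D (Φ.tgt e') :=
  Quot.sound ⟨e', h, rfl, rfl⟩

lemma cd_src (p : (Φ.contractDel T D).E) :
    (Φ.contractDel T D).src p = qmk Φ T D (Φ.src p.1) := rfl

lemma cd_tgt (p : (Φ.contractDel T D).E) :
    (Φ.contractDel T D).tgt p = qmk Φ T D (Φ.tgt p.1) := rfl

lemma cd_dsrc (p : (Φ.contractDel T D).E × Bool) :
    (Φ.contractDel T D).dsrc p = qmk Φ T D (Φ.dsrc (Lmap Φ T D p)) := by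
  obtain ⟨x, b⟩ := p; cases b <;> rfl

lemma cd_dtgt (p : (Φ.contractDel T D).E × Bool) :
    (Φ.contractDel T D).dtgt p = qmk Φ T D (Φ.dtgt (Lmap Φ T D p)) := by
  obtain ⟨x, b⟩ := p; cases b <;> rfl

lemma cd_dgain (p : (Φ.contractDel T D).E × Bool) :
    (Φ.contractDel T D).dgain p = Φ.dgain (Lmap Φ T D p) := by
  obtain ⟨x, b⟩ := p; cases b <;> rfl

lemma proj_exists : ∀ (w : List (Φ.E × Bool)), (∀ p ∈ w, p.1 ∉ D) →
    ∃ w' : List ((Φ.contractDel T D).E × Bool), w'.map (Lmap Φ T D) = w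
  | [], _ => ⟨[], rfl⟩
  | p :: rest, h => by
    obtain ⟨w', hw'⟩ := proj_exists rest (fun q hq => h q (List.mem_cons_of_mem _ hq))
    exact ⟨(⟨p.1, h p (List.mem_cons_self)⟩, p.2) :: w', by simp [Lmap, hw']⟩

lemma isCircle_cd {S : Finset Φ.E} {S' : Finset (Φ.contractDel T D).E}
    (hS' : ∀ p : (Φ.contractDel T D).E, p ∈ S' ↔ p.1 ∈ S)
    {w' : List ((Φ.contractDel T D).E × Bool)} (hne : w' ≠ [])
    (hmem : ∀ p ∈ w'.map (Lmap Φ T D), p.1 ∈ S)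
    (hchain : (w'.map (Lmap Φ T D)).Chain' fun p q => Φ.dtgt p = Φ.dsrc q)
    (hclosed : ∀ h : w'.map (Lmap Φ T D) ≠ [],
       qmk Φ T D (Φ.dtgt ((w'.map (Lmap Φ T D)).getLast h))
         = qmk Φ T D (Φ.dsrc ((w'.map (Lmap Φ T D)).head h)))
    (hen : ((w'.map (Lmap Φ T D)).map Prod.fst).Nodup)
    (hvn : ((w'.map (Lmap Φ T D)).map fun p => qmk Φ T D (Φ.dsrc p)).Nodup) :
    (Φ.contractDel T D).IsCircle S' w' := by
  have hmapne : w'.map (Lmap Φ T D) ≠ [] := by simpa using hne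
  refine ⟨hne, ?_, ?_, ?_, ?_, ?_⟩
  · intro p hp
    exact (hS' p.1).mpr (hmem (Lmap Φ T D p) (List.mem_map_of_mem hp))
  · rw [List.Chain', List.isChain_map] at hchain
    exact hchain.imp fun a b hab => by rw [cd_dtgt, cd_dsrc]; exact congrArg _ hab
  · intro h
    have h2 := hclosed hmapne
    rw [List.getLast_map, List.head_map] at h2
    rw [cd_dtgt, cd_dsrc]
    exact h2
  · have h3 : (w'.map Prod.fst).map Subtype.val
        = (w'.map (Lmap Φ T D)).map Prod.fst := by
      exact List.map_map.trans (List.map_map (f := Lmap Φ T D) (g := Prod.fst)).symm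
    exact List.Nodup.of_map _ (h3 ▸ hen)
  · have h3 : w'.map (Φ.contractDel T D).dsrc
        = (w'.map (Lmap Φ T D)).map fun p => qmk Φ T D (Φ.dsrc p) := by
      rw [List.map_map]
      exact List.map_congr_left fun p _ => cd_dsrc p
    rw [h3]; exact hvn

lemma cd_map_dgain (w' : List ((Φ.contractDel T D).E × Bool)) :
    w'.map (Φ.contractDel T D).dgain = (w'.map (Lmap Φ T D)).map Φ.dgain := by
  rw [List.map_map]
  exact List.map_congr_left fun p _ => cd_dgain p

lemma lift_edgesNodup {w' : List ((Φ.contractDel T D).E × Bool)}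
    (h : (w'.map Prod.fst).Nodup) : ((w'.map (Lmap Φ T D)).map Prod.fst).Nodup := by
  have h3 : (w'.map (Lmap Φ T D)).map Prod.fst = (w'.map Prod.fst).map Subtype.val := by
    erw [List.map_map, List.map_map]; rfl
  rw [h3]
  exact h.map Subtype.val_injective

lemma lift_vertsNodup {w' : List ((Φ.contractDel T D).E × Bool)}
    (h : (w'.map (Φ.contractDel T D).dsrc).Nodup) :
    ((w'.map (Lmap Φ T D)).map Φ.dsrc).Nodup := by
  apply List.Nodup.of_map (qmk Φ T D)
  have h3 : ((w'.map (Lmap Φ T D)).map Φ.dsrc).map (qmk Φ T D)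
      = w'.map (Φ.contractDel T D).dsrc := by
    rw [List.map_map, List.map_map]
    exact List.map_congr_left fun p _ => (cd_dsrc p).symm
  rw [h3]; exact h

lemma lift_mem {S : Finset Φ.E} {S' : Finset (Φ.contractDel T D).E}
    (hS' : ∀ p, p ∈ S' ↔ p.1 ∈ S) {w' : List ((Φ.contractDel T D).E × Bool)}
    (hm : ∀ p ∈ w', p.1 ∈ S') : ∀ p ∈ w'.map (Lmap Φ T D), p.1 ∈ S := by
  intro p hp
  obtain ⟨p', hp', rfl⟩ := List.mem_map.mp hp
  exact (hS' _).mp (hm p' hp')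

variable (S : Finset Φ.E) (S' : Finset (Φ.contractDel T D).E)

lemma cd_step1 (hS' : ∀ p, p ∈ S' ↔ p.1 ∈ S)
    (hD : ∀ e' ∈ S, e' ∈ D →
        ((Φ.contractDel T D).compGraph S').connectedComponentMk (qmk Φ T D (Φ.src e'))
          = ((Φ.contractDel T D).compGraph S').connectedComponentMk (qmk Φ T D (Φ.tgt e'))) :
    ∀ x y, (Φ.compGraph S).Adj x y →
      ((Φ.contractDel T D).compGraph S').connectedComponentMk (qmk Φ T D x)
        = ((Φ.contractDel T D).compGraph S').connectedComponentMk (qmk Φ T D y) := by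
  have key : ∀ e'' ∈ S,
      ((Φ.contractDel T D).compGraph S').connectedComponentMk (qmk Φ T D (Φ.src e''))
        = ((Φ.contractDel T D).compGraph S').connectedComponentMk (qmk Φ T D (Φ.tgt e'')) := by
    intro e'' hin
    by_cases hd : e'' ∈ D
    · exact hD _ hin hd
    · exact mk_src_eq_mk_tgt (e := (⟨e'', hd⟩ : (Φ.contractDel T D).E)) ((hS' _).mpr hin)
  intro x y hxy
  rcases (compGraph_adj.mp hxy).2 with h | h <;> obtain ⟨e'', hin, h1, h2⟩ := h <;>
    subst h1 <;> subst h2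
  · exact key e'' hin
  · exact (key e'' hin).symm

noncomputable def cdInv
    (hT : ∀ e' ∈ T, (Φ.compGraph S).connectedComponentMk (Φ.src e')
        = (Φ.compGraph S).connectedComponentMk (Φ.tgt e')) :
    (Φ.contractDel T D).V → (Φ.compGraph S).ConnectedComponent :=
  Quot.lift (fun v => (Φ.compGraph S).connectedComponentMk v)
    (by rintro a b ⟨e', he', rfl, rfl⟩; exact hT e' he')

lemma cd_step2 (hS' : ∀ p, p ∈ S' ↔ p.1 ∈ S)
    (hT : ∀ e' ∈ T, (Φ.compGraph S).connectedComponentMk (Φ.src e')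
        = (Φ.compGraph S).connectedComponentMk (Φ.tgt e')) :
    ∀ x y, ((Φ.contractDel T D).compGraph S').Adj x y →
      cdInv S hT x = cdInv S hT y := by
  intro x y hxy
  rcases (compGraph_adj.mp hxy).2 with h | h <;> obtain ⟨e', hin, h1, h2⟩ := h <;>
    subst h1 <;> subst h2
  · exact mk_src_eq_mk_tgt ((hS' _).mp hin)
  · exact (mk_src_eq_mk_tgt ((hS' _).mp hin)).symm

noncomputable def cdEquiv (hS' : ∀ p, p ∈ S' ↔ p.1 ∈ S)
    (hT : ∀ e' ∈ T, (Φ.compGraph S).connectedComponentMk (Φ.src e')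
        = (Φ.compGraph S).connectedComponentMk (Φ.tgt e'))
    (hD : ∀ e' ∈ S, e' ∈ D →
        ((Φ.contractDel T D).compGraph S').connectedComponentMk (qmk Φ T D (Φ.src e'))
          = ((Φ.contractDel T D).compGraph S').connectedComponentMk (qmk Φ T D (Φ.tgt e'))) :
    (Φ.compGraph S).ConnectedComponent ≃
      ((Φ.contractDel T D).compGraph S').ConnectedComponent where
  toFun := Quot.lift
    (fun v => ((Φ.contractDel T D).compGraph S').connectedComponentMk (qmk Φ T D v))
    (fun _ _ hr => reachable_const _ (cd_step1 S S' hS' hD) hr)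
  invFun := Quot.lift (cdInv S hT)
    (fun _ _ hr => reachable_const _ (cd_step2 S S' hS' hT) hr)
  left_inv := fun C => Quot.inductionOn C fun _ => rfl
  right_inv := fun C => Quot.inductionOn C fun x => Quot.inductionOn x fun _ => rfl

@[simp] lemma cdEquiv_mk (hS') (hT) (hD) (v : Φ.V) :
    cdEquiv S S' hS' hT hD ((Φ.compGraph S).connectedComponentMk v)
      = ((Φ.contractDel T D).compGraph S').connectedComponentMk (qmk Φ T D v) := rfl

lemma cd_c (hS' : ∀ p, p ∈ S' ↔ p.1 ∈ S)
    (hT : ∀ e' ∈ T, (Φ.compGraph S).connectedComponentMk (Φ.src e')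
        = (Φ.compGraph S).connectedComponentMk (Φ.tgt e'))
    (hD : ∀ e' ∈ S, e' ∈ D →
        ((Φ.contractDel T D).compGraph S').connectedComponentMk (qmk Φ T D (Φ.src e'))
          = ((Φ.contractDel T D).compGraph S').connectedComponentMk (qmk Φ T D (Φ.tgt e'))) :
    Φ.c S = (Φ.contractDel T D).c S' :=
  Nat.card_congr (cdEquiv S S' hS' hT hD)

end CD

section Del

variable {Φ : GG 𝔊} (e : Φ.E)

lemma qmk_del_inj : Function.Injective (qmk Φ ∅ ({e} : Finset Φ.E)) := by
  intro x y h
  have := congrArg (Quot.lift (fun v : Φ.V => v)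
    (by rintro a b ⟨e', he', -, -⟩; simp at he')) h
  exact this

variable (S : Finset Φ.E) (S' : Finset (Φ.contractDel ∅ {e}).E)

lemma del_balanced_iff (heS : e ∉ S)
    (hS' : ∀ p, p ∈ S' ↔ p.1 ∈ S)
    (hT : ∀ e' ∈ (∅ : Finset Φ.E), (Φ.compGraph S).connectedComponentMk (Φ.src e')
        = (Φ.compGraph S).connectedComponentMk (Φ.tgt e'))
    (hD : ∀ e' ∈ S, e' ∈ ({e} : Finset Φ.E) →
        ((Φ.contractDel ∅ {e}).compGraph S').connectedComponentMk (qmk Φ ∅ {e} (Φ.src e'))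
          = ((Φ.contractDel ∅ {e}).compGraph S').connectedComponentMk (qmk Φ ∅ {e} (Φ.tgt e')))
    (C : (Φ.compGraph S).ConnectedComponent) :
    Φ.BalancedComp S C ↔
      (Φ.contractDel ∅ {e}).BalancedComp S' (cdEquiv S S' hS' hT hD C) := by
  constructor
  · intro hB w' hw' h hC
    have hwne : w'.map (Lmap Φ ∅ {e}) ≠ [] := by simpa using h
    have hmem : ∀ p ∈ w'.map (Lmap Φ ∅ {e}), p.1 ∈ S := by
      intro p hp
      obtain ⟨p', hp', rfl⟩ := List.mem_map.mp hp
      exact (hS' _).mp (hw'.mem p' hp')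
    have hchain : (w'.map (Lmap Φ ∅ {e})).Chain' fun p q => Φ.dtgt p = Φ.dsrc q := by
      rw [List.Chain', List.isChain_map]
      refine hw'.chain.imp fun a b hab => ?_
      rw [cd_dtgt, cd_dsrc] at hab
      exact qmk_del_inj e hab
    have hclosed : ∀ hh : w'.map (Lmap Φ ∅ {e}) ≠ [],
        Φ.dtgt ((w'.map (Lmap Φ ∅ {e})).getLast hh)
          = Φ.dsrc ((w'.map (Lmap Φ ∅ {e})).head hh) := by
      intro hh
      apply qmk_del_inj e
      have h2 := hw'.closed h
      rw [cd_dtgt, cd_dsrc] at h2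
      rw [List.getLast_map, List.head_map]
      exact h2
    have hen : ((w'.map (Lmap Φ ∅ {e})).map Prod.fst).Nodup := by
      have h3 : (w'.map (Lmap Φ ∅ {e})).map Prod.fst
          = (w'.map Prod.fst).map Subtype.val := by
        erw [List.map_map, List.map_map]; rfl
      rw [h3]
      exact hw'.edgesNodup.map Subtype.val_injective
    have hvn : ((w'.map (Lmap Φ ∅ {e})).map Φ.dsrc).Nodup := by
      apply List.Nodup.of_map (qmk Φ ∅ {e})
      have h3 : ((w'.map (Lmap Φ ∅ {e})).map Φ.dsrc).map (qmk Φ ∅ {e})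
          = w'.map (Φ.contractDel ∅ {e}).dsrc := by
        rw [List.map_map, List.map_map]
        exact List.map_congr_left fun p _ => (cd_dsrc p).symm
      rw [h3]; exact hw'.vertsNodup
    have hcirc : Φ.IsCircle S (w'.map (Lmap Φ ∅ {e})) :=
      ⟨hwne, hmem, hchain, hclosed, hen, hvn⟩
    have hhead : qmk Φ ∅ {e} (Φ.dsrc ((w'.map (Lmap Φ ∅ {e})).head hwne))
        = (Φ.contractDel ∅ {e}).dsrc (w'.head h) := by
      rw [cd_dsrc, List.head_map]
    have hcomp : (Φ.compGraph S).connectedComponentMk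
        (Φ.dsrc ((w'.map (Lmap Φ ∅ {e})).head hwne)) = C := by
      apply (cdEquiv S S' hS' hT hD).injective
      rw [cdEquiv_mk, hhead, hC]
    have h1 := hB _ hcirc hwne hcomp
    have h2 : w'.map (Φ.contractDel ∅ {e}).dgain
        = (w'.map (Lmap Φ ∅ {e})).map Φ.dgain := by
      rw [List.map_map]
      exact List.map_congr_left fun p _ => cd_dgain p
    rw [h2]; exact h1
  · intro hB' w hw h hC
    obtain ⟨w', hw'⟩ := proj_exists (T := ∅) (D := {e}) w (fun p hp => by
      simp only [Finset.mem_singleton]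
      intro h'
      exact heS (h' ▸ hw.mem p hp))
    subst hw'
    have hcne : w' ≠ [] := by
      intro h0; rw [h0] at h; exact h rfl
    have hcirc' : (Φ.contractDel ∅ {e}).IsCircle S' w' := by
      refine isCircle_cd hS' hcne hw.mem hw.chain ?_ hw.edgesNodup ?_
      · intro hh
        rw [hw.closed hh]
      · have h3 := hw.vertsNodup.map (qmk_del_inj e)
        rw [List.map_map] at h3
        exact h3
    have hhead : (Φ.contractDel ∅ {e}).dsrc (w'.head hcne)
        = qmk Φ ∅ {e} (Φ.dsrc ((w'.map (Lmap Φ ∅ {e})).head h)) := by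
      rw [cd_dsrc, List.head_map]
    have hcomp' : ((Φ.contractDel ∅ {e}).compGraph S').connectedComponentMk
        ((Φ.contractDel ∅ {e}).dsrc (w'.head hcne)) = cdEquiv S S' hS' hT hD C := by
      rw [hhead, ← cdEquiv_mk S S' hS' hT hD, hC]
    have h1 := hB' w' hcirc' hcne hcomp'
    have h2 : w'.map (Φ.contractDel ∅ {e}).dgain
        = (w'.map (Lmap Φ ∅ {e})).map Φ.dgain := by
      rw [List.map_map]
      exact List.map_congr_left fun p _ => cd_dgain p
    rw [h2] at h1; exact h1

lemma del_cb (heS : e ∉ S) (hS' : ∀ p, p ∈ S' ↔ p.1 ∈ S) :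
    Φ.c S = (Φ.contractDel ∅ {e}).c S' ∧ Φ.b S = (Φ.contractDel ∅ {e}).b S' := by
  have hT : ∀ e' ∈ (∅ : Finset Φ.E), (Φ.compGraph S).connectedComponentMk (Φ.src e')
      = (Φ.compGraph S).connectedComponentMk (Φ.tgt e') := by simp
  have hD : ∀ e' ∈ S, e' ∈ ({e} : Finset Φ.E) →
      ((Φ.contractDel ∅ {e}).compGraph S').connectedComponentMk (qmk Φ ∅ {e} (Φ.src e'))
        = ((Φ.contractDel ∅ {e}).compGraph S').connectedComponentMk
            (qmk Φ ∅ {e} (Φ.tgt e')) := by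
    intro e' h1 h2
    rw [Finset.mem_singleton] at h2
    exact absurd (h2 ▸ h1) heS
  exact ⟨cd_c S S' hS' hT hD,
    Nat.card_congr (Equiv.subtypeEquiv (cdEquiv S S' hS' hT hD)
      fun C => del_balanced_iff e S S' heS hS' hT hD C)⟩

end Del

lemma getLast_eq_of_eq {α : Type*} {l l' : List α} (h : l = l') (hl : l ≠ []) (hl' : l' ≠ []) :
    l.getLast hl = l'.getLast hl' := by subst h; rfl

lemma head_eq_of_eq {α : Type*} {l l' : List α} (h : l = l') (hl : l ≠ []) (hl' : l' ≠ []) :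
    l.head hl = l'.head hl' := by subst h; rfl

section Con

open scoped Classical

variable {Φ : GG 𝔊} (e : Φ.E)

lemma qmk_con_eq_iff (he : Φ.src e ≠ Φ.tgt e) {x y : Φ.V} :
    qmk Φ {e} {e} x = qmk Φ {e} {e} y ↔
      x = y ∨ ((x = Φ.src e ∨ x = Φ.tgt e) ∧ (y = Φ.src e ∨ y = Φ.tgt e)) := by
  constructor
  · intro h
    have h2 : (if x = Φ.tgt e then Φ.src e else x)
        = (if y = Φ.tgt e then Φ.src e else y) :=
      congrArg (Quot.lift (fun v => if v = Φ.tgt e then Φ.src e else v)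
        (by
          rintro a b ⟨e'', he'', rfl, rfl⟩
          simp only [Finset.mem_singleton] at he''
          subst he''
          simp [he])) h
    by_cases hx : x = Φ.tgt e <;> by_cases hy : y = Φ.tgt e <;>
      simp [hx, hy] at h2 <;> tauto
  · rintro (rfl | ⟨hx, hy⟩)
    · rfl
    · have key : qmk Φ {e} {e} (Φ.src e) = qmk Φ {e} {e} (Φ.tgt e) :=
        qmk_sound (Finset.mem_singleton_self e)
      rcases hx with rfl | rfl <;> rcases hy with rfl | rfl <;>
        first | rfl | exact key | exact key.symm

lemma con_chain_lift (he : Φ.src e ≠ Φ.tgt e)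
    {w' : List ((Φ.contractDel {e} {e}).E × Bool)}
    (hch : w'.Chain' fun p q =>
      (Φ.contractDel {e} {e}).dtgt p = (Φ.contractDel {e} {e}).dsrc q)
    (htail : ∀ (i : ℕ) (h : i + 1 < w'.length),
      (Φ.contractDel {e} {e}).dsrc (w'.get ⟨i+1, h⟩) ≠ qmk Φ {e} {e} (Φ.src e)) :
    (w'.map (Lmap Φ {e} {e})).Chain' fun p q => Φ.dtgt p = Φ.dsrc q := by
  simp only [List.Chain', List.isChain_iff_getElem] at hch ⊢
  intro i hi
  rw [List.getElem_map, List.getElem_map]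
  have hi' : i + 1 < w'.length := by simpa using hi
  have h1 := hch i hi'
  rw [cd_dtgt, cd_dsrc] at h1
  have h2 : i + 1 < w'.length := by omega
  rcases (qmk_con_eq_iff e he).mp h1 with h4 | ⟨-, h5⟩
  · exact h4
  · exfalso
    apply htail i h2
    rw [cd_dsrc, List.get_eq_getElem]
    rcases h5 with h5 | h5 <;> rw [h5]
    exact (qmk_sound (Finset.mem_singleton_self e)).symm

lemma con_balanced_iff (he : Φ.src e ≠ Φ.tgt e) (hg : Φ.gain e = 1)
    (S : Finset Φ.E) (heS : e ∈ S) (S' : Finset (Φ.contractDel {e} {e}).E)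
    (hS' : ∀ p, p ∈ S' ↔ p.1 ∈ S)
    (hT : ∀ e' ∈ ({e} : Finset Φ.E), (Φ.compGraph S).connectedComponentMk (Φ.src e')
        = (Φ.compGraph S).connectedComponentMk (Φ.tgt e'))
    (hD : ∀ e' ∈ S, e' ∈ ({e} : Finset Φ.E) →
        ((Φ.contractDel {e} {e}).compGraph S').connectedComponentMk
            (qmk Φ {e} {e} (Φ.src e'))
          = ((Φ.contractDel {e} {e}).compGraph S').connectedComponentMk
            (qmk Φ {e} {e} (Φ.tgt e')))
    (C : (Φ.compGraph S).ConnectedComponent) :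
    Φ.BalancedComp S C ↔
      (Φ.contractDel {e} {e}).BalancedComp S' (cdEquiv S S' hS' hT hD C) := by
  have key : qmk Φ {e} {e} (Φ.src e) = qmk Φ {e} {e} (Φ.tgt e) :=
    qmk_sound (Finset.mem_singleton_self e)
  constructor
  · intro hB w' hw' h hC
    rw [cd_map_dgain]
    have hcompmem : ∀ p' ∈ w',
        ((Φ.contractDel {e} {e}).compGraph S').connectedComponentMk
          ((Φ.contractDel {e} {e}).dsrc p') = cdEquiv S S' hS' hT hD C := by
      intro p' hp'
      rw [mk_dsrc_const hw'.mem hw'.chain h p' hp', hC]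
    by_cases hu : ∃ p' ∈ w',
        (Φ.contractDel {e} {e}).dsrc p' = qmk Φ {e} {e} (Φ.src e)
    case neg =>
      push_neg at hu
      have hwne : w'.map (Lmap Φ {e} {e}) ≠ [] := by simpa using h
      have hchain := con_chain_lift e he hw'.chain
        (fun i hi => hu _ (List.get_mem _ _))
      have hclosed : ∀ hh : w'.map (Lmap Φ {e} {e}) ≠ [],
          Φ.dtgt ((w'.map (Lmap Φ {e} {e})).getLast hh)
            = Φ.dsrc ((w'.map (Lmap Φ {e} {e})).head hh) := by
        intro hh
        rw [List.getLast_map, List.head_map]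
        have h2 := hw'.closed h
        rw [cd_dtgt, cd_dsrc] at h2
        rcases (qmk_con_eq_iff e he).mp h2 with h3 | ⟨-, h3⟩
        · exact h3
        · exfalso
          apply hu (w'.head h) (List.head_mem h)
          rw [cd_dsrc]
          rcases h3 with h3 | h3 <;> rw [h3]
          exact key.symm
      have hcirc : Φ.IsCircle S (w'.map (Lmap Φ {e} {e})) :=
        ⟨hwne, lift_mem hS' hw'.mem, hchain, hclosed,
          lift_edgesNodup hw'.edgesNodup, lift_vertsNodup hw'.vertsNodup⟩
      have hcomp : (Φ.compGraph S).connectedComponentMk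
          (Φ.dsrc ((w'.map (Lmap Φ {e} {e})).head hwne)) = C := by
        apply (cdEquiv S S' hS' hT hD).injective
        rw [cdEquiv_mk, List.head_map, ← cd_dsrc]
        exact hcompmem (w'.head h) (List.head_mem h)
      exact hB _ hcirc hwne hcomp
    case pos =>
      obtain ⟨p₀, hp₀w, hp₀⟩ := hu
      obtain ⟨a, b, rfl⟩ := List.append_of_mem hp₀w
      have hiff : (((a ++ p₀ :: b).map (Lmap Φ {e} {e})).map Φ.dgain).prod = 1 ↔
          ((((p₀ :: b) ++ a).map (Lmap Φ {e} {e})).map Φ.dgain).prod = 1 := by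
        rw [List.map_append, List.map_append, List.map_append, List.map_append]
        exact prod_rotate_eq_one_iff
      rw [hiff]
      have hrot : (Φ.contractDel {e} {e}).IsCircle S' ((p₀ :: b) ++ a) := hw'.rotate
      have hw2 : (p₀ :: b) ++ a = p₀ :: (b ++ a) := by simp
      rw [hw2] at hrot ⊢
      have hWne : p₀ :: (b ++ a) ≠ [] := List.cons_ne_nil _ _
      have hvn0 := hrot.vertsNodup
      rw [List.map_cons, List.nodup_cons] at hvn0
      have htail : ∀ (i : ℕ) (hh : i + 1 < (p₀ :: (b ++ a)).length),
          (Φ.contractDel {e} {e}).dsrc ((p₀ :: (b ++ a)).get ⟨i+1, hh⟩)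
            ≠ qmk Φ {e} {e} (Φ.src e) := by
        intro i hh hcon
        apply hvn0.1
        have hmm : (p₀ :: (b ++ a)).get ⟨i+1, hh⟩ ∈ b ++ a := by
          rw [List.get_eq_getElem, List.getElem_cons_succ]
          exact List.getElem_mem _
        exact List.mem_map.mpr ⟨_, hmm, by rw [hcon, hp₀]⟩
      have hchain := con_chain_lift e he hrot.chain htail
      have hWmapne : (p₀ :: (b ++ a)).map (Lmap Φ {e} {e}) ≠ [] := by simp
      have hB2 : qmk Φ {e} {e} (Φ.dsrc (Lmap Φ {e} {e} p₀))
          = qmk Φ {e} {e} (Φ.src e) := by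
        rw [← cd_dsrc]; exact hp₀
      have hXlast : ((p₀ :: (b ++ a)).map (Lmap Φ {e} {e})).getLast hWmapne
          = Lmap Φ {e} {e} ((p₀ :: (b ++ a)).getLast hWne) := List.getLast_map _
      have hcl := hrot.closed hWne
      rw [cd_dtgt, cd_dsrc] at hcl
      have hclA : qmk Φ {e} {e}
          (Φ.dtgt (((p₀ :: (b ++ a)).map (Lmap Φ {e} {e})).getLast hWmapne))
            = qmk Φ {e} {e} (Φ.src e) := by
        rw [hXlast]
        exact hcl.trans hB2
      by_cases hclstrict :
          Φ.dtgt (((p₀ :: (b ++ a)).map (Lmap Φ {e} {e})).getLast hWmapne)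
            = Φ.dsrc (((p₀ :: (b ++ a)).map (Lmap Φ {e} {e})).head hWmapne)
      · have hcirc : Φ.IsCircle S ((p₀ :: (b ++ a)).map (Lmap Φ {e} {e})) :=
          ⟨hWmapne, lift_mem hS' hrot.mem, hchain, fun _ => hclstrict,
            lift_edgesNodup hrot.edgesNodup, lift_vertsNodup hrot.vertsNodup⟩
        apply hB _ hcirc hWmapne
        apply (cdEquiv S S' hS' hT hD).injective
        rw [cdEquiv_mk]
        have hXhead : ((p₀ :: (b ++ a)).map (Lmap Φ {e} {e})).head hWmapne
            = Lmap Φ {e} {e} p₀ := rfl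
        rw [hXhead, ← cd_dsrc]
        exact hcompmem p₀ hp₀w
      · have hd2 : qmk Φ {e} {e}
            (Φ.dsrc (((p₀ :: (b ++ a)).map (Lmap Φ {e} {e})).head hWmapne))
              = qmk Φ {e} {e} (Φ.src e) := hB2
        have ht1 : Φ.dtgt (((p₀ :: (b ++ a)).map (Lmap Φ {e} {e})).getLast hWmapne)
            = Φ.src e ∨
            Φ.dtgt (((p₀ :: (b ++ a)).map (Lmap Φ {e} {e})).getLast hWmapne)
              = Φ.tgt e := by
          rcases (qmk_con_eq_iff e he).mp hclA with h3 | ⟨h3, -⟩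
          · exact Or.inl h3
          · exact h3
        have hs1 : Φ.dsrc (((p₀ :: (b ++ a)).map (Lmap Φ {e} {e})).head hWmapne)
            = Φ.src e ∨
            Φ.dsrc (((p₀ :: (b ++ a)).map (Lmap Φ {e} {e})).head hWmapne)
              = Φ.tgt e := by
          rcases (qmk_con_eq_iff e he).mp hd2 with h3 | ⟨h3, -⟩
          · exact Or.inl h3
          · exact h3
        obtain ⟨d, hd1', hd2', hd3'⟩ : ∃ d : Bool,
            Φ.dsrc (e, d)
              = Φ.dtgt (((p₀ :: (b ++ a)).map (Lmap Φ {e} {e})).getLast hWmapne) ∧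
            Φ.dtgt (e, d)
              = Φ.dsrc (((p₀ :: (b ++ a)).map (Lmap Φ {e} {e})).head hWmapne) ∧
            Φ.dgain (e, d) = 1 := by
          rcases hs1 with hs1 | hs1
          · have ht2 : Φ.dtgt (((p₀ :: (b ++ a)).map (Lmap Φ {e} {e})).getLast hWmapne)
                = Φ.tgt e := by
              rcases ht1 with h3 | h3
              · exact absurd (h3.trans hs1.symm) hclstrict
              · exact h3
            exact ⟨false, by rw [ht2]; rfl, by rw [hs1]; rfl, by simp [GG.dgain, hg]⟩
          · have ht2 : Φ.dtgt (((p₀ :: (b ++ a)).map (Lmap Φ {e} {e})).getLast hWmapne)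
                = Φ.src e := by
              rcases ht1 with h3 | h3
              · exact h3
              · exact absurd (h3.trans hs1.symm) hclstrict
            exact ⟨true, by rw [ht2]; rfl, by rw [hs1]; rfl, by simp [GG.dgain, hg]⟩
        have hX1ne : (p₀ :: (b ++ a)).map (Lmap Φ {e} {e}) ++ [(e, d)] ≠ [] := by simp
        have hmem1 : ∀ p ∈ (p₀ :: (b ++ a)).map (Lmap Φ {e} {e}) ++ [(e, d)],
            p.1 ∈ S := by
          intro p hp
          rcases List.mem_append.mp hp with hp2 | hp2
          · exact lift_mem hS' hrot.mem p hp2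
          · rw [List.mem_singleton] at hp2
            rw [hp2]
            exact heS
        have hchain1 : ((p₀ :: (b ++ a)).map (Lmap Φ {e} {e}) ++ [(e, d)]).Chain'
            fun p q => Φ.dtgt p = Φ.dsrc q := by
          rw [List.Chain', List.isChain_append]
          refine ⟨hchain, List.isChain_singleton _, ?_⟩
          intro x hx y hy
          rw [List.getLast?_eq_getLast hWmapne, Option.mem_some_iff] at hx
          simp only [List.head?_cons, Option.mem_some_iff] at hy
          rw [← hx, ← hy]
          exact hd1'.symm
        have hclosed1 : ∀ hh : (p₀ :: (b ++ a)).map (Lmap Φ {e} {e}) ++ [(e, d)] ≠ [],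
            Φ.dtgt (((p₀ :: (b ++ a)).map (Lmap Φ {e} {e}) ++ [(e, d)]).getLast hh)
              = Φ.dsrc (((p₀ :: (b ++ a)).map (Lmap Φ {e} {e}) ++ [(e, d)]).head hh) := by
          intro hh
          rw [getLast_append_right (List.cons_ne_nil _ _), head_append_left hWmapne]
          simpa using hd2'
        have hen1 : (((p₀ :: (b ++ a)).map (Lmap Φ {e} {e}) ++ [(e, d)]).map
            Prod.fst).Nodup := by
          rw [List.map_append, List.nodup_append]
          refine ⟨lift_edgesNodup hrot.edgesNodup, by simp, ?_⟩
          intro x hx y hx2 hxy; subst hxy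
          simp only [List.map_cons, List.map_nil, List.mem_singleton] at hx2
          obtain ⟨pp, hppW, hppx⟩ := List.mem_map.mp hx
          obtain ⟨p', hp'W, rfl⟩ := List.mem_map.mp hppW
          apply p'.1.2
          rw [Finset.mem_singleton]
          rw [← hppx] at hx2
          exact hx2
        have hvn1 : (((p₀ :: (b ++ a)).map (Lmap Φ {e} {e}) ++ [(e, d)]).map
            Φ.dsrc).Nodup := by
          rw [List.map_append, List.nodup_append]
          refine ⟨lift_vertsNodup hrot.vertsNodup, by simp, ?_⟩
          intro z hz y hz2 hzy; subst hzy
          simp only [List.map_cons, List.map_nil, List.mem_singleton] at hz2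
          obtain ⟨pp, hppX, hppz⟩ := List.mem_map.mp hz
          obtain ⟨p', hp'W, rfl⟩ := List.mem_map.mp hppX
          have hzκ : qmk Φ {e} {e} (Φ.dsrc (Lmap Φ {e} {e} p'))
              = qmk Φ {e} {e} (Φ.src e) := by
            rw [hppz, hz2, hd1']
            exact hclA
          have hcdp' : (Φ.contractDel {e} {e}).dsrc p'
              = (Φ.contractDel {e} {e}).dsrc p₀ := by
            rw [cd_dsrc, hzκ, ← hp₀]
          rcases List.mem_cons.mp hp'W with rfl | hp'm
          · apply hclstrict
            rw [← hd1', ← hz2, ← hppz]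
            rfl
          · exact hvn0.1 (List.mem_map.mpr ⟨p', hp'm, hcdp'⟩)
        have hcirc1 : Φ.IsCircle S
            ((p₀ :: (b ++ a)).map (Lmap Φ {e} {e}) ++ [(e, d)]) :=
          ⟨hX1ne, hmem1, hchain1, hclosed1, hen1, hvn1⟩
        have hcomp1 : (Φ.compGraph S).connectedComponentMk
            (Φ.dsrc (((p₀ :: (b ++ a)).map (Lmap Φ {e} {e}) ++ [(e, d)]).head hX1ne))
              = C := by
          rw [head_append_left hWmapne]
          apply (cdEquiv S S' hS' hT hD).injective
          rw [cdEquiv_mk]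
          have hXhead : ((p₀ :: (b ++ a)).map (Lmap Φ {e} {e})).head hWmapne
              = Lmap Φ {e} {e} p₀ := rfl
          rw [hXhead, ← cd_dsrc]
          exact hcompmem p₀ hp₀w
        have hfin := hB _ hcirc1 hX1ne hcomp1
        rw [List.map_append, List.prod_append] at hfin
        simpa [hd3'] using hfin
  · intro hB' w hw h hC
    have hcompmemw : ∀ p ∈ w,
        (Φ.compGraph S).connectedComponentMk (Φ.dsrc p) = C := by
      intro p hp
      rw [mk_dsrc_const hw.mem hw.chain h p hp, hC]
    have hκst : ∀ {z : Φ.V}, (z = Φ.src e ∨ z = Φ.tgt e) →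
        qmk Φ {e} {e} z = qmk Φ {e} {e} (Φ.src e) := by
      rintro z (rfl | rfl)
      · rfl
      · exact key.symm
    by_cases hcaseB : ∃ p ∈ w, p.1 = e
    case pos =>
      obtain ⟨p, hpw, hpe⟩ := hcaseB
      obtain ⟨a, c, rfl⟩ := List.append_of_mem hpw
      have hiff : ((a ++ p :: c).map Φ.dgain).prod = 1 ↔
          (((p :: c) ++ a).map Φ.dgain).prod = 1 := by
        rw [List.map_append, List.map_append]
        exact prod_rotate_eq_one_iff
      rw [hiff]
      have hrot : Φ.IsCircle S ((p :: c) ++ a) := hw.rotate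
      have hw2 : (p :: c) ++ a = p :: (c ++ a) := by simp
      rw [hw2] at hrot ⊢
      obtain ⟨x, xs, hxs⟩ : ∃ x xs, c ++ a = x :: xs := by
        rcases hca : c ++ a with _ | ⟨x, xs⟩
        · exfalso
          rw [hca] at hrot
          have hcl := hrot.closed (List.cons_ne_nil _ _)
          simp only [List.getLast_singleton, List.head_cons] at hcl
          have : Φ.src e = Φ.tgt e := by
            cases hb : p.2 <;> simp [GG.dtgt, GG.dsrc, hb, hpe] at hcl <;>
              first | exact hcl | exact hcl.symm
          exact he this
        · exact ⟨x, xs, rfl⟩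
      rw [hxs] at hrot ⊢
      have hch := List.isChain_cons_cons.mp hrot.chain
      have hrestne : (x :: xs : List _) ≠ [] := List.cons_ne_nil _ _
      have hne_e : ∀ q ∈ x :: xs, q.1 ∉ ({e} : Finset Φ.E) := by
        intro q hq
        rw [Finset.mem_singleton]
        intro hqe
        have hen := hrot.edgesNodup
        rw [List.map_cons, List.nodup_cons] at hen
        exact hen.1 (List.mem_map.mpr ⟨q, hq, by rw [hqe, hpe]⟩)
      obtain ⟨r', hr'⟩ := proj_exists (T := ({e} : Finset Φ.E)) (D := {e}) (x :: xs) hne_e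
      have hrne : r' ≠ [] := by
        intro h0; rw [h0] at hr'; simp at hr'
      have hpd1 : Φ.dsrc p = Φ.src e ∨ Φ.dsrc p = Φ.tgt e := by
        cases hb : p.2 <;> simp [GG.dsrc, hb, hpe]
      have hpd2 : Φ.dtgt p = Φ.src e ∨ Φ.dtgt p = Φ.tgt e := by
        cases hb : p.2 <;> simp [GG.dtgt, hb, hpe]
      have hcirc' : (Φ.contractDel {e} {e}).IsCircle S' r' := by
        refine isCircle_cd hS' hrne ?_ ?_ ?_ ?_ ?_
        · rw [hr']
          intro q hq
          exact hrot.mem q (List.mem_cons_of_mem _ hq)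
        · rw [hr']; exact hch.2
        · intro hh
          rw [getLast_eq_of_eq hr' hh hrestne, head_eq_of_eq hr' hh hrestne]
          have hlast : Φ.dtgt ((x :: xs).getLast hrestne) = Φ.dsrc p := by
            have hcl := hrot.closed (List.cons_ne_nil _ _)
            rw [List.getLast_cons hrestne] at hcl
            exact hcl
          rw [hlast, List.head_cons, ← hch.1, hκst hpd1, hκst hpd2]
        · rw [hr']
          have hen := hrot.edgesNodup
          rw [List.map_cons, List.nodup_cons] at hen
          exact hen.2
        · rw [hr']
          have hvn := hrot.vertsNodup
          rw [List.map_cons, List.nodup_cons] at hvn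
          have hother : ∀ z ∈ (x :: xs).map Φ.dsrc,
              (z = Φ.src e ∨ z = Φ.tgt e) → z = Φ.dtgt p := by
            intro z hz hzst
            have hzne : z ≠ Φ.dsrc p := fun hzz => hvn.1 (hzz ▸ hz)
            cases hb : p.2
            · have h1 : Φ.dsrc p = Φ.tgt e := by simp [GG.dsrc, hb, hpe]
              have h2 : Φ.dtgt p = Φ.src e := by simp [GG.dtgt, hb, hpe]
              rcases hzst with h3 | h3
              · rw [h2]; exact h3
              · exact absurd (h3.trans h1.symm) hzne
            · have h1 : Φ.dsrc p = Φ.src e := by simp [GG.dsrc, hb, hpe]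
              have h2 : Φ.dtgt p = Φ.tgt e := by simp [GG.dtgt, hb, hpe]
              rcases hzst with h3 | h3
              · exact absurd (h3.trans h1.symm) hzne
              · rw [h2]; exact h3
          have h5 : (x :: xs).map (fun q => qmk Φ {e} {e} (Φ.dsrc q))
              = ((x :: xs).map Φ.dsrc).map (qmk Φ {e} {e}) := by
            rw [List.map_map]; rfl
          rw [h5]
          apply List.Nodup.map_on ?_ hvn.2
          intro z hz y hy hzy
          rcases (qmk_con_eq_iff e he).mp hzy with h3 | ⟨h3, h4⟩
          · exact h3
          · rw [hother z hz h3, hother y hy h4]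
      have hmapne : r'.map (Lmap Φ {e} {e}) ≠ [] := by simpa using hrne
      have hhd2 : Lmap Φ {e} {e} (r'.head hrne) = (x :: xs).head hrestne :=
        (List.head_map hmapne).symm.trans (head_eq_of_eq hr' hmapne hrestne)
      have hcomp' : ((Φ.contractDel {e} {e}).compGraph S').connectedComponentMk
          ((Φ.contractDel {e} {e}).dsrc (r'.head hrne)) = cdEquiv S S' hS' hT hD C := by
        rw [cd_dsrc, hhd2, List.head_cons, ← hch.1, hκst hpd2, ← hκst hpd1,
          ← cdEquiv_mk S S' hS' hT hD, hcompmemw p hpw]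
      have h1 := hB' r' hcirc' hrne hcomp'
      rw [cd_map_dgain, hr'] at h1
      rw [List.map_cons, List.prod_cons]
      have hdg : Φ.dgain p = 1 := by
        cases hb : p.2 <;> simp [GG.dgain, hb, hpe, hg]
      rw [hdg, one_mul]
      exact h1
    case neg =>
      push_neg at hcaseB
      by_cases hA : (∃ p ∈ w, Φ.dsrc p = Φ.src e) ∧ (∃ q ∈ w, Φ.dsrc q = Φ.tgt e)
      case neg =>
        obtain ⟨w', hw'⟩ := proj_exists (T := ({e} : Finset Φ.E)) (D := {e}) w
          (fun p hp => by rw [Finset.mem_singleton]; exact hcaseB p hp)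
        have hcne : w' ≠ [] := by
          intro h0; rw [h0] at hw'; exact h hw'.symm
        have hinj : ∀ z ∈ w.map Φ.dsrc, ∀ y ∈ w.map Φ.dsrc,
            qmk Φ {e} {e} z = qmk Φ {e} {e} y → z = y := by
          intro z hz y hy hzy
          obtain ⟨pz, hpz, rfl⟩ := List.mem_map.mp hz
          obtain ⟨py, hpy, rfl⟩ := List.mem_map.mp hy
          rcases (qmk_con_eq_iff e he).mp hzy with h3 | ⟨h3, h4⟩
          · exact h3
          · rcases h3 with h3 | h3 <;> rcases h4 with h4 | h4
            · exact h3.trans h4.symm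
            · exact absurd ⟨⟨pz, hpz, h3⟩, ⟨py, hpy, h4⟩⟩ hA
            · exact absurd ⟨⟨py, hpy, h4⟩, ⟨pz, hpz, h3⟩⟩ hA
            · exact h3.trans h4.symm
        have hcirc' : (Φ.contractDel {e} {e}).IsCircle S' w' := by
          refine isCircle_cd hS' hcne ?_ ?_ ?_ ?_ ?_
          · rw [hw']; exact hw.mem
          · rw [hw']; exact hw.chain
          · intro hh
            rw [getLast_eq_of_eq hw' hh h, head_eq_of_eq hw' hh h, hw.closed h]
          · rw [hw']; exact hw.edgesNodup
          · rw [hw']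
            have h5 : w.map (fun q => qmk Φ {e} {e} (Φ.dsrc q))
                = (w.map Φ.dsrc).map (qmk Φ {e} {e}) := by rw [List.map_map]; rfl
            rw [h5]
            exact List.Nodup.map_on hinj hw.vertsNodup
        have hmapne : w'.map (Lmap Φ {e} {e}) ≠ [] := by simpa using hcne
        have hhd2 : Lmap Φ {e} {e} (w'.head hcne) = w.head h :=
          (List.head_map hmapne).symm.trans (head_eq_of_eq hw' hmapne h)
        have hcomp' : ((Φ.contractDel {e} {e}).compGraph S').connectedComponentMk
            ((Φ.contractDel {e} {e}).dsrc (w'.head hcne)) = cdEquiv S S' hS' hT hD C := by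
          rw [cd_dsrc, hhd2, ← cdEquiv_mk S S' hS' hT hD, hcompmemw _ (List.head_mem h)]
        have h1 := hB' w' hcirc' hcne hcomp'
        rw [cd_map_dgain, hw'] at h1
        exact h1
      case pos =>
        obtain ⟨⟨p, hpw, hps⟩, hQt⟩ := hA
        obtain ⟨a, c, rfl⟩ := List.append_of_mem hpw
        have hiff : ((a ++ p :: c).map Φ.dgain).prod = 1 ↔
            (((p :: c) ++ a).map Φ.dgain).prod = 1 := by
          rw [List.map_append, List.map_append]
          exact prod_rotate_eq_one_iff
        rw [hiff]
        have hrot : Φ.IsCircle S ((p :: c) ++ a) := hw.rotate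
        have hw2 : (p :: c) ++ a = p :: (c ++ a) := by simp
        rw [hw2] at hrot ⊢
        obtain ⟨q, hqw, hqt⟩ := hQt
        have hqp : q ≠ p := by
          intro hqp
          exact he ((hps.symm.trans (hqp ▸ hqt)))
        have hqm : q ∈ c ++ a := by
          rcases List.mem_append.mp hqw with hq | hq
          · exact List.mem_append.mpr (Or.inr hq)
          · rcases List.mem_cons.mp hq with rfl | hq
            · exact absurd rfl hqp
            · exact List.mem_append.mpr (Or.inl hq)
        obtain ⟨m₁, m₂, hm⟩ := List.append_of_mem hqm
        rw [hm] at hrot ⊢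
        have hsplit : p :: (m₁ ++ q :: m₂) = (p :: m₁) ++ (q :: m₂) := by simp
        rw [hsplit] at hrot ⊢
        have hxne : (p :: m₁ : List _) ≠ [] := List.cons_ne_nil _ _
        have hyne : (q :: m₂ : List _) ≠ [] := List.cons_ne_nil _ _
        have hmemw : ∀ r, r ∈ (p :: m₁) ++ (q :: m₂) → r ∈ a ++ p :: c := by
          intro r hr
          rw [← hsplit, ← hm] at hr
          simp only [List.mem_append, List.mem_cons] at hr ⊢
          tauto
        have hchs := List.isChain_append.mp hrot.chain
        have hlink : Φ.dtgt ((p :: m₁).getLast hxne) = Φ.dsrc ((q :: m₂).head hyne) := by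
          apply hchs.2.2 <;>
            simp [List.getLast?_eq_getLast hxne, List.head?_eq_head hyne]
        have happne : (p :: m₁) ++ (q :: m₂) ≠ [] := by simp
        have hcl := hrot.closed happne
        rw [getLast_append_right hyne, head_append_left hxne] at hcl
        have hvns := hrot.vertsNodup
        rw [List.map_append, List.nodup_append] at hvns
        obtain ⟨x', hx'⟩ := proj_exists (T := ({e} : Finset Φ.E)) (D := {e}) (p :: m₁)
          (fun r hr => by
            rw [Finset.mem_singleton]
            exact hcaseB r (hmemw r (List.mem_append.mpr (Or.inl hr))))
        obtain ⟨y', hy'⟩ := proj_exists (T := ({e} : Finset Φ.E)) (D := {e}) (q :: m₂)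
          (fun r hr => by
            rw [Finset.mem_singleton]
            exact hcaseB r (hmemw r (List.mem_append.mpr (Or.inr hr))))
        have hx'ne : x' ≠ [] := by intro h0; rw [h0] at hx'; simp at hx'
        have hy'ne : y' ≠ [] := by intro h0; rw [h0] at hy'; simp at hy'
        have hts_x : ∀ z ∈ (p :: m₁).map Φ.dsrc,
            (z = Φ.src e ∨ z = Φ.tgt e) → z = Φ.src e := by
          intro z hz hzst
          rcases hzst with h6 | h6
          · exact h6
          · exfalso
            apply hvns.2.2 z hz z ?_ rfl
            rw [h6]
            exact List.mem_map.mpr ⟨q, List.mem_cons_self, hqt⟩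
        have hts_y : ∀ z ∈ (q :: m₂).map Φ.dsrc,
            (z = Φ.src e ∨ z = Φ.tgt e) → z = Φ.tgt e := by
          intro z hz hzst
          rcases hzst with h6 | h6
          · exfalso
            refine hvns.2.2 z ?_ z hz rfl
            rw [h6]
            exact List.mem_map.mpr ⟨p, List.mem_cons_self, hps⟩
          · exact h6
        have hxcirc : (Φ.contractDel {e} {e}).IsCircle S' x' := by
          refine isCircle_cd hS' hx'ne ?_ ?_ ?_ ?_ ?_
          · rw [hx']
            intro r hr
            exact hrot.mem r (List.mem_append.mpr (Or.inl hr))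
          · rw [hx']; exact hchs.1
          · intro hh
            rw [getLast_eq_of_eq hx' hh hxne, head_eq_of_eq hx' hh hxne]
            rw [hlink, List.head_cons, hqt, List.head_cons, hps]
            exact key.symm
          · rw [hx']
            have hen := hrot.edgesNodup
            rw [List.map_append, List.nodup_append] at hen
            exact hen.1
          · rw [hx']
            have h5 : (p :: m₁).map (fun r => qmk Φ {e} {e} (Φ.dsrc r))
                = ((p :: m₁).map Φ.dsrc).map (qmk Φ {e} {e}) := by rw [List.map_map]; rfl
            rw [h5]
            apply List.Nodup.map_on ?_ hvns.1
            intro z hz y hy hzy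
            rcases (qmk_con_eq_iff e he).mp hzy with h3 | ⟨h3, h4⟩
            · exact h3
            · rw [hts_x z hz h3, hts_x y hy h4]
        have hycirc : (Φ.contractDel {e} {e}).IsCircle S' y' := by
          refine isCircle_cd hS' hy'ne ?_ ?_ ?_ ?_ ?_
          · rw [hy']
            intro r hr
            exact hrot.mem r (List.mem_append.mpr (Or.inr hr))
          · rw [hy']; exact hchs.2.1
          · intro hh
            rw [getLast_eq_of_eq hy' hh hyne, head_eq_of_eq hy' hh hyne]
            rw [hcl, List.head_cons, hps, List.head_cons, hqt]
            exact key
          · rw [hy']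
            have hen := hrot.edgesNodup
            rw [List.map_append, List.nodup_append] at hen
            exact hen.2.1
          · rw [hy']
            have h5 : (q :: m₂).map (fun r => qmk Φ {e} {e} (Φ.dsrc r))
                = ((q :: m₂).map Φ.dsrc).map (qmk Φ {e} {e}) := by rw [List.map_map]; rfl
            rw [h5]
            apply List.Nodup.map_on ?_ hvns.2.1
            intro z hz y hy hzy
            rcases (qmk_con_eq_iff e he).mp hzy with h3 | ⟨h3, h4⟩
            · exact h3
            · rw [hts_y z hz h3, hts_y y hy h4]
        have hxmapne : x'.map (Lmap Φ {e} {e}) ≠ [] := by simpa using hx'ne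
        have hymapne : y'.map (Lmap Φ {e} {e}) ≠ [] := by simpa using hy'ne
        have hxhd : Lmap Φ {e} {e} (x'.head hx'ne) = (p :: m₁).head hxne :=
          (List.head_map hxmapne).symm.trans (head_eq_of_eq hx' hxmapne hxne)
        have hyhd : Lmap Φ {e} {e} (y'.head hy'ne) = (q :: m₂).head hyne :=
          (List.head_map hymapne).symm.trans (head_eq_of_eq hy' hymapne hyne)
        have hxcomp : ((Φ.contractDel {e} {e}).compGraph S').connectedComponentMk
            ((Φ.contractDel {e} {e}).dsrc (x'.head hx'ne)) = cdEquiv S S' hS' hT hD C := by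
          rw [cd_dsrc, hxhd, List.head_cons, ← cdEquiv_mk S S' hS' hT hD, hcompmemw p hpw]
        have hycomp : ((Φ.contractDel {e} {e}).compGraph S').connectedComponentMk
            ((Φ.contractDel {e} {e}).dsrc (y'.head hy'ne)) = cdEquiv S S' hS' hT hD C := by
          rw [cd_dsrc, hyhd, List.head_cons, ← cdEquiv_mk S S' hS' hT hD, hcompmemw q hqw]
        have h1 := hB' x' hxcirc hx'ne hxcomp
        have h2 := hB' y' hycirc hy'ne hycomp
        rw [cd_map_dgain, hx'] at h1
        rw [cd_map_dgain, hy'] at h2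
        rw [List.map_append, List.prod_append, h1, h2, one_mul]


lemma con_cb (he : Φ.src e ≠ Φ.tgt e) (hg : Φ.gain e = 1)
    (S : Finset Φ.E) (heS : e ∈ S) (S' : Finset (Φ.contractDel {e} {e}).E)
    (hS' : ∀ p, p ∈ S' ↔ p.1 ∈ S) :
    Φ.c S = (Φ.contractDel {e} {e}).c S' ∧ Φ.b S = (Φ.contractDel {e} {e}).b S' := by
  have hT : ∀ e' ∈ ({e} : Finset Φ.E), (Φ.compGraph S).connectedComponentMk (Φ.src e')
      = (Φ.compGraph S).connectedComponentMk (Φ.tgt e') := by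
    intro e' h1
    rw [Finset.mem_singleton] at h1
    subst h1
    exact mk_src_eq_mk_tgt heS
  have hD : ∀ e' ∈ S, e' ∈ ({e} : Finset Φ.E) →
      ((Φ.contractDel {e} {e}).compGraph S').connectedComponentMk
          (qmk Φ {e} {e} (Φ.src e'))
        = ((Φ.contractDel {e} {e}).compGraph S').connectedComponentMk
          (qmk Φ {e} {e} (Φ.tgt e')) := by
    intro e' _ h2
    rw [Finset.mem_singleton] at h2
    rw [h2, qmk_sound (Finset.mem_singleton_self e)]
  exact ⟨cd_c S S' hS' hT hD,
    Nat.card_congr (Equiv.subtypeEquiv (cdEquiv S S' hS' hT hD)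
      fun C => con_balanced_iff e he hg S heS S' hS' hT hD C)⟩

lemma link_cb (he : Φ.src e ≠ Φ.tgt e) (S : Finset Φ.E) (heS : e ∈ S)
    (S' : Finset (Φ.contractLink e).E) (hS' : ∀ p, p ∈ S' ↔ p.1 ∈ S) :
    Φ.c S = (Φ.contractLink e).c S' ∧ Φ.b S = (Φ.contractLink e).b S' := by
  have hg : (Φ.switch fun v => if v = Φ.tgt e then (Φ.gain e)⁻¹ else 1).gain e = 1 := by
    simp [switch, he]
  have h1 := con_cb (Φ := Φ.switch fun v => if v = Φ.tgt e then (Φ.gain e)⁻¹ else 1)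
    e he hg S heS S' hS'
  constructor
  · rw [← c_switch (fun v => if v = Φ.tgt e then (Φ.gain e)⁻¹ else 1) S]
    exact h1.1
  · rw [← b_switch (fun v => if v = Φ.tgt e then (Φ.gain e)⁻¹ else 1) S]
    exact h1.2

end Con

section Assemble

open scoped Classical

lemma mem_map_subtype {α : Type*} {p : α → Prop} [DecidablePred p]
    (t : Finset {x // p x}) (a : {x // p x}) :
    (a : α) ∈ t.map (Function.Embedding.subtype p) ↔ a ∈ t := by
  simp only [Finset.mem_map, Function.Embedding.coe_subtype]
  constructor
  · rintro ⟨b, hb, hba⟩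
    rwa [Subtype.coe_injective hba] at hb
  · intro ha
    exact ⟨a, ha, rfl⟩

lemma subtype_map_subtype {α : Type*} {p : α → Prop} [DecidablePred p]
    (t : Finset {x // p x}) :
    (t.map (Function.Embedding.subtype p)).subtype p = t := by
  ext a
  rw [Finset.mem_subtype, mem_map_subtype]

end Assemble

end GG
/-- The total chromatic polynomial satisfies deletion–contraction for every link. -/
theorem stmt_7 (Φ : GG 𝔊) (e : Φ.E) (he : Φ.src e ≠ Φ.tgt e) (q z : ℤ) :
    Φ.chiTotal q z = (Φ.contractDel ∅ {e}).chiTotal q z - (Φ.contractLink e).chiTotal q z := by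
  classical
  have hsplit : Φ.chiTotal q z =
      (∑ S ∈ Finset.univ.filter (fun S : Finset Φ.E => e ∈ S),
        (-1 : ℤ) ^ S.card * q ^ Φ.b S * z ^ (Φ.c S - Φ.b S)) +
      (∑ S ∈ Finset.univ.filter (fun S : Finset Φ.E => ¬ e ∈ S),
        (-1 : ℤ) ^ S.card * q ^ Φ.b S * z ^ (Φ.c S - Φ.b S)) := by
    rw [GG.chiTotal]
    exact (Finset.sum_filter_add_sum_filter_not _ _ _).symm
  have hdel : (Φ.contractDel ∅ {e}).chiTotal q z =
      ∑ S ∈ Finset.univ.filter (fun S : Finset Φ.E => ¬ e ∈ S),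
        (-1 : ℤ) ^ S.card * q ^ Φ.b S * z ^ (Φ.c S - Φ.b S) := by
    rw [GG.chiTotal]
    refine Finset.sum_nbij'
      (i := fun S' => S'.map (Function.Embedding.subtype _))
      (j := fun S => S.subtype _) ?_ ?_ ?_ ?_ ?_
    · intro S' _
      rw [Finset.mem_filter]
      refine ⟨Finset.mem_univ _, ?_⟩
      intro hmem
      obtain ⟨b, _, hb⟩ := Finset.mem_map.mp hmem
      exact b.2 (Finset.mem_singleton.mpr hb)
    · intro S _; exact Finset.mem_univ _
    · intro S' _; exact GG.subtype_map_subtype S'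
    · intro S hS
      rw [Finset.mem_filter] at hS
      rw [Finset.subtype_map]
      apply Finset.filter_true_of_mem
      intro a ha
      rw [Finset.mem_singleton]
      intro haa
      exact hS.2 (haa ▸ ha)
    · intro S' _
      have heS : e ∉ S'.map (Function.Embedding.subtype _) := by
        intro hmem
        obtain ⟨b, _, hb⟩ := Finset.mem_map.mp hmem
        exact b.2 (Finset.mem_singleton.mpr hb)
      obtain ⟨hc, hb⟩ := GG.del_cb e (S'.map (Function.Embedding.subtype _)) S'
        heS (fun p => (GG.mem_map_subtype S' p).symm)
      erw [← hc, ← hb, Finset.card_map]; rfl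
  have hcon : (Φ.contractLink e).chiTotal q z =
      ∑ S ∈ Finset.univ.filter (fun S : Finset Φ.E => e ∈ S),
        -((-1 : ℤ) ^ S.card * q ^ Φ.b S * z ^ (Φ.c S - Φ.b S)) := by
    rw [GG.chiTotal]
    refine Finset.sum_nbij'
      (i := fun S' => insert e (S'.map (Function.Embedding.subtype (fun e' => e' ∉ ({e} : Finset Φ.E)))))
      (j := fun S => S.subtype (fun e' => e' ∉ ({e} : Finset Φ.E))) ?_ ?_ ?_ ?_ ?_
    · intro S' _
      rw [Finset.mem_filter]
      exact ⟨Finset.mem_univ _, Finset.mem_insert_self _ _⟩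
    · intro S _; exact Finset.mem_univ _
    · intro S' _
      ext a
      rw [Finset.mem_subtype, Finset.mem_insert]
      have ha : (a : Φ.E) ≠ e := by
        have h2 := a.2
        rwa [Finset.mem_singleton] at h2
      simp only [ha, false_or]
      exact GG.mem_map_subtype S' a
    · intro S hS
      rw [Finset.mem_filter] at hS
      rw [Finset.subtype_map]
      ext a2
      simp only [Finset.mem_insert, Finset.mem_filter, Finset.mem_singleton]
      by_cases ha2 : a2 = e
      · subst ha2
        simp [hS.2]
      · simp [ha2]
    · intro S' _
      have hnm : e ∉ S'.map (Function.Embedding.subtype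
          (fun e' => e' ∉ ({e} : Finset Φ.E))) := by
        intro hmem
        obtain ⟨b, _, hb⟩ := Finset.mem_map.mp hmem
        exact b.2 (Finset.mem_singleton.mpr hb)
      have hS' : ∀ p : (Φ.contractLink e).E,
          p ∈ S' ↔ p.1 ∈ insert e (S'.map (Function.Embedding.subtype (fun e' => e' ∉ ({e} : Finset Φ.E)))) := by
        intro p
        erw [Finset.mem_insert]
        have hp : p.1 ≠ e := by
          have h2 := p.2
          exact fun h => h2 (Finset.mem_singleton.mpr h)
        simp only [hp, false_or]
        exact (GG.mem_map_subtype S' p).symm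
      obtain ⟨hc, hb⟩ := GG.link_cb e he
        (insert e (S'.map (Function.Embedding.subtype (fun e' => e' ∉ ({e} : Finset Φ.E)))))
        (Finset.mem_insert_self _ _) S' hS'
      have hcard : (insert e (S'.map (Function.Embedding.subtype (fun e' => e' ∉ ({e} : Finset Φ.E))))).card
          = S'.card + 1 := by
        erw [Finset.card_insert_of_notMem hnm, Finset.card_map]; rfl
      rw [← hc, ← hb, hcard]
      ring
  rw [hsplit, hdel, hcon, Finset.sum_neg_distrib]
  ring
end

section
/- For a finite gain graph Φ with finite gain group 𝔊, and nonnegative integers k, z with q = k|𝔊| + z, the number of proper colorations κ : V → (𝔊 × [k]) ∪ [z] equals ∑_{S ⊆ E} (−1)^{|S|} q^{b(S)} z^{c(S)−b(S)}. A coloration is proper if for no edge e_{ij}: κ(v_i) = κ(v_j) ∈ [z], and for no edge e_{ij}: κ(v_i) = (m,g) and κ(v_j) = (m, g·φ(e_{ij})). -/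
variable {𝔊 : Type} [Group 𝔊]

/-! ### Auxiliary development -/

namespace GGaux

open Classical

variable {𝔊 : Type} [Group 𝔊]

/-- Walk predicate: `w` is a walk from `u` to `v` using edges of `S`. -/
def IsWalk (Φ : GG 𝔊) (S : Finset Φ.E) : Φ.V → Φ.V → List (Φ.E × Bool) → Prop
  | u, v, [] => u = v
  | u, v, p :: w => p.1 ∈ S ∧ Φ.dsrc p = u ∧ IsWalk Φ S (Φ.dtgt p) v w

/-- gain of a walk -/
def gw (Φ : GG 𝔊) (w : List (Φ.E × Bool)) : 𝔊 := (w.map Φ.dgain).prod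

variable {Φ : GG 𝔊} {S : Finset Φ.E}

@[simp] lemma isWalk_nil {u v : Φ.V} : IsWalk Φ S u v [] ↔ u = v := Iff.rfl

lemma isWalk_cons {u v : Φ.V} {p : Φ.E × Bool} {w : List (Φ.E × Bool)} :
    IsWalk Φ S u v (p :: w) ↔ p.1 ∈ S ∧ Φ.dsrc p = u ∧ IsWalk Φ S (Φ.dtgt p) v w := Iff.rfl

@[simp] lemma gw_nil : gw Φ ([] : List (Φ.E × Bool)) = 1 := rfl

@[simp] lemma gw_cons (p : Φ.E × Bool) (w : List (Φ.E × Bool)) :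
    gw Φ (p :: w) = Φ.dgain p * gw Φ w := by simp [gw]

@[simp] lemma gw_append (a b : List (Φ.E × Bool)) :
    gw Φ (a ++ b) = gw Φ a * gw Φ b := by simp [gw]

@[simp] lemma dsrc_neg (p : Φ.E × Bool) : Φ.dsrc (p.1, !p.2) = Φ.dtgt p := by
  rcases p with ⟨e, b⟩; cases b <;> simp [GG.dsrc, GG.dtgt]

@[simp] lemma dtgt_neg (p : Φ.E × Bool) : Φ.dtgt (p.1, !p.2) = Φ.dsrc p := by
  rcases p with ⟨e, b⟩; cases b <;> simp [GG.dsrc, GG.dtgt]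

@[simp] lemma dgain_neg (p : Φ.E × Bool) : Φ.dgain (p.1, !p.2) = (Φ.dgain p)⁻¹ := by
  rcases p with ⟨e, b⟩; cases b <;> simp [GG.dgain]

lemma IsWalk.mem_S {u v : Φ.V} {w : List (Φ.E × Bool)} (h : IsWalk Φ S u v w) :
    ∀ p ∈ w, p.1 ∈ S := by
  induction w generalizing u with
  | nil => simp
  | cons p t ih =>
    rcases h with ⟨hp, _, ht⟩
    intro q hq
    rcases List.mem_cons.mp hq with rfl | hq
    · exact hp
    · exact ih ht q hq

lemma IsWalk.append {u x v : Φ.V} {a b : List (Φ.E × Bool)}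
    (ha : IsWalk Φ S u x a) (hb : IsWalk Φ S x v b) : IsWalk Φ S u v (a ++ b) := by
  induction a generalizing u with
  | nil => cases ha; simpa using hb
  | cons p t ih =>
    rcases ha with ⟨hp, hs, ht⟩
    exact ⟨hp, hs, ih ht⟩

lemma IsWalk.split {u v : Φ.V} {a b : List (Φ.E × Bool)}
    (h : IsWalk Φ S u v (a ++ b)) : ∃ x, IsWalk Φ S u x a ∧ IsWalk Φ S x v b := by
  induction a generalizing u with
  | nil => exact ⟨u, rfl, h⟩
  | cons p t ih =>
    rcases h with ⟨hp, hs, ht⟩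
    obtain ⟨x, h1, h2⟩ := ih ht
    exact ⟨x, ⟨hp, hs, h1⟩, h2⟩

/-- reversal of a walk -/
def wrev (w : List (Φ.E × Bool)) : List (Φ.E × Bool) :=
  (w.reverse.map fun p => (p.1, !p.2))

lemma IsWalk.rev {u v : Φ.V} {w : List (Φ.E × Bool)} (h : IsWalk Φ S u v w) :
    IsWalk Φ S v u (wrev w) := by
  induction w generalizing u with
  | nil => cases h; exact rfl
  | cons p t ih =>
    rcases h with ⟨hp, hs, ht⟩
    have h1 : IsWalk Φ S v (Φ.dtgt p) (wrev t) := ih ht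
    have h2 : IsWalk Φ S (Φ.dtgt p) u [(p.1, !p.2)] := by
      refine ⟨hp, by simp, by simpa using hs⟩
    have := h1.append h2
    simpa [wrev] using this

lemma gw_wrev (w : List (Φ.E × Bool)) : gw Φ (wrev w) = (gw Φ w)⁻¹ := by
  induction w with
  | nil => simp [wrev]
  | cons p t ih =>
    have : wrev (p :: t) = wrev t ++ [(p.1, !p.2)] := by simp [wrev]
    rw [this, gw_append, ih]
    simp [mul_comm]

lemma IsWalk.reachable {u v : Φ.V} {w : List (Φ.E × Bool)} (h : IsWalk Φ S u v w) :
    (Φ.compGraph S).Reachable u v := by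
  induction w generalizing u with
  | nil => cases h; rfl
  | cons p t ih =>
    rcases h with ⟨hp, hs, ht⟩
    refine SimpleGraph.Reachable.trans ?_ (ih ht)
    rcases eq_or_ne u (Φ.dtgt p) with he | he
    · rw [← he]
    · refine SimpleGraph.Adj.reachable ?_
      rw [GG.compGraph, SimpleGraph.fromRel_adj]
      refine ⟨he, ?_⟩
      rcases p with ⟨e, b⟩
      cases b
      · right; exact ⟨e, hp, by simpa [GG.dtgt] using rfl, by simpa [GG.dsrc] using hs⟩
      · left; exact ⟨e, hp, by simpa [GG.dsrc] using hs, by simpa [GG.dtgt] using rfl⟩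

lemma IsWalk.comp_eq {u v : Φ.V} {w : List (Φ.E × Bool)} (h : IsWalk Φ S u v w) :
    (Φ.compGraph S).connectedComponentMk u = (Φ.compGraph S).connectedComponentMk v :=
  SimpleGraph.ConnectedComponent.sound h.reachable

lemma reachable_isWalk {u v : Φ.V} (h : (Φ.compGraph S).Reachable u v) :
    ∃ w, IsWalk Φ S u v w := by
  obtain ⟨p⟩ := h
  induction p with
  | nil => exact ⟨[], rfl⟩
  | @cons a x c hadj _ ih =>
    obtain ⟨w, hw⟩ := ih
    rw [GG.compGraph, SimpleGraph.fromRel_adj] at hadj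
    rcases hadj.2 with ⟨e, he, h1, h2⟩ | ⟨e, he, h1, h2⟩
    · exact ⟨(e, true) :: w, ⟨he, by simpa [GG.dsrc] using h1,
        by simpa [GG.dtgt, h2] using hw⟩⟩
    · exact ⟨(e, false) :: w, ⟨he, by simpa [GG.dsrc] using h2,
        by simpa [GG.dtgt, h1] using hw⟩⟩

lemma comp_eq_of_mem {e : Φ.E} (he : e ∈ S) :
    (Φ.compGraph S).connectedComponentMk (Φ.src e)
      = (Φ.compGraph S).connectedComponentMk (Φ.tgt e) := by
  rcases eq_or_ne (Φ.src e) (Φ.tgt e) with h | h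
  · rw [h]
  · refine SimpleGraph.ConnectedComponent.sound (SimpleGraph.Adj.reachable ?_)
    rw [GG.compGraph, SimpleGraph.fromRel_adj]
    exact ⟨h, Or.inl ⟨e, he, rfl, rfl⟩⟩

lemma IsWalk.chain' {u v : Φ.V} {w : List (Φ.E × Bool)} (h : IsWalk Φ S u v w) :
    w.Chain' fun p q => Φ.dtgt p = Φ.dsrc q := by
  induction w generalizing u with
  | nil => exact List.isChain_nil
  | cons p t ih =>
    rcases h with ⟨_, _, ht⟩
    refine List.isChain_cons.mpr ⟨?_, ih ht⟩
    intro q hq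
    cases t with
    | nil => simp at hq
    | cons r s =>
      simp at hq
      rcases ht with ⟨_, hs, _⟩
      rw [hq] at hs
      exact hs.symm

lemma IsWalk.head_dsrc {u v : Φ.V} {w : List (Φ.E × Bool)} (h : IsWalk Φ S u v w)
    (hne : w ≠ []) : Φ.dsrc (w.head hne) = u := by
  cases w with
  | nil => exact absurd rfl hne
  | cons p t => exact h.2.1

lemma IsWalk.getLast_dtgt {u v : Φ.V} {w : List (Φ.E × Bool)} (h : IsWalk Φ S u v w)
    (hne : w ≠ []) : Φ.dtgt (w.getLast hne) = v := by
  induction w generalizing u with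
  | nil => exact absurd rfl hne
  | cons p t ih =>
    rcases h with ⟨_, _, ht⟩
    cases t with
    | nil => cases ht; simp
    | cons r s =>
      rw [List.getLast_cons (by simp)]
      exact ih ht (by simp)

lemma isWalk_of_chain : ∀ (w : List (Φ.E × Bool)) (h : w ≠ []),
    (∀ p ∈ w, p.1 ∈ S) → (w.Chain' fun p q => Φ.dtgt p = Φ.dsrc q) →
    IsWalk Φ S (Φ.dsrc (w.head h)) (Φ.dtgt (w.getLast h)) w := by
  intro w
  induction w with
  | nil => intro h; exact absurd rfl h
  | cons p t ih =>
    intro _ hmem hch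
    cases t with
    | nil => exact ⟨hmem p (by simp), rfl, rfl⟩
    | cons r s =>
      have hch2 := List.isChain_cons_cons.mp hch
      have := ih (by simp) (fun q hq => hmem q (List.mem_cons_of_mem _ hq)) hch2.2
      refine ⟨hmem p (by simp), rfl, ?_⟩
      rw [List.getLast_cons (by simp)]
      simp only [List.head_cons] at this
      rw [hch2.1]
      exact this

lemma circle_isWalk {w : List (Φ.E × Bool)} (hc : Φ.IsCircle S w) :
    IsWalk Φ S (Φ.dsrc (w.head hc.ne)) (Φ.dsrc (w.head hc.ne)) w := by
  have := isWalk_of_chain w hc.ne hc.mem hc.chain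
  rwa [hc.closed hc.ne] at this

lemma exists_dup_split {α β : Type*} (f : α → β) :
    ∀ (l : List α), ¬ (l.map f).Nodup →
      ∃ (l1 : List α) (p : α) (l2 : List α) (q : α) (l3 : List α), l = l1 ++ p :: (l2 ++ q :: l3) ∧ f p = f q := by
  intro l
  induction l with
  | nil => simp
  | cons a t ih =>
    intro h
    by_cases ha : f a ∈ t.map f
    · obtain ⟨q, hq, hfq⟩ := List.mem_map.mp ha
      obtain ⟨l2, l3, rfl⟩ := List.mem_iff_append.mp hq
      exact ⟨[], a, l2, q, l3, rfl, hfq.symm⟩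
    · have h2 : ¬ (t.map f).Nodup := by
        intro hn
        exact h (by simp [List.nodup_cons, ha, hn])
      obtain ⟨l1, p, l2, q, l3, rfl, hpq⟩ := ih h2
      exact ⟨a :: l1, p, l2, q, l3, rfl, hpq⟩

lemma nodup_ne {α β : Type*} (f : α → β) (l1 l2 l3 : List α) (p q : α)
    (h : ((l1 ++ p :: (l2 ++ q :: l3)).map f).Nodup) : f p ≠ f q := by
  rw [List.map_append] at h
  have h2 := h.of_append_right
  rw [List.map_cons, List.nodup_cons] at h2
  intro he
  exact h2.1 (by rw [he]; simp)

lemma star {C : (Φ.compGraph S).ConnectedComponent} (hb : Φ.BalancedComp S C) :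
    ∀ (n : ℕ) (w : List (Φ.E × Bool)) (u : Φ.V), w.length ≤ n →
      IsWalk Φ S u u w → (Φ.compGraph S).connectedComponentMk u = C → gw Φ w = 1 := by
  intro n
  induction n with
  | zero =>
    intro w u hl _ _
    have : w = [] := List.length_eq_zero_iff.mp (Nat.le_zero.mp hl)
    simp [this]
  | succ n ih =>
    intro w u hl hw hc
    rcases eq_or_ne w [] with rfl | hne
    · simp
    by_cases hv : (w.map (Φ.dsrc)).Nodup
    · by_cases hedge : (w.map Prod.fst).Nodup
      · -- it is a circle
        have hcirc : Φ.IsCircle S w :=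
          ⟨hne, hw.mem_S, hw.chain',
            fun h => by rw [hw.getLast_dtgt h, hw.head_dsrc h], hedge, hv⟩
        exact hb w hcirc hne (by rw [hw.head_dsrc hne]; exact hc)
      · -- a repeated edge, but all dsrc distinct
        obtain ⟨l1, p, l2, q, l3, rfl, hpq⟩ := exists_dup_split Prod.fst w hedge
        have hdne : Φ.dsrc p ≠ Φ.dsrc q := nodup_ne Φ.dsrc l1 l2 l3 p q hv
        have hbne : p.2 ≠ q.2 := by
          intro hb2
          exact hdne (by rw [Prod.ext hpq hb2])
        have hq : q = (p.1, !p.2) := by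
          rcases p with ⟨e, b⟩; rcases q with ⟨e', b'⟩
          simp only at hpq
          cases b <;> cases b' <;> simp_all
        obtain ⟨x, h1, h2⟩ := hw.split
        rcases h2 with ⟨hpS, hps, h3⟩
        obtain ⟨y, h4, h5⟩ := h3.split
        rcases h5 with ⟨hqS, hqs, h6⟩
        have hy : y = Φ.dtgt p := by rw [← hqs, hq, dsrc_neg]
        rw [hy] at h4 hqs
        have hxy : Φ.dtgt q = x := by rw [hq, dtgt_neg, hps]
        rw [hxy] at h6
        -- lengths
        simp only [List.length_append, List.length_cons] at hl
        -- middle closed walk l2 at dtgt p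
        have hcm : (Φ.compGraph S).connectedComponentMk (Φ.dtgt p) = C := by
          have hwp : IsWalk Φ S u (Φ.dtgt p) (l1 ++ [p]) :=
            h1.append ⟨hpS, hps, rfl⟩
          rw [← hwp.comp_eq]; exact hc
        have hm : gw Φ l2 = 1 := ih l2 (Φ.dtgt p) (by omega) h4 hcm
        have ho : gw Φ (l1 ++ l3) = 1 := ih (l1 ++ l3) u
          (by simp [List.length_append]; omega) (h1.append h6) hc
        rw [gw_append] at ho
        have hgq : Φ.dgain q = (Φ.dgain p)⁻¹ := by rw [hq, dgain_neg]
        simp only [gw_append, gw_cons, hm, hgq, mul_one, one_mul]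
        calc gw Φ l1 * (Φ.dgain p * ((Φ.dgain p)⁻¹ * gw Φ l3))
            = gw Φ l1 * gw Φ l3 := by rw [mul_inv_cancel_left]
          _ = 1 := ho
    · -- a repeated vertex
      obtain ⟨l1, p, l2, q, l3, rfl, hpq⟩ := exists_dup_split Φ.dsrc w hv
      obtain ⟨x, h1, h2⟩ := hw.split
      rcases h2 with ⟨hpS, hps, h3⟩
      obtain ⟨y, h4, h5⟩ := h3.split
      rcases h5 with ⟨hqS, hqs, h6⟩
      have hy : y = x := by rw [← hqs, ← hpq, hps]
      rw [hy] at h4 hqs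
      simp only [List.length_append, List.length_cons] at hl
      have hcx : (Φ.compGraph S).connectedComponentMk x = C := by
        rw [← h1.comp_eq]; exact hc
      have hm : gw Φ (p :: l2) = 1 :=
        ih (p :: l2) x (by simp; omega) ⟨hpS, hps, h4⟩ hcx
      have ho : gw Φ (l1 ++ q :: l3) = 1 :=
        ih (l1 ++ q :: l3) u (by simp; omega) (h1.append ⟨hqS, hqs, h6⟩) hc
      have : gw Φ (l1 ++ p :: (l2 ++ q :: l3))
          = gw Φ l1 * (gw Φ (p :: l2) * gw Φ (q :: l3)) := by
        simp [gw, mul_assoc]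
      rw [this, hm, one_mul, ← gw_append, ho]

/-- The property of being a consistent potential on the component `C` (and `1` elsewhere). -/
def ConsProp (Φ : GG 𝔊) (S : Finset Φ.E) (C : (Φ.compGraph S).ConnectedComponent)
    (η : Φ.V → 𝔊) : Prop :=
  (∀ v, (Φ.compGraph S).connectedComponentMk v ≠ C → η v = 1) ∧
  ∀ e ∈ S, (Φ.compGraph S).connectedComponentMk (Φ.src e) = C →
    η (Φ.tgt e) = η (Φ.src e) * Φ.gain e

lemma cons_along {C : (Φ.compGraph S).ConnectedComponent} {η : Φ.V → 𝔊}
    (hη : ConsProp Φ S C η) {u v : Φ.V} {w : List (Φ.E × Bool)}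
    (h : IsWalk Φ S u v w) (hu : (Φ.compGraph S).connectedComponentMk u = C) :
    η v = η u * gw Φ w := by
  induction w generalizing u with
  | nil => cases h; simp
  | cons p t ih =>
    obtain ⟨hp, hs, ht⟩ := h
    rcases p with ⟨e, b⟩
    cases b
    · -- traversed backwards: dsrc = tgt e
      simp only [GG.dsrc, GG.dtgt, GG.dgain, Bool.false_eq_true, if_false] at hs ht ⊢
      have htgt : (Φ.compGraph S).connectedComponentMk (Φ.tgt e) = C := by
        rw [hs]; exact hu
      have hsrc : (Φ.compGraph S).connectedComponentMk (Φ.src e) = C := by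
        rw [comp_eq_of_mem hp]; exact htgt
      have hstep : η (Φ.src e) = η u * (Φ.gain e)⁻¹ := by
        rw [← hs, hη.2 e hp hsrc]; group
      rw [ih ht hsrc, hstep, gw_cons]
      simp [GG.dgain, mul_assoc]
    · simp only [GG.dsrc, GG.dtgt, GG.dgain, if_true] at hs ht ⊢
      have hsrc : (Φ.compGraph S).connectedComponentMk (Φ.src e) = C := by
        rw [hs]; exact hu
      have htgt : (Φ.compGraph S).connectedComponentMk (Φ.tgt e) = C := by
        rw [← comp_eq_of_mem hp]; exact hsrc
      rw [ih ht htgt, hη.2 e hp hsrc, hs, gw_cons]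
      simp [GG.dgain, mul_assoc]

lemma gw_unique {C : (Φ.compGraph S).ConnectedComponent} (hb : Φ.BalancedComp S C)
    {u v : Φ.V} (hu : (Φ.compGraph S).connectedComponentMk u = C)
    {w1 w2 : List (Φ.E × Bool)} (h1 : IsWalk Φ S u v w1) (h2 : IsWalk Φ S u v w2) :
    gw Φ w1 = gw Φ w2 := by
  have h3 := star hb (w1 ++ wrev w2).length (w1 ++ wrev w2) u le_rfl (h1.append h2.rev) hu
  rw [gw_append, gw_wrev] at h3
  exact mul_inv_eq_one.mp h3

lemma exists_cons {C : (Φ.compGraph S).ConnectedComponent} (hb : Φ.BalancedComp S C) :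
    ∃ η : Φ.V → 𝔊, ConsProp Φ S C η := by
  classical
  have hr : (Φ.compGraph S).connectedComponentMk C.out = C := C.out_eq
  have hwalk : ∀ v, (Φ.compGraph S).connectedComponentMk v = C →
      ∃ w, IsWalk Φ S C.out v w := fun v hv =>
    reachable_isWalk (SimpleGraph.ConnectedComponent.exact (hr.trans hv.symm))
  refine ⟨fun v => if h : (Φ.compGraph S).connectedComponentMk v = C
      then gw Φ (hwalk v h).choose else 1, fun v hv => dif_neg hv, ?_⟩
  intro e he hsrc
  have htgt : (Φ.compGraph S).connectedComponentMk (Φ.tgt e) = C := by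
    rw [← comp_eq_of_mem he]; exact hsrc
  dsimp only
  rw [dif_pos hsrc, dif_pos htgt]
  have h1 : IsWalk Φ S C.out (Φ.tgt e) ((hwalk _ hsrc).choose ++ [(e, true)]) :=
    (hwalk _ hsrc).choose_spec.append ⟨he, rfl, rfl⟩
  have h2 : IsWalk Φ S C.out (Φ.tgt e) (hwalk _ htgt).choose :=
    (hwalk _ htgt).choose_spec
  have h3 := gw_unique hb hr h2 h1
  rw [h3, gw_append]
  simp [gw, GG.dgain]

lemma card_cons_of_balanced {C : (Φ.compGraph S).ConnectedComponent}
    (hb : Φ.BalancedComp S C) :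
    Nat.card {η : Φ.V → 𝔊 // ConsProp Φ S C η} = Nat.card 𝔊 := by
  classical
  obtain ⟨η0, hη0⟩ := exists_cons hb
  have hr : (Φ.compGraph S).connectedComponentMk C.out = C := C.out_eq
  have hmem : ∀ g : 𝔊, ConsProp Φ S C
      (fun v => if (Φ.compGraph S).connectedComponentMk v = C then g * η0 v else 1) := by
    intro g
    constructor
    · intro v hv; dsimp only; rw [if_neg hv]
    · intro e he hsrc
      have htgt : (Φ.compGraph S).connectedComponentMk (Φ.tgt e) = C := by
        rw [← comp_eq_of_mem he]; exact hsrc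
      dsimp only
      rw [if_pos hsrc, if_pos htgt, hη0.2 e he hsrc, mul_assoc]
  have hbij : Function.Bijective (fun g : 𝔊 =>
      (⟨fun v => if (Φ.compGraph S).connectedComponentMk v = C then g * η0 v else 1,
        hmem g⟩ : {η : Φ.V → 𝔊 // ConsProp Φ S C η})) := by
    constructor
    · intro g g' hgg
      have := congrFun (congrArg Subtype.val hgg) C.out
      simp only [if_pos hr] at this
      exact mul_right_cancel this
    · rintro ⟨η, hη⟩
      refine ⟨η C.out * (η0 C.out)⁻¹, Subtype.ext (funext fun v => ?_)⟩
      by_cases hv : (Φ.compGraph S).connectedComponentMk v = C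
      · simp only [if_pos hv]
        obtain ⟨w, hw⟩ := reachable_isWalk
          (SimpleGraph.ConnectedComponent.exact (hr.trans hv.symm))
        rw [cons_along hη hw hr, cons_along hη0 hw hr]
        group
      · simp only [if_neg hv]
        exact (hη.1 v hv).symm
  exact (Nat.card_eq_of_bijective _ hbij).symm

lemma card_cons_of_not_balanced {C : (Φ.compGraph S).ConnectedComponent}
    (hb : ¬ Φ.BalancedComp S C) :
    Nat.card {η : Φ.V → 𝔊 // ConsProp Φ S C η} = 0 := by
  rw [Nat.card_eq_zero]
  left
  constructor
  rintro ⟨η, hη⟩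
  apply hb
  intro w hw hne hcomp
  have hwalk := circle_isWalk hw
  have := cons_along hη hwalk hcomp
  have h2 := this.symm.trans (mul_one (η (Φ.dsrc (w.head hne)))).symm
  exact mul_left_cancel h2

variable {k z : ℕ}

/-- `κ` violates the edge `e`. -/
def Viol (Φ : GG 𝔊) {k z : ℕ} (κ : Φ.V → (𝔊 × Fin k) ⊕ Fin z) (e : Φ.E) : Prop :=
  (∃ m : Fin z, κ (Φ.src e) = Sum.inr m ∧ κ (Φ.tgt e) = Sum.inr m) ∨
  (∃ (g : 𝔊) (m : Fin k), κ (Φ.src e) = Sum.inl (g, m) ∧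
    κ (Φ.tgt e) = Sum.inl (g * Φ.gain e, m))

lemma walk_inr {κ : Φ.V → (𝔊 × Fin k) ⊕ Fin z} (hκ : ∀ e ∈ S, Viol Φ κ e)
    {u v : Φ.V} {w : List (Φ.E × Bool)} (h : IsWalk Φ S u v w) {m : Fin z}
    (hm : κ u = Sum.inr m) : κ v = Sum.inr m := by
  induction w generalizing u with
  | nil => cases h; exact hm
  | cons p t ih =>
    obtain ⟨hp, hs, ht⟩ := h
    rcases p with ⟨e, b⟩
    have hviol := hκ e hp
    cases b
    · simp only [GG.dsrc, GG.dtgt, Bool.false_eq_true, if_false] at hs ht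
      rcases hviol with ⟨m', h1, h2⟩ | ⟨g, m', h1, h2⟩
      · rw [hs, hm] at h2
        obtain rfl := (Sum.inr.injEq _ _).mp h2.symm
        exact ih ht h1
      · rw [hs, hm] at h2; simp at h2
    · simp only [GG.dsrc, GG.dtgt, if_true] at hs ht
      rcases hviol with ⟨m', h1, h2⟩ | ⟨g, m', h1, h2⟩
      · rw [hs, hm] at h1
        obtain rfl := (Sum.inr.injEq _ _).mp h1.symm
        exact ih ht h2
      · rw [hs, hm] at h1; simp at h1

lemma walk_inl {κ : Φ.V → (𝔊 × Fin k) ⊕ Fin z} (hκ : ∀ e ∈ S, Viol Φ κ e)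
    {u v : Φ.V} {w : List (Φ.E × Bool)} (h : IsWalk Φ S u v w) {g : 𝔊} {m : Fin k}
    (hm : κ u = Sum.inl (g, m)) : ∃ g', κ v = Sum.inl (g', m) := by
  induction w generalizing u g with
  | nil => cases h; exact ⟨g, hm⟩
  | cons p t ih =>
    obtain ⟨hp, hs, ht⟩ := h
    rcases p with ⟨e, b⟩
    have hviol := hκ e hp
    cases b
    · simp only [GG.dsrc, GG.dtgt, Bool.false_eq_true, if_false] at hs ht
      rcases hviol with ⟨m', h1, h2⟩ | ⟨g0, m', h1, h2⟩
      · rw [hs, hm] at h2; simp at h2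
      · rw [hs, hm] at h2
        obtain ⟨-, rfl⟩ := Prod.mk.injEq .. |>.mp ((Sum.inl.injEq _ _).mp h2.symm)
        exact ih ht h1
    · simp only [GG.dsrc, GG.dtgt, if_true] at hs ht
      rcases hviol with ⟨m', h1, h2⟩ | ⟨g0, m', h1, h2⟩
      · rw [hs, hm] at h1; simp at h1
      · rw [hs, hm] at h1
        obtain ⟨rfl, rfl⟩ := Prod.mk.injEq .. |>.mp ((Sum.inl.injEq _ _).mp h1.symm)
        exact ih ht h2

/-- extract the gain coordinate of a colour -/
def getG : (𝔊 × Fin k) ⊕ Fin z → 𝔊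
  | Sum.inl (g, _) => g
  | Sum.inr _ => 1

/-- The per-component choice data. -/
def Choice (Φ : GG 𝔊) (S : Finset Φ.E) (k z : ℕ)
    (C : (Φ.compGraph S).ConnectedComponent) : Type :=
  Fin z ⊕ (Fin k × {η : Φ.V → 𝔊 // ConsProp Φ S C η})

/-- Reassembling a coloration from per-component choices. -/
def recolor (f : ∀ C, Choice Φ S k z C) : Φ.V → (𝔊 × Fin k) ⊕ Fin z :=
  fun v => Sum.elim (fun m => Sum.inr m)
    (fun pm => Sum.inl (pm.2.1 v, pm.1)) (f ((Φ.compGraph S).connectedComponentMk v))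

lemma recolor_viol (f : ∀ C, Choice Φ S k z C) : ∀ e ∈ S, Viol Φ (recolor f) e := by
  intro e he
  have hc := comp_eq_of_mem (S := S) he
  unfold Viol recolor
  rw [← hc]
  cases hfc : f ((Φ.compGraph S).connectedComponentMk (Φ.src e)) with
  | inl m => exact Or.inl ⟨m, rfl, rfl⟩
  | inr pm =>
    refine Or.inr ⟨pm.2.1 (Φ.src e), pm.1, rfl, ?_⟩
    have := pm.2.2.2 e he rfl
    simp [this]

lemma recolor_injective : Function.Injective (recolor (Φ := Φ) (S := S) (k := k) (z := z)) := by
  intro f f' h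
  funext C
  have hr : (Φ.compGraph S).connectedComponentMk C.out = C := C.out_eq
  have hval : ∀ v, recolor f v = recolor f' v := fun v => congrFun h v
  have hout := hval C.out
  unfold recolor at hout
  rw [hr] at hout
  cases hc : f C with
  | inl m =>
    cases hc' : f' C with
    | inl m' =>
      rw [hc, hc'] at hout
      simp only [Sum.elim_inl, Sum.inr.injEq] at hout
      rw [hout]
    | inr pm' => rw [hc, hc'] at hout; simp at hout
  | inr pm =>
    cases hc' : f' C with
    | inl m' => rw [hc, hc'] at hout; simp at hout
    | inr pm' =>
      rw [hc, hc'] at hout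
      simp only [Sum.elim_inr, Sum.inl.injEq, Prod.mk.injEq] at hout
      have hmm : pm.1 = pm'.1 := hout.2
      have heta : pm.2.1 = pm'.2.1 := by
        funext v
        by_cases hv : (Φ.compGraph S).connectedComponentMk v = C
        · have h2 := hval v
          unfold recolor at h2
          rw [hv, hc, hc'] at h2
          simp only [Sum.elim_inr, Sum.inl.injEq, Prod.mk.injEq] at h2
          exact h2.1
        · rw [pm.2.2.1 v hv, pm'.2.2.1 v hv]
      rcases pm with ⟨m1, η1⟩; rcases pm' with ⟨m1', η1'⟩
      simp only at hmm heta
      rw [hmm, Subtype.ext heta]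

lemma recolor_surjective {κ : Φ.V → (𝔊 × Fin k) ⊕ Fin z} (hκ : ∀ e ∈ S, Viol Φ κ e) :
    ∃ f : ∀ C, Choice Φ S k z C, recolor f = κ := by
  classical
  have key : ∀ C : (Φ.compGraph S).ConnectedComponent, ∃ y : Choice Φ S k z C,
      ∀ v, (Φ.compGraph S).connectedComponentMk v = C →
        κ v = Sum.elim (fun m => Sum.inr m) (fun pm => Sum.inl (pm.2.1 v, pm.1)) y := by
    intro C
    have hr : (Φ.compGraph S).connectedComponentMk C.out = C := C.out_eq
    have hwalk : ∀ v, (Φ.compGraph S).connectedComponentMk v = C →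
        ∃ w, IsWalk Φ S C.out v w := fun v hv =>
      reachable_isWalk (SimpleGraph.ConnectedComponent.exact (hr.trans hv.symm))
    cases hrc : κ C.out with
    | inr m =>
      refine ⟨Sum.inl m, fun v hv => ?_⟩
      obtain ⟨w, hw⟩ := hwalk v hv
      simpa using walk_inr hκ hw hrc
    | inl gm =>
      obtain ⟨g, m⟩ := gm
      have hall : ∀ v, (Φ.compGraph S).connectedComponentMk v = C →
          ∃ g', κ v = Sum.inl (g', m) := by
        intro v hv
        obtain ⟨w, hw⟩ := hwalk v hv
        exact walk_inl hκ hw hrc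
      have hmem : ConsProp Φ S C
          (fun v => if (Φ.compGraph S).connectedComponentMk v = C then getG (κ v) else 1) := by
        constructor
        · intro v hv; dsimp only; rw [if_neg hv]
        · intro e he hsrc
          have htgt : (Φ.compGraph S).connectedComponentMk (Φ.tgt e) = C := by
            rw [← comp_eq_of_mem he]; exact hsrc
          dsimp only
          rw [if_pos hsrc, if_pos htgt]
          obtain ⟨gs, hgs⟩ := hall _ hsrc
          rcases hκ e he with ⟨m', h1, h2⟩ | ⟨g0, m0, h1, h2⟩
          · rw [hgs] at h1; simp at h1
          · rw [h1, h2]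
            simp [getG]
      refine ⟨Sum.inr (m, ⟨_, hmem⟩), fun v hv => ?_⟩
      obtain ⟨g', hg'⟩ := hall v hv
      simp only [Sum.elim_inr]
      rw [if_pos hv, hg']
      simp [getG]
  choose f hf using key
  exact ⟨f, funext fun v => (hf ((Φ.compGraph S).connectedComponentMk v) v rfl).symm⟩

lemma card_viol [Fintype 𝔊] (Φ : GG 𝔊) (S : Finset Φ.E) (k z : ℕ) :
    Nat.card {κ : Φ.V → (𝔊 × Fin k) ⊕ Fin z // ∀ e ∈ S, Viol Φ κ e}
      = (k * Fintype.card 𝔊 + z) ^ Φ.b S * z ^ (Φ.c S - Φ.b S) := by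
  classical
  letI : Fintype (Φ.compGraph S).ConnectedComponent := Fintype.ofFinite _
  have hbij : Function.Bijective
      (fun f : (∀ C, Choice Φ S k z C) =>
        (⟨recolor f, recolor_viol f⟩ : {κ : Φ.V → (𝔊 × Fin k) ⊕ Fin z //
          ∀ e ∈ S, Viol Φ κ e})) := by
    constructor
    · intro f f' h
      exact recolor_injective (congrArg Subtype.val h)
    · rintro ⟨κ, hκ⟩
      obtain ⟨f, hf⟩ := recolor_surjective hκ
      exact ⟨f, Subtype.ext hf⟩
  rw [← Nat.card_eq_of_bijective _ hbij, Nat.card_pi]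
  have hterm : ∀ C, Nat.card (Choice Φ S k z C)
      = if Φ.BalancedComp S C then k * Fintype.card 𝔊 + z else z := by
    intro C
    unfold Choice
    rw [Nat.card_sum, Nat.card_prod]
    by_cases hb : Φ.BalancedComp S C
    · rw [if_pos hb, card_cons_of_balanced hb]
      simp [Nat.card_eq_fintype_card]
      ring
    · rw [if_neg hb, card_cons_of_not_balanced hb]
      simp
  simp_rw [hterm]
  rw [Finset.prod_ite, Finset.prod_const, Finset.prod_const]
  have hbcard : (Finset.univ.filter (Φ.BalancedComp S)).card = Φ.b S := by
    rw [GG.b, Nat.card_eq_fintype_card, Fintype.card_subtype]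
  have hccard : Fintype.card (Φ.compGraph S).ConnectedComponent = Φ.c S := by
    rw [GG.c, Nat.card_eq_fintype_card]
  have hsum := Finset.card_filter_add_card_filter_not
    (s := (Finset.univ : Finset (Φ.compGraph S).ConnectedComponent))
    (p := Φ.BalancedComp S)
  rw [Finset.card_univ, hccard, hbcard] at hsum
  have hneg : (Finset.univ.filter (fun C => ¬ Φ.BalancedComp S C)).card
      = Φ.c S - Φ.b S := by omega
  rw [hbcard, hneg]

lemma incl_excl {α β : Type} [Fintype α] [Fintype β] (viol : α → β → Prop) :
    (Nat.card {a : α // ∀ b, ¬ viol a b} : ℤ) =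
      ∑ S : Finset β, (-1) ^ S.card * (Nat.card {a : α // ∀ b ∈ S, viol a b} : ℤ) := by
  classical
  have hcard : ∀ (p : α → Prop), Nat.card {a // p a} = (Finset.univ.filter p).card := by
    intro p
    simp [Nat.card_eq_fintype_card, Fintype.card_subtype]
  simp_rw [hcard]
  have hstep : ∀ (p : α → Prop), ((Finset.univ.filter p).card : ℤ)
      = ∑ a : α, if p a then (1 : ℤ) else 0 := by
    intro p
    rw [Finset.card_filter]
    push_cast
    simp
  simp_rw [hstep, Finset.mul_sum]
  rw [Finset.sum_comm]
  have hinner : ∀ a : α, (∑ S : Finset β, (-1 : ℤ) ^ S.card *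
      (@ite ℤ (∀ b ∈ S, viol a b) (Classical.propDecidable _) (1 : ℤ) 0))
        = @ite ℤ (∀ b, ¬ viol a b) (Classical.propDecidable _) 1 0 := by
    intro a
    have h1 : ∀ S : Finset β, (∀ b ∈ S, viol a b) ↔ S ⊆ Finset.univ.filter (viol a) := by
      intro S
      constructor
      · intro h b hb
        simp only [Finset.mem_filter, Finset.mem_univ, true_and]
        exact h b hb
      · intro h b hb
        exact (Finset.mem_filter.mp (h hb)).2
    calc
      ∑ S : Finset β, (-1 : ℤ) ^ S.card *
            (@ite ℤ (∀ b ∈ S, viol a b) (Classical.propDecidable _) (1 : ℤ) 0)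
          = ∑ S : Finset β, if S ∈ (Finset.univ.filter (viol a)).powerset
              then (-1 : ℤ) ^ S.card else 0 := by
            refine Finset.sum_congr rfl fun S _ => ?_
            simp only [Finset.mem_powerset]
            by_cases h : ∀ b ∈ S, viol a b
            · rw [if_pos h, if_pos ((h1 S).mp h), mul_one]
            · rw [if_neg h, if_neg (fun hc => h ((h1 S).mpr hc)), mul_zero]
        _ = ∑ S ∈ (Finset.univ.filter (viol a)).powerset, (-1 : ℤ) ^ S.card := by
            rw [Finset.sum_ite_mem, Finset.univ_inter]
        _ = if (Finset.univ.filter (viol a)) = ∅ then 1 else 0 :=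
            Finset.sum_powerset_neg_one_pow_card
        _ = @ite ℤ (∀ b, ¬ viol a b) (Classical.propDecidable _) 1 0 := by
            have h2 : (Finset.univ.filter (viol a) = ∅) ↔ (∀ b, ¬ viol a b) := by
              constructor
              · intro h b
                exact Finset.filter_eq_empty_iff.mp h (Finset.mem_univ b)
              · intro h
                exact Finset.filter_eq_empty_iff.mpr fun b _ => h b
            by_cases h : ∀ b, ¬ viol a b
            · rw [if_pos (h2.mpr h), if_pos h]
            · rw [if_neg (fun hc => h (h2.mp hc)), if_neg h]
  exact Finset.sum_congr rfl fun a _ => (hinner a).symm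

end GGaux




/-- For a gain graph with finite gain group `𝔊` and nonnegative integers `k, z`, with
`q = k|𝔊| + z`, the number of proper colorations `κ : V → (𝔊 × [k]) ∪ [z]` equals
`∑_{S ⊆ E} (−1)^{|S|} q^{b(S)} z^{c(S)−b(S)}`. -/
theorem stmt_8 [Fintype 𝔊] (Φ : GG 𝔊) (k z : ℕ) :
    (Nat.card {κ : Φ.V → (𝔊 × Fin k) ⊕ Fin z //
        ∀ e : Φ.E,
          (¬ ∃ m : Fin z, κ (Φ.src e) = Sum.inr m ∧ κ (Φ.tgt e) = Sum.inr m) ∧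
          (¬ ∃ (g : 𝔊) (m : Fin k),
            κ (Φ.src e) = Sum.inl (g, m) ∧ κ (Φ.tgt e) = Sum.inl (g * Φ.gain e, m))} : ℤ) =
      ∑ S : Finset Φ.E, (-1) ^ S.card *
        ((k * Fintype.card 𝔊 + z : ℕ) : ℤ) ^ Φ.b S * (z : ℤ) ^ (Φ.c S - Φ.b S) := by
  classical
  have h0 : Nat.card {κ : Φ.V → (𝔊 × Fin k) ⊕ Fin z //
        ∀ e : Φ.E,
          (¬ ∃ m : Fin z, κ (Φ.src e) = Sum.inr m ∧ κ (Φ.tgt e) = Sum.inr m) ∧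
          (¬ ∃ (g : 𝔊) (m : Fin k),
            κ (Φ.src e) = Sum.inl (g, m) ∧ κ (Φ.tgt e) = Sum.inl (g * Φ.gain e, m))}
      = Nat.card {κ : Φ.V → (𝔊 × Fin k) ⊕ Fin z // ∀ e, ¬ GGaux.Viol Φ κ e} := by
    refine Nat.card_congr (Equiv.subtypeEquivRight fun κ => ?_)
    unfold GGaux.Viol
    constructor
    · intro h e
      rw [not_or]
      exact ⟨(h e).1, (h e).2⟩
    · intro h e
      rw [← not_or]
      exact h e
  rw [h0, GGaux.incl_excl (fun κ e => GGaux.Viol Φ κ e)]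
  refine Finset.sum_congr rfl fun S _ => ?_
  rw [GGaux.card_viol Φ S k z]
  push_cast
  ring
end

section
/- For integers q > n, the number of maps κ : [n] → ℤ_q such that κ is injective and for all i < j, κ(j) ≠ κ(i) + 1 (mod q), equals q(q−n)^{n−1}. -/
set_option linter.unusedSectionVars false

open Function Set

private def Shi (n q : ℕ) (κ : Fin n → ZMod q) : Prop :=
  Function.Injective κ ∧ ∀ i j : Fin n, i < j → κ j ≠ κ i + 1

private lemma succ_iff {q : ℕ} (hq : 2 ≤ q) (x y : ZMod q) :
    y = x + 1 ↔ (y.val = x.val + 1 ∨ (x.val = q - 1 ∧ y.val = 0)) := by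
  haveI : NeZero q := ⟨by omega⟩
  have hx := ZMod.val_lt x
  have hy := ZMod.val_lt y
  have hadd : (x + 1).val = (x.val + 1) % q := by
    rw [ZMod.val_add, ZMod.val_one_eq_one_mod, Nat.mod_eq_of_lt hq]
  constructor
  · rintro rfl
    rcases Nat.lt_or_ge (x.val + 1) q with h | h
    · left; rw [hadd, Nat.mod_eq_of_lt h]
    · right
      have hxq : x.val = q - 1 := by omega
      have h1 : x.val + 1 = q := by omega
      exact ⟨hxq, by rw [hadd, h1, Nat.mod_self]⟩
  · intro h
    apply ZMod.val_injective q
    rw [hadd]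
    rcases h with h | ⟨h1, h2⟩
    · have : (x.val + 1) % q = x.val + 1 := Nat.mod_eq_of_lt (by omega)
      omega
    · have : x.val + 1 = q := by omega
      rw [this, Nat.mod_self, h2]

section Step

variable {m Q : ℕ}

private def fwd (a : ℕ) (x : ZMod (Q + 1)) : ZMod Q :=
  if x.val < a then (x.val : ZMod Q) else ((x.val - 1 : ℕ) : ZMod Q)

private def bwd (b : ℕ) (x : ZMod Q) : ZMod (Q + 1) :=
  if x.val < b then (x.val : ZMod (Q + 1)) else ((x.val + 1 : ℕ) : ZMod (Q + 1))

private lemma fwd_val [NeZero Q] {a : ℕ} (ha : 1 ≤ a) (ha' : a ≤ Q) (x : ZMod (Q + 1)) :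
    (fwd a x).val = if x.val < a then x.val else x.val - 1 := by
  have hx : x.val < Q + 1 := ZMod.val_lt x
  unfold fwd
  split_ifs with h
  · exact ZMod.val_natCast_of_lt (by omega)
  · exact ZMod.val_natCast_of_lt (by omega)

private lemma bwd_val [NeZero Q] {b : ℕ} (x : ZMod Q) :
    (bwd b x).val = if x.val < b then x.val else x.val + 1 := by
  have hx : x.val < Q := ZMod.val_lt x
  unfold bwd
  split_ifs with h
  · exact ZMod.val_natCast_of_lt (by omega)
  · exact ZMod.val_natCast_of_lt (by omega)

section Forward

variable (κ : Fin (m + 2) → ZMod (Q + 1))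

private def aOf : ℕ := (κ (Fin.last (m + 1))).val

private lemma a_facts (hκ : Shi (m + 2) (Q + 1) κ) (h0 : κ 0 = 0) :
    1 ≤ aOf κ ∧ aOf κ ≤ Q := by
  constructor
  · by_contra hc
    have hz : (κ (Fin.last (m + 1))).val = 0 := by unfold aOf at hc; omega
    have : κ (Fin.last (m + 1)) = 0 := by
      haveI : NeZero (Q + 1) := ⟨by omega⟩
      exact (ZMod.val_eq_zero _).mp hz
    have h2 : κ (Fin.last (m + 1)) = κ 0 := by rw [this, h0]
    have : (Fin.last (m + 1)).val = (0 : Fin (m + 2)).val := congrArg Fin.val (hκ.1 h2)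
    simp [Fin.val_last] at this
  · have := ZMod.val_lt (κ (Fin.last (m + 1)))
    unfold aOf; omega

private lemma v_ne_a (hκ : Shi (m + 2) (Q + 1) κ) (j : Fin (m + 1)) :
    (κ j.castSucc).val ≠ aOf κ := by
  intro hc
  have : κ j.castSucc = κ (Fin.last (m + 1)) := by
    haveI : NeZero (Q + 1) := ⟨by omega⟩
    exact ZMod.val_injective _ hc
  exact absurd (congrArg Fin.val (hκ.1 this)) (by simp [Fin.val_last]; omega)

variable (hQ : m + 2 ≤ Q) (hκ : Shi (m + 2) (Q + 1) κ) (h0 : κ 0 = 0)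

include hQ hκ in
private lemma shi_val : ∀ i j : Fin (m + 2), i < j → (κ j).val ≠ (κ i).val + 1 := by
  intro i j hij hval
  exact hκ.2 i j hij ((succ_iff (by omega) _ _).mpr (Or.inl hval))

include hQ hκ h0 in
private lemma fwd_shi : Shi (m + 1) Q (fun j => fwd (aOf κ) (κ j.castSucc)) := by
  haveI : NeZero Q := ⟨by omega⟩
  haveI : NeZero (Q + 1) := ⟨by omega⟩
  obtain ⟨ha1, ha2⟩ := a_facts κ hκ h0
  have hv : ∀ j : Fin (m + 1), (fwd (aOf κ) (κ j.castSucc)).val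
      = if (κ j.castSucc).val < aOf κ then (κ j.castSucc).val else (κ j.castSucc).val - 1 :=
    fun j => fwd_val ha1 ha2 _
  have hshi := shi_val κ hQ hκ
  constructor
  · intro i j hij
    have h1 := congrArg ZMod.val hij
    simp only [hv] at h1
    have hne_i := v_ne_a κ hκ i
    have hne_j := v_ne_a κ hκ j
    have heq : (κ i.castSucc).val = (κ j.castSucc).val := by
      split_ifs at h1 <;> omega
    exact Fin.castSucc_injective _ (hκ.1 (ZMod.val_injective _ heq))
  · intro i j hij hc
    have hcs : i.castSucc < j.castSucc := Fin.castSucc_lt_castSucc_iff.mpr hij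
    rw [succ_iff (by omega)] at hc
    rw [hv i, hv j] at hc
    have hne_i := v_ne_a κ hκ i
    have hne_j := v_ne_a κ hκ j
    have hvi := ZMod.val_lt (κ i.castSucc)
    have hvj := ZMod.val_lt (κ j.castSucc)
    rcases hc with hc | ⟨hc1, hc2⟩
    · split_ifs at hc with h1 h2 h2
      · exact hshi _ _ hcs hc
      · exact hij.ne (Fin.castSucc_injective _ (hκ.1 (ZMod.val_injective _
          (show (κ i.castSucc).val = (κ j.castSucc).val by omega))))
      · have ha : aOf κ = (κ i.castSucc).val + 1 := by omega
        exact hshi _ _ (Fin.castSucc_lt_last i) ha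
      · exact hshi _ _ hcs (by omega)
    · split_ifs at hc2 with h2
      · have : κ j.castSucc = κ 0 := by rw [h0]; exact (ZMod.val_eq_zero _).mp hc2
        have hj0 : j.castSucc = (0 : Fin (m + 2)) := hκ.1 this
        have : j = 0 := by
          have := congrArg Fin.val hj0
          exact Fin.ext (by simpa using this)
        rw [this] at hij
        exact Fin.not_lt_zero i hij
      · omega

include hQ hκ h0 in
private lemma fwd_zero : fwd (aOf κ) (κ (Fin.castSucc 0)) = 0 := by
  haveI : NeZero Q := ⟨by omega⟩
  obtain ⟨ha1, ha2⟩ := a_facts κ hκ h0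
  rw [Fin.castSucc_zero, h0]
  unfold fwd
  rw [if_pos (by rw [ZMod.val_zero]; omega)]
  simp

include hQ hκ h0 in
private lemma fwd_notmem :
    ∀ j : Fin (m + 1), fwd (aOf κ) (κ j.castSucc) ≠ ((aOf κ - 1 : ℕ) : ZMod Q) := by
  haveI : NeZero Q := ⟨by omega⟩
  obtain ⟨ha1, ha2⟩ := a_facts κ hκ h0
  intro j hc
  have h1 := congrArg ZMod.val hc
  rw [fwd_val ha1 ha2, ZMod.val_natCast_of_lt (show aOf κ - 1 < Q by omega)] at h1
  have hne_j := v_ne_a κ hκ j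
  have hshi := shi_val κ hQ hκ
  split_ifs at h1 with h2
  · have ha : aOf κ = (κ j.castSucc).val + 1 := by omega
    exact hshi _ _ (Fin.castSucc_lt_last j) ha
  · exact hne_j (by omega)

end Forward

section Backward

variable (hQ : m + 2 ≤ Q) (κ' : Fin (m + 1) → ZMod Q) (t : ZMod Q)
variable (hκ' : Shi (m + 1) Q κ') (h0' : κ' 0 = 0) (ht : ∀ j, κ' j ≠ t)

private def B : Fin (m + 2) → ZMod (Q + 1) :=
  fun i => Fin.lastCases (((t.val + 1 : ℕ) : ZMod (Q + 1))) (fun j => bwd (t.val + 1) (κ' j)) i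

include hQ in
private lemma B_last_val : (B κ' t (Fin.last (m + 1))).val = t.val + 1 := by
  haveI : NeZero Q := ⟨by omega⟩
  haveI : NeZero (Q + 1) := ⟨by omega⟩
  have := ZMod.val_lt t
  unfold B
  rw [Fin.lastCases_last]
  exact ZMod.val_natCast_of_lt (by omega)

include hQ in
private lemma B_cast_val (j : Fin (m + 1)) :
    (B κ' t j.castSucc).val =
      if (κ' j).val < t.val + 1 then (κ' j).val else (κ' j).val + 1 := by
  haveI : NeZero Q := ⟨by omega⟩
  unfold B
  rw [Fin.lastCases_castSucc]
  exact bwd_val _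

include hQ ht in
private lemma ht_val : ∀ j, (κ' j).val ≠ t.val := by
  haveI : NeZero Q := ⟨by omega⟩
  intro j hc
  exact ht j (ZMod.val_injective _ hc)

include hQ hκ' h0' ht in
private lemma B_shi : Shi (m + 2) (Q + 1) (B κ' t) := by
  haveI : NeZero Q := ⟨by omega⟩
  haveI : NeZero (Q + 1) := ⟨by omega⟩
  have hbl := B_last_val hQ κ' t
  have hbc := B_cast_val hQ κ' t
  have hwt := ht_val hQ κ' t ht
  have hwlt : ∀ j, (κ' j).val < Q := fun j => ZMod.val_lt _
  have htlt : t.val < Q := ZMod.val_lt t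
  constructor
  · intro i j hij
    have hv := congrArg ZMod.val hij
    induction i using Fin.lastCases with
    | last =>
      induction j using Fin.lastCases with
      | last => rfl
      | cast j' =>
        exfalso
        rw [hbl, hbc j'] at hv
        have := hwt j'
        by_cases hy : (κ' j').val < t.val + 1
        · rw [if_pos hy] at hv; omega
        · rw [if_neg hy] at hv; omega
    | cast i' =>
      induction j using Fin.lastCases with
      | last =>
        exfalso
        rw [hbc i', hbl] at hv
        have := hwt i'
        by_cases hx : (κ' i').val < t.val + 1
        · rw [if_pos hx] at hv; omega
        · rw [if_neg hx] at hv; omega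
      | cast j' =>
        rw [hbc i', hbc j'] at hv
        congr 1
        apply hκ'.1
        apply ZMod.val_injective
        have h1 := hwt i'
        have h2 := hwt j'
        by_cases hx : (κ' i').val < t.val + 1 <;> by_cases hy : (κ' j').val < t.val + 1 <;>
          simp only [if_pos, if_neg, hx, hy, if_true, if_false] at hv <;> omega
  · intro i j hij hc
    rw [succ_iff (by omega)] at hc
    induction j using Fin.lastCases with
    | last =>
      induction i using Fin.lastCases with
      | last => exact absurd hij (lt_irrefl _)
      | cast i' =>
        rw [hbl, hbc i'] at hc
        have h1 := hwt i'
        have h2 := hwlt i'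
        rcases hc with hc | ⟨hc1, hc2⟩
        · by_cases hx : (κ' i').val < t.val + 1
          · rw [if_pos hx] at hc; omega
          · rw [if_neg hx] at hc; omega
        · omega
    | cast j' =>
      induction i using Fin.lastCases with
      | last =>
        have h1 : j'.castSucc < Fin.last (m + 1) := Fin.castSucc_lt_last j'
        exact absurd (hij.trans h1) (lt_irrefl _)
      | cast i' =>
        have hij' : i' < j' := Fin.castSucc_lt_castSucc_iff.mp hij
        rw [hbc i', hbc j'] at hc
        have h1 := hwt i'
        have h2 := hwt j'
        have h3 := hwlt i'
        have h4 := hwlt j'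
        rcases hc with hc | ⟨hc1, hc2⟩
        · by_cases hx : (κ' i').val < t.val + 1 <;> by_cases hy : (κ' j').val < t.val + 1 <;>
            simp only [if_pos, if_neg, hx, hy, if_true, if_false] at hc
          · exact hκ'.2 i' j' hij' ((succ_iff (by omega) _ _).mpr (Or.inl hc))
          · exact hij'.ne (hκ'.1 (ZMod.val_injective _
              (show (κ' i').val = (κ' j').val by omega)))
          · omega
          · exact hκ'.2 i' j' hij' ((succ_iff (by omega) _ _).mpr (Or.inl (by omega)))
        · have hwi : (κ' i').val = Q - 1 := by
            by_cases hx : (κ' i').val < t.val + 1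
            · rw [if_pos hx] at hc1; omega
            · rw [if_neg hx] at hc1; omega
          have hwj : (κ' j').val = 0 := by
            by_cases hy : (κ' j').val < t.val + 1
            · rw [if_pos hy] at hc2; omega
            · rw [if_neg hy] at hc2; omega
          exact hκ'.2 i' j' hij' ((succ_iff (by omega) _ _).mpr (Or.inr ⟨hwi, hwj⟩))

include hQ h0' in
private lemma B_zero : B κ' t 0 = 0 := by
  haveI : NeZero Q := ⟨by omega⟩
  haveI : NeZero (Q + 1) := ⟨by omega⟩
  have : (0 : Fin (m + 2)) = Fin.castSucc 0 := by simp
  rw [this]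
  unfold B
  rw [Fin.lastCases_castSucc, h0']
  unfold bwd
  rw [if_pos (by rw [ZMod.val_zero]; omega)]
  simp

end Backward

section RoundTrips

variable (hQ : m + 2 ≤ Q)

include hQ in
private lemma BF (κ : Fin (m + 2) → ZMod (Q + 1)) (hκ : Shi (m + 2) (Q + 1) κ) (h0 : κ 0 = 0) :
    B (fun j => fwd (aOf κ) (κ j.castSucc)) (((aOf κ - 1 : ℕ) : ZMod Q)) = κ := by
  haveI : NeZero Q := ⟨by omega⟩
  haveI : NeZero (Q + 1) := ⟨by omega⟩
  obtain ⟨ha1, ha2⟩ := a_facts κ hκ h0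
  have htv : (((aOf κ - 1 : ℕ) : ZMod Q)).val = aOf κ - 1 := ZMod.val_natCast_of_lt (by omega)
  funext i
  apply ZMod.val_injective
  induction i using Fin.lastCases with
  | last =>
    rw [B_last_val hQ]
    have : (κ (Fin.last (m + 1))).val = aOf κ := rfl
    omega
  | cast j =>
    rw [B_cast_val hQ]
    have hfv : (fwd (aOf κ) (κ j.castSucc)).val
        = if (κ j.castSucc).val < aOf κ then (κ j.castSucc).val else (κ j.castSucc).val - 1 :=
      fwd_val ha1 ha2 _
    have hne := v_ne_a κ hκ j
    have hvlt := ZMod.val_lt (κ j.castSucc)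
    by_cases hv : (κ j.castSucc).val < aOf κ
    · have hw : (fwd (aOf κ) (κ j.castSucc)).val = (κ j.castSucc).val := by
        rw [hfv, if_pos hv]
      rw [hw, if_pos (by omega)]
    · have hw : (fwd (aOf κ) (κ j.castSucc)).val = (κ j.castSucc).val - 1 := by
        rw [hfv, if_neg hv]
      rw [hw, if_neg (by omega)]
      omega

include hQ in
private lemma haB (κ' : Fin (m + 1) → ZMod Q) (t : ZMod Q) :
    aOf (B κ' t) = t.val + 1 := B_last_val hQ κ' t

include hQ in
private lemma FB (κ' : Fin (m + 1) → ZMod Q) (t : ZMod Q) :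
    ∀ j, fwd (aOf (B κ' t)) ((B κ' t) j.castSucc) = κ' j := by
  haveI : NeZero Q := ⟨by omega⟩
  haveI : NeZero (Q + 1) := ⟨by omega⟩
  intro j
  have ha := haB hQ κ' t
  have htlt : t.val < Q := ZMod.val_lt t
  have hwlt : (κ' j).val < Q := ZMod.val_lt _
  apply ZMod.val_injective
  rw [fwd_val (by omega) (by omega), B_cast_val hQ]
  by_cases hy : (κ' j).val < t.val + 1
  · rw [if_pos hy, if_pos (by omega)]
  · rw [if_neg hy, if_neg (by omega)]
    omega

include hQ in
private lemma tB (κ' : Fin (m + 1) → ZMod Q) (t : ZMod Q) :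
    ((aOf (B κ' t) - 1 : ℕ) : ZMod Q) = t := by
  haveI : NeZero Q := ⟨by omega⟩
  have ha := haB hQ κ' t
  have htlt : t.val < Q := ZMod.val_lt t
  apply ZMod.val_injective
  rw [ZMod.val_natCast_of_lt (by omega)]
  omega

end RoundTrips

private abbrev X (n q : ℕ) : Type :=
  {κ : Fin (n + 1) → ZMod q // Shi (n + 1) q κ ∧ κ 0 = 0}

private lemma card_step (m Q : ℕ) (hQ : m + 2 ≤ Q) :
    Nat.card (X (m + 1) (Q + 1)) = (Q - (m + 1)) * Nat.card (X m Q) := by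
  classical
  haveI : NeZero Q := ⟨by omega⟩
  haveI : NeZero (Q + 1) := ⟨by omega⟩
  set F : X (m + 1) (Q + 1) → X m Q := fun κ =>
    ⟨fun j => fwd (aOf κ.1) (κ.1 j.castSucc),
      fwd_shi κ.1 hQ κ.2.1 κ.2.2, fwd_zero κ.1 hQ κ.2.1 κ.2.2⟩ with hFdef
  have hfib : ∀ κ' : X m Q, Nat.card {κ : X (m + 1) (Q + 1) // F κ = κ'} = Q - (m + 1) := by
    intro κ'
    have key : ∀ (κ₀ : X (m + 1) (Q + 1)), F κ₀ = κ' →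
        κ'.1 = fun j => fwd (aOf κ₀.1) (κ₀.1 j.castSucc) := by
      intro κ₀ hFk
      rw [← hFk, hFdef]
    have e : {κ : X (m + 1) (Q + 1) // F κ = κ'} ≃ ↥((range κ'.1)ᶜ) :=
      { toFun := fun κ => ⟨((aOf κ.1.1 - 1 : ℕ) : ZMod Q), by
          simp only [Set.mem_compl_iff, Set.mem_range, not_exists]
          intro j hj
          rw [key κ.1 κ.2] at hj
          exact fwd_notmem κ.1.1 hQ κ.1.2.1 κ.1.2.2 j hj⟩
        invFun := fun t =>
          ⟨⟨B κ'.1 t.1,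
            B_shi hQ κ'.1 t.1 κ'.2.1 κ'.2.2 (fun j hc => t.2 ⟨j, hc⟩),
            B_zero hQ κ'.1 t.1 κ'.2.2⟩,
            Subtype.ext (funext (FB hQ κ'.1 t.1))⟩
        left_inv := fun κ => by
          apply Subtype.ext
          apply Subtype.ext
          show B κ'.1 (((aOf κ.1.1 - 1 : ℕ) : ZMod Q)) = κ.1.1
          rw [key κ.1 κ.2]
          exact BF hQ κ.1.1 κ.1.2.1 κ.1.2.2
        right_inv := fun t => Subtype.ext (tB hQ κ'.1 t.1) }
    rw [Nat.card_congr e]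
    have h1 : (range κ'.1).ncard = m + 1 := by
      rw [← Nat.card_coe_set_eq, Nat.card_range_of_injective κ'.2.1.1,
        Nat.card_eq_fintype_card, Fintype.card_fin]
    have h2 := Set.ncard_add_ncard_compl (range κ'.1)
    rw [Nat.card_zmod] at h2
    rw [Nat.card_coe_set_eq]
    omega
  haveI : Fintype (X m Q) := Fintype.ofFinite _
  haveI : Fintype (X (m + 1) (Q + 1)) := Fintype.ofFinite _
  rw [Nat.card_congr (Equiv.sigmaFiberEquiv F).symm]
  rw [Nat.card_eq_fintype_card, Fintype.card_sigma]
  have hsum : ∀ κ' : X m Q, Fintype.card {κ : X (m + 1) (Q + 1) // F κ = κ'} = Q - (m + 1) :=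
    fun κ' => by rw [← Nat.card_eq_fintype_card]; exact hfib κ'
  rw [Finset.sum_congr rfl (fun κ' _ => hsum κ')]
  rw [Finset.sum_const, Finset.card_univ, smul_eq_mul, ← Nat.card_eq_fintype_card, mul_comm]

end Step

private lemma card_X : ∀ m q : ℕ, m + 1 < q → Nat.card (X m q) = (q - (m + 1)) ^ m := by
  intro m
  induction m with
  | zero =>
    intro q hq
    haveI : Subsingleton (Fin (0 + 1)) := ⟨fun a b => Fin.ext (by omega)⟩
    rw [pow_zero]
    rw [Nat.card_eq_one_iff_unique]
    constructor
    · constructor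
      intro a b
      apply Subtype.ext
      funext i
      have : i = 0 := Subsingleton.elim i 0
      rw [this, a.2.2, b.2.2]
    · refine ⟨⟨fun _ => 0, ⟨fun x y _ => Subsingleton.elim x y, ?_⟩, rfl⟩⟩
      intro i j hij
      exact absurd hij (by rw [Subsingleton.elim i j]; exact lt_irrefl j)
  | succ m ih =>
    intro q hq
    obtain ⟨Q, rfl⟩ : ∃ Q, q = Q + 1 := ⟨q - 1, by omega⟩
    rw [card_step m Q (by omega), ih Q (by omega)]
    have h1 : Q + 1 - (m + 1 + 1) = Q - (m + 1) := by omega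
    rw [h1, pow_succ, mul_comm]

/-- Modular chromatic function of the Shi gain graph: for `q > n`, the number of
injections `κ : [n] → ℤ_q` with `κ(j) ≠ κ(i) + 1 (mod q)` for all `i < j`
equals `q·(q−n)^{n−1}`. -/
theorem stmt_14 (n q : ℕ) (hn : 1 ≤ n) (h : n < q) :
    Nat.card {κ : Fin n → ZMod q // Function.Injective κ ∧
        ∀ i j : Fin n, i < j → κ j ≠ κ i + 1} =
      q * (q - n) ^ (n - 1) := by
  obtain ⟨m, rfl⟩ : ∃ m, n = m + 1 := ⟨n - 1, by omega⟩
  haveI : NeZero q := ⟨by omega⟩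
  have E : {κ : Fin (m + 1) → ZMod q // Function.Injective κ ∧
      ∀ i j : Fin (m + 1), i < j → κ j ≠ κ i + 1} ≃ ZMod q × X m q :=
    { toFun := fun κ => (κ.1 0,
        ⟨fun i => κ.1 i - κ.1 0,
          ⟨fun x y hxy => κ.2.1 (by
              have : κ.1 x = κ.1 y := by
                have := hxy
                linear_combination (this : κ.1 x - κ.1 0 = κ.1 y - κ.1 0)
              exact this),
            fun i j hij hc => κ.2.2 i j hij (by linear_combination hc)⟩,
          by simp⟩)
      invFun := fun p =>
        ⟨fun i => p.2.1 i + p.1,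
          ⟨fun x y hxy => p.2.2.1.1 (by
              have : p.2.1 x = p.2.1 y := by linear_combination hxy
              exact this),
            fun i j hij hc => p.2.2.1.2 i j hij (by linear_combination hc)⟩⟩
      left_inv := fun κ => Subtype.ext (funext fun i => by simp)
      right_inv := fun p => by
        refine Prod.ext ?_ (Subtype.ext (funext fun i => ?_)) <;> simp [p.2.2.2] }
  rw [Nat.card_congr E, Nat.card_prod, Nat.card_zmod, card_X m q (by omega)]
  simp
end

section
/- Let π = {X₁,…,X_k} be a partition of [n] with blocks indexed so that min X₁ < min X₂ < ⋯ < min X_k, let Γ_π be the interval graph on [k] where i ∼ j iff the intervals [min X_i, max X_i] and [min X_j, max X_j] overlap, and let d_i be the number of j < i adjacent to i in Γ_π. Then the number of injections κ : [k] → [q] such that κ(j) ≠ κ(i) + 1 for all i < j, and κ(i) ≠ κ(j) + 1 for all i < j with i ∼ j in Γ_π, equals ∏_{i=1}^k (q − k + 1 − d_i), for all integers q ≥ k − 1 + max_i d_i. -/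
open Finset

private def Valid {k q : ℕ} (E : Fin k → Fin k → Prop) (κ : Fin k → Fin q) : Prop :=
  Function.Injective κ ∧ ∀ i j : Fin k, i < j →
    ((κ j : ℤ) ≠ (κ i : ℤ) + 1 ∧ (E i j → (κ i : ℤ) ≠ (κ j : ℤ) + 1))

private def collapse {k r : ℕ} (hkr : k ≤ r) (a : Fin (k+1) → Fin (r+1)) (i : Fin k) :
    Fin r :=
  ⟨if (a i.castSucc : ℕ) < (a (Fin.last k) : ℕ) then (a i.castSucc : ℕ)
    else (a i.castSucc : ℕ) - 1, by
      have h1 : (a i.castSucc : ℕ) < r + 1 := (a i.castSucc).isLt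
      have h2 : (a (Fin.last k) : ℕ) < r + 1 := (a (Fin.last k)).isLt
      have h3 : 0 < k := i.pos
      split <;> omega⟩

private def extend {k r : ℕ} (b : Fin k → Fin r) (t : Fin (r+1)) : Fin (k+1) → Fin (r+1) :=
  Fin.lastCases t (fun i => ⟨if (b i : ℕ) < (t : ℕ) then (b i : ℕ) else (b i : ℕ) + 1, by
    have h1 : (b i : ℕ) < r := (b i).isLt
    split <;> omega⟩)

private lemma extend_last {k r : ℕ} (b : Fin k → Fin r) (t : Fin (r+1)) :
    extend b t (Fin.last k) = t := by
  simp [extend]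

private lemma extend_castSucc {k r : ℕ} (b : Fin k → Fin r) (t : Fin (r+1)) (i : Fin k) :
    (extend b t i.castSucc : ℕ) = if (b i : ℕ) < (t : ℕ) then (b i : ℕ) else (b i : ℕ) + 1 := by
  simp [extend]

private lemma collapse_val {k r : ℕ} (hkr : k ≤ r) (a : Fin (k+1) → Fin (r+1)) (i : Fin k) :
    (collapse hkr a i : ℕ) =
      if (a i.castSucc : ℕ) < (a (Fin.last k) : ℕ) then (a i.castSucc : ℕ)
      else (a i.castSucc : ℕ) - 1 := rfl

private lemma collapse_extend {k r : ℕ} (hkr : k ≤ r) (b : Fin k → Fin r) (t : Fin (r+1)) :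
    collapse hkr (extend b t) = b := by
  funext i
  apply Fin.ext
  rw [collapse_val, extend_castSucc, extend_last]
  have := (b i).isLt
  have ht := t.isLt
  split_ifs <;> omega

private lemma extend_spec {k r : ℕ} (hkr : k ≤ r) (E : Fin (k+1) → Fin (k+1) → Prop)
    (b : Fin k → Fin r) (t : Fin (r+1))
    (hb : Valid (fun i j : Fin k => E i.castSucc j.castSucc) b)
    (h1 : ∀ i, (b i : ℕ) + 1 ≠ (t : ℕ))
    (h2 : ∀ i, E i.castSucc (Fin.last k) → (b i : ℕ) ≠ (t : ℕ)) :
    Valid E (extend b t) := by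
  constructor
  · -- injectivity
    intro x y hxy
    induction x using Fin.lastCases with
    | last =>
      induction y using Fin.lastCases with
      | last => rfl
      | cast j =>
        exfalso
        have hv := congrArg Fin.val hxy
        rw [extend_castSucc] at hv
        rw [show (extend b t (Fin.last k)).val = (t : ℕ) from congrArg Fin.val (extend_last b t)] at hv
        have := h1 j
        split_ifs at hv <;> omega
    | cast i =>
      induction y using Fin.lastCases with
      | last =>
        exfalso
        have hv := congrArg Fin.val hxy
        rw [extend_castSucc] at hv
        rw [show (extend b t (Fin.last k)).val = (t : ℕ) from congrArg Fin.val (extend_last b t)] at hv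
        have := h1 i
        split_ifs at hv <;> omega
      | cast j =>
        have hv : (extend b t i.castSucc : ℕ) = (extend b t j.castSucc : ℕ) :=
          congrArg Fin.val hxy
        rw [extend_castSucc, extend_castSucc] at hv
        have hbij : b i = b j := by
          apply Fin.ext
          split_ifs at hv <;> omega
        rw [hb.1 hbij]
  · -- conditions
    intro i j hij
    induction j using Fin.lastCases with
    | last =>
      obtain ⟨i', rfl⟩ := Fin.exists_castSucc_eq.mpr (Fin.ne_last_of_lt hij)
      have e1 := extend_castSucc b t i'
      have e2 := extend_last b t
      have hh1 := h1 i'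
      constructor
      · intro hc
        rw [e2] at hc
        have hc' : (t : ℕ) = (extend b t i'.castSucc : ℕ) + 1 := by exact_mod_cast hc
        rw [e1] at hc'
        split_ifs at hc' <;> omega
      · intro hE hc
        have hh2 := h2 i' hE
        rw [e2] at hc
        have hc' : (extend b t i'.castSucc : ℕ) = (t : ℕ) + 1 := by exact_mod_cast hc
        rw [e1] at hc'
        split_ifs at hc' <;> omega
    | cast j' =>
      have hik : (i : ℕ) < k := lt_of_lt_of_le (Fin.lt_def.mp hij) (by
        have := j'.isLt
        simp only [Fin.coe_castSucc]
        omega)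
      set i' : Fin k := ⟨(i : ℕ), hik⟩ with hi'
      have hii : i = i'.castSucc := by apply Fin.ext; rfl
      have hij' : i' < j' := by
        rw [Fin.lt_def] at hij ⊢
        simp only [Fin.coe_castSucc] at hij; exact hij
      have hcond := hb.2 i' j' hij'
      have e1 := extend_castSucc b t i'
      have e2 := extend_castSucc b t j'
      rw [hii]
      constructor
      · intro hc
        have hc' : (extend b t j'.castSucc : ℕ) = (extend b t i'.castSucc : ℕ) + 1 := by
          exact_mod_cast hc
        rw [e1, e2] at hc'
        have hne : (b j' : ℕ) ≠ (b i' : ℕ) + 1 := by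
          intro hh
          exact hcond.1 (by exact_mod_cast hh)
        split_ifs at hc' <;> omega
      · intro hE hc
        have hne : (b i' : ℕ) ≠ (b j' : ℕ) + 1 := by
          intro hh
          exact hcond.2 hE (by exact_mod_cast hh)
        have hc' : (extend b t i'.castSucc : ℕ) = (extend b t j'.castSucc : ℕ) + 1 := by
          exact_mod_cast hc
        rw [e1, e2] at hc'
        split_ifs at hc' <;> omega

private lemma collapse_spec {k r : ℕ} (hkr : k ≤ r) (E : Fin (k+1) → Fin (k+1) → Prop)
    (a : Fin (k+1) → Fin (r+1)) (ha : Valid E a) :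
    Valid (fun i j : Fin k => E i.castSucc j.castSucc) (collapse hkr a)
    ∧ (∀ i, (collapse hkr a i : ℕ) + 1 ≠ (a (Fin.last k) : ℕ))
    ∧ (∀ i, E i.castSucc (Fin.last k) → (collapse hkr a i : ℕ) ≠ (a (Fin.last k) : ℕ))
    ∧ extend (collapse hkr a) (a (Fin.last k)) = a := by
  -- basic facts
  have fact1 : ∀ i : Fin k, (a i.castSucc : ℕ) ≠ (a (Fin.last k) : ℕ) := by
    intro i hc
    exact (Fin.castSucc_lt_last i).ne (ha.1 (Fin.ext hc))
  have fact2 : ∀ i : Fin k, (a i.castSucc : ℕ) + 1 ≠ (a (Fin.last k) : ℕ) := by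
    intro i hc
    exact (ha.2 i.castSucc (Fin.last k) (Fin.castSucc_lt_last i)).1 (by exact_mod_cast hc.symm)
  refine ⟨⟨?_, ?_⟩, ?_, ?_, ?_⟩
  · -- injectivity of collapse
    intro i j hcc
    have hv := congrArg Fin.val hcc
    rw [collapse_val, collapse_val] at hv
    have hij : a i.castSucc = a j.castSucc := by
      apply Fin.ext
      have := fact1 i; have := fact2 i; have := fact1 j; have := fact2 j
      split_ifs at hv <;> omega
    have := ha.1 hij
    exact Fin.castSucc_injective k this
  · -- conditions
    intro i j hij
    have hcond := ha.2 i.castSucc j.castSucc (by rwa [Fin.castSucc_lt_castSucc_iff])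
    have hne1 : (a j.castSucc : ℕ) ≠ (a i.castSucc : ℕ) + 1 := by
      intro hh; exact hcond.1 (by exact_mod_cast hh)
    have c1 := collapse_val hkr a i
    have c2 := collapse_val hkr a j
    have := fact1 i; have := fact2 i; have := fact1 j; have := fact2 j
    constructor
    · intro hc
      have hc' : (collapse hkr a j : ℕ) = (collapse hkr a i : ℕ) + 1 := by exact_mod_cast hc
      rw [c1, c2] at hc'
      split_ifs at hc' <;> omega
    · intro hE hc
      have hne2 : (a i.castSucc : ℕ) ≠ (a j.castSucc : ℕ) + 1 := by
        intro hh; exact hcond.2 hE (by exact_mod_cast hh)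
      have hc' : (collapse hkr a i : ℕ) = (collapse hkr a j : ℕ) + 1 := by exact_mod_cast hc
      rw [c1, c2] at hc'
      split_ifs at hc' <;> omega
  · -- tcond part 1
    intro i hc
    rw [collapse_val] at hc
    have := fact1 i; have := fact2 i
    split_ifs at hc <;> omega
  · -- tcond part 2
    intro i hE hc
    have hne : (a i.castSucc : ℕ) ≠ (a (Fin.last k) : ℕ) + 1 := by
      intro hh
      exact (ha.2 i.castSucc (Fin.last k) (Fin.castSucc_lt_last i)).2 hE (by exact_mod_cast hh)
    rw [collapse_val] at hc
    have := fact1 i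
    split_ifs at hc <;> omega
  · -- extend ∘ collapse = id
    funext x
    induction x using Fin.lastCases with
    | last => exact extend_last _ _
    | cast i =>
      apply Fin.ext
      rw [extend_castSucc, collapse_val]
      have := fact1 i; have := fact2 i
      have hlt : (a i.castSucc : ℕ) < r + 1 := (a i.castSucc).isLt
      split_ifs <;> omega

private lemma subtype_card_castSucc {k : ℕ} (E : Fin (k+1) → Fin (k+1) → Prop)
    (m : Fin (k+1)) :
    Nat.card {j : Fin (k+1) // j < m ∧ E j m}
      = Nat.card {j : Fin k // j.castSucc < m ∧ E j.castSucc m} := by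
  refine (Nat.card_eq_of_bijective (fun j => ⟨j.1.castSucc, j.2⟩) ⟨?_, ?_⟩).symm
  · rintro ⟨x, _⟩ ⟨y, _⟩ h
    have : x.castSucc = y.castSucc := congrArg Subtype.val h
    exact Subtype.ext (Fin.castSucc_injective k this)
  · rintro ⟨j, hj1, hj2⟩
    have hlt : (j : ℕ) < k := by
      have h1 := Fin.lt_def.mp hj1
      have h2 := m.isLt
      omega
    have hc : (⟨(j : ℕ), hlt⟩ : Fin k).castSucc = j := Fin.ext rfl
    exact ⟨⟨⟨(j : ℕ), hlt⟩, by rw [hc]; exact hj1, by rw [hc]; exact hj2⟩, Subtype.ext hc⟩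

private lemma key (k : ℕ) : ∀ (q : ℕ) (E : Fin k → Fin k → Prop),
    (∀ i j l : Fin k, i < j → j < l → E i l → E i j) →
    (∀ i, k - 1 + Nat.card {j : Fin k // j < i ∧ E j i} ≤ q) →
    Nat.card {κ : Fin k → Fin q // Valid E κ} =
      ∏ i : Fin k, (q + 1 - k - Nat.card {j : Fin k // j < i ∧ E j i}) := by
  induction k with
  | zero =>
    intro q E _ _
    have hall : ∀ κ : Fin 0 → Fin q, Valid E κ := by
      intro κ
      constructor
      · intro a b _; exact a.elim0
      · intro i; exact i.elim0
    rw [Nat.card_congr (Equiv.subtypeUnivEquiv hall)]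
    simp [Nat.card_eq_fintype_card]
  | succ k IH =>
    intro q E hE hq
    classical
    set D : Fin (k+1) → ℕ := fun m => Nat.card {j : Fin (k+1) // j < m ∧ E j m} with hD
    by_cases hqk : q ≤ k
    · -- no injections; RHS has a zero factor
      have hempty : ∀ κ : Fin (k+1) → Fin q, ¬ Valid E κ := by
        intro κ hκ
        have := Fintype.card_le_of_injective κ hκ.1
        simp at this
        omega
      have h0 : Nat.card {κ : Fin (k+1) → Fin q // Valid E κ} = 0 := by
        rw [Nat.card_eq_fintype_card]
        simp only [Fintype.card_eq_zero_iff]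
        exact ⟨fun ⟨κ, hκ⟩ => hempty κ hκ⟩
      rw [h0]
      refine (Finset.prod_eq_zero (Finset.mem_univ (Fin.last k)) ?_).symm
      omega
    · push_neg at hqk
      obtain ⟨r, rfl⟩ : ∃ r, q = r + 1 := ⟨q - 1, by omega⟩
      have hkr : k ≤ r := by omega
      -- fiberwise counting
      set E' : Fin k → Fin k → Prop := fun i j => E i.castSucc j.castSucc with hE'def
      have hE' : ∀ i j l : Fin k, i < j → j < l → E' i l → E' i j := by
        intro i j l hij hjl h
        exact hE i.castSucc j.castSucc l.castSucc (by rwa [Fin.castSucc_lt_castSucc_iff])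
          (by rwa [Fin.castSucc_lt_castSucc_iff]) h
      have hDcast : ∀ i : Fin k,
          Nat.card {j : Fin (k+1) // j < i.castSucc ∧ E j i.castSucc}
            = Nat.card {j : Fin k // j < i ∧ E' j i} := by
        intro i
        rw [subtype_card_castSucc E i.castSucc]
        exact Nat.card_congr (Equiv.subtypeEquivRight (fun j => by
          rw [Fin.castSucc_lt_castSucc_iff, hE'def]))
      set A : Finset (Fin (k+1) → Fin (r+1)) := univ.filter (Valid E) with hAdef
      set B : Finset (Fin k → Fin r) := univ.filter (Valid E') with hBdef
      set D2 : ℕ := (univ.filter fun i : Fin k => E i.castSucc (Fin.last k)).card with hD2def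
      have hcardA : Nat.card {κ : Fin (k+1) → Fin (r+1) // Valid E κ} = A.card := by
        rw [Nat.card_eq_fintype_card, Fintype.card_subtype]
      have hcardB : Nat.card {κ : Fin k → Fin r // Valid E' κ} = B.card := by
        rw [Nat.card_eq_fintype_card, Fintype.card_subtype]
      have hmapsto : ∀ a ∈ A, collapse hkr a ∈ B := by
        intro a ha
        exact mem_filter.mpr ⟨mem_univ _,
          (collapse_spec hkr E a (mem_filter.mp ha).2).1⟩
      -- the crux fact about valid colorings
      have hfiber : ∀ b ∈ B, (A.filter fun a => collapse hkr a = b).card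
          = r + 1 - k - D2 := by
        intro b hb
        have hbv : Valid E' b := (mem_filter.mp hb).2
        have crux : ∀ i j : Fin k, E i.castSucc (Fin.last k) →
            (b i : ℕ) ≠ (b j : ℕ) + 1 := by
          intro i j hEi hc
          rcases lt_trichotomy i j with h | h | h
          · have hEij : E' i j := hE i.castSucc j.castSucc (Fin.last k)
              (by rwa [Fin.castSucc_lt_castSucc_iff]) (Fin.castSucc_lt_last j) hEi
            exact (hbv.2 i j h).2 hEij (by exact_mod_cast hc)
          · rw [h] at hc; omega
          · exact (hbv.2 j i h).1 (by exact_mod_cast hc)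
        set T : Finset (Fin (r+1)) := univ.filter
          (fun t : Fin (r+1) => (∀ i, (b i : ℕ) + 1 ≠ (t : ℕ)) ∧
            (∀ i, E i.castSucc (Fin.last k) → (b i : ℕ) ≠ (t : ℕ))) with hTdef
        have hcardT : (A.filter fun a => collapse hkr a = b).card = T.card := by
          refine Finset.card_bij' (fun a _ => a (Fin.last k)) (fun t _ => extend b t)
            ?_ ?_ ?_ ?_
          · intro a ha
            obtain ⟨haA, hacol⟩ := mem_filter.mp ha
            have hav : Valid E a := (mem_filter.mp haA).2
            have spec := collapse_spec hkr E a hav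
            refine mem_filter.mpr ⟨mem_univ _, ?_, ?_⟩
            · intro i; rw [← hacol]; exact spec.2.1 i
            · intro i hEi; rw [← hacol]; exact spec.2.2.1 i hEi
          · intro t ht
            obtain ⟨-, ht1, ht2⟩ := mem_filter.mp ht
            refine mem_filter.mpr ⟨mem_filter.mpr ⟨mem_univ _, ?_⟩, ?_⟩
            · exact extend_spec hkr E b t hbv ht1 ht2
            · exact collapse_extend hkr b t
          · intro a ha
            obtain ⟨haA, hacol⟩ := mem_filter.mp ha
            have hav : Valid E a := (mem_filter.mp haA).2
            have spec := collapse_spec hkr E a hav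
            rw [← hacol]
            exact spec.2.2.2
          · intro t ht
            exact extend_last b t
        have hb1bound : ∀ i : Fin k, (b i : ℕ) + 1 < r + 1 :=
          fun i => Nat.succ_lt_succ (b i).isLt
        set B1 : Finset (Fin (r+1)) :=
          univ.image (fun i : Fin k => (⟨(b i : ℕ) + 1, hb1bound i⟩ : Fin (r+1))) with hB1def
        set B2 : Finset (Fin (r+1)) :=
          (univ.filter fun i : Fin k => E i.castSucc (Fin.last k)).image
            (fun i => (b i).castSucc) with hB2def
        have hT : T = univ \ (B1 ∪ B2) := by
          ext t
          simp only [hTdef, hB1def, hB2def, mem_filter, mem_univ, true_and, mem_sdiff,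
            mem_union, mem_image, not_or, not_exists, Fin.ext_iff, Fin.coe_castSucc]
          tauto
        have hB1card : B1.card = k := by
          rw [hB1def, card_image_of_injective _ ?_, card_univ, Fintype.card_fin]
          intro i j hij
          have : (b i : ℕ) + 1 = (b j : ℕ) + 1 := congrArg Fin.val hij
          exact hbv.1 (Fin.ext (by omega))
        have hB2card : B2.card = D2 := by
          rw [hB2def, card_image_of_injective _ ?_, hD2def]
          intro i j hij
          exact hbv.1 (Fin.castSucc_injective r hij)
        have hdisjB : Disjoint B1 B2 := by
          rw [Finset.disjoint_left]
          rintro x hx1 hx2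
          rw [hB1def, mem_image] at hx1
          rw [hB2def, mem_image] at hx2
          obtain ⟨j, -, hj⟩ := hx1
          obtain ⟨i, hi, hix⟩ := hx2
          obtain ⟨-, hEi⟩ := mem_filter.mp hi
          have hv1 : (b j : ℕ) + 1 = (x : ℕ) := congrArg Fin.val hj
          have hv2 : (b i : ℕ) = (x : ℕ) := congrArg Fin.val hix
          exact crux i j hEi (by omega)
        rw [hcardT, hT, card_sdiff_of_subset (subset_univ _), card_union_of_disjoint hdisjB,
          hB1card, hB2card, card_univ, Fintype.card_fin]
        omega
      have hAcard : A.card = B.card * (r + 1 - k - D2) := by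
        rw [Finset.card_eq_sum_card_fiberwise hmapsto, Finset.sum_congr rfl hfiber,
          Finset.sum_const, smul_eq_mul]
      have hq' : ∀ i : Fin k, k - 1 + Nat.card {j : Fin k // j < i ∧ E' j i} ≤ r := by
        intro i
        have h1 := hq i.castSucc
        have h2 := hDcast i
        have h3 := i.pos
        omega
      have hBIH : B.card = ∏ i : Fin k,
          (r + 1 - k - Nat.card {j : Fin k // j < i ∧ E' j i}) := by
        rw [← hcardB]
        exact IH r E' hE' hq'
      have hDlast : Nat.card {j : Fin (k+1) // j < Fin.last k ∧ E j (Fin.last k)} = D2 := by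
        rw [subtype_card_castSucc, Nat.card_eq_fintype_card, Fintype.card_subtype, hD2def]
        congr 1
        apply Finset.filter_congr
        intro j _
        simp [Fin.castSucc_lt_last]
      rw [hcardA, hAcard, hBIH, Fin.prod_univ_castSucc]
      congr 1
      · apply Finset.prod_congr rfl
        intro i _
        rw [← hDcast i]
        omega
      · rw [hDlast]
        omega


/-- Theorem SC: for a partition `π = {X₁,…,X_k}` of `[n]` with blocks indexed so that the
minima increase, `Γ_π` the overlap (interval) graph on `[k]`, and `d_i` the lower degrees,
the number of injections `κ : [k] → [q]` with `κ(j) ≠ κ(i)+1` for `i < j` and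
`κ(i) ≠ κ(j)+1` for overlapping `i < j` equals `∏_{i=1}^k (q − k + 1 − d_i)`,
for all `q ≥ k − 1 + max_i d_i`. -/
theorem stmt_17 (n k q : ℕ) (π : Fin k → Finset (Fin n))
    (hne : ∀ i, (π i).Nonempty)
    (hdisj : ∀ i j, i ≠ j → Disjoint (π i) (π j))
    (hcover : ∀ v : Fin n, ∃ i, v ∈ π i)
    (hmin : ∀ i j : Fin k, i < j → (π i).min' (hne i) < (π j).min' (hne j))
    (overlap : Fin k → Fin k → Prop)
    (hoverlap : ∀ i j, overlap i j ↔
      ¬((π i).max' (hne i) < (π j).min' (hne j)) ∧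
      ¬((π j).max' (hne j) < (π i).min' (hne i)))
    (d : Fin k → ℕ)
    (hd : ∀ i, d i = Nat.card {j : Fin k // j < i ∧ overlap j i})
    (hq : ∀ i, k - 1 + d i ≤ q) :
    Nat.card {κ : Fin k → Fin q // Function.Injective κ ∧
        ∀ i j : Fin k, i < j →
          ((κ j : ℤ) ≠ (κ i : ℤ) + 1 ∧ (overlap i j → (κ i : ℤ) ≠ (κ j : ℤ) + 1))} =
      ∏ i : Fin k, (q + 1 - k - d i) := by
  have hE : ∀ i j l : Fin k, i < j → j < l → overlap i l → overlap i j := by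
    intro i j l hij hjl hol
    rw [hoverlap] at hol
    rw [hoverlap]
    obtain ⟨h1, -⟩ := hol
    constructor
    · intro hc
      exact h1 (hc.trans (hmin j l hjl))
    · intro hc
      have hmm : (π j).min' (hne j) ≤ (π j).max' (hne j) :=
        Finset.min'_le (π j) _ (Finset.max'_mem (π j) (hne j))
      exact absurd (hmin i j hij) (not_lt.mpr (le_trans hmm hc.le))
  have hq' : ∀ i, k - 1 + Nat.card {j : Fin k // j < i ∧ overlap j i} ≤ q :=
    fun i => hd i ▸ hq i
  have := key k q overlap hE hq'
  rw [show (∏ i : Fin k, (q + 1 - k - d i))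
      = ∏ i : Fin k, (q + 1 - k - Nat.card {j : Fin k // j < i ∧ overlap j i}) from
    Finset.prod_congr rfl (fun i _ => by rw [hd])]
  exact this
end

section
/- A sequence (d₁,…,d_k) of nonnegative integers is the vertex-order lower degree sequence of the overlap graph Γ_π of some partition π of [n] into k blocks if and only if: d₁ = 0, d_{i+1} ≤ d_i + 1 for all i ∈ [k−1], and n ≥ k + |{i ∈ [k−1] : d_{i+1} > d_i}| (the number of ascents). -/
set_option linter.unusedSectionVars false
set_option linter.unusedVariables false
set_option maxHeartbeats 1000000
open Finset

namespace Stmt18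

section Defs
variable (k : ℕ) (D : ℕ → ℕ)

/-- ascent predicate on extended sequence -/
def A (i : ℕ) : Prop := i + 1 < k ∧ D (i + 1) = D i + 1

instance : DecidablePred (A k D) := fun i => by unfold A; infer_instance

/-- number of ascents below `i` -/
def al (i : ℕ) : ℕ := ((range i).filter (A k D)).card

def be (i : ℕ) : ℕ := al k D i - D i

def F (j : ℕ) : ℕ := ((range k).filter (fun i => be k D i ≤ al k D j)).card

def M (i : ℕ) : ℕ := i + be k D i

def X (j : ℕ) : ℕ := F k D j + al k D j

end Defs

variable {k : ℕ} {D : ℕ → ℕ}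

lemma al_mono {i j : ℕ} (h : i ≤ j) : al k D i ≤ al k D j :=
  card_le_card (filter_subset_filter _ (range_subset_range.2 h))

lemma al_succ_of {i : ℕ} (h : A k D i) : al k D (i + 1) = al k D i + 1 := by
  unfold al
  rw [range_add_one, filter_insert, if_pos h, card_insert_of_notMem]
  simp

lemma al_succ_of_not {i : ℕ} (h : ¬ A k D i) : al k D (i + 1) = al k D i := by
  unfold al
  rw [range_add_one, filter_insert, if_neg h]

section Hyp
variable (hstep : ∀ i, i + 1 < k → D (i + 1) ≤ D i + 1) (hD0 : D 0 = 0)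
include hstep hD0

lemma D_le_al : ∀ i, i < k → D i ≤ al k D i := by
  intro i
  induction i with
  | zero => intro _; simp [hD0]
  | succ i ih =>
    intro h
    by_cases hA : A k D i
    · rw [al_succ_of hA, hA.2]
      exact Nat.succ_le_succ (ih (by omega))
    · have h1 : D (i + 1) ≤ D i := by
        have := hstep i h
        have : D (i + 1) ≠ D i + 1 := fun he => hA ⟨h, he⟩
        omega
      rw [al_succ_of_not hA]
      exact h1.trans (ih (by omega))

lemma be_succ {i : ℕ} (h : i + 1 < k) : be k D i ≤ be k D (i + 1) := by
  by_cases hA : A k D i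
  · unfold be
    rw [al_succ_of hA, hA.2, Nat.succ_sub_succ]
  · have h1 : D (i + 1) ≤ D i := by
      have := hstep i h
      have : D (i + 1) ≠ D i + 1 := fun he => hA ⟨h, he⟩
      omega
    unfold be
    rw [al_succ_of_not hA]
    exact Nat.sub_le_sub_left h1 _

lemma be_mono {i j : ℕ} (hij : i ≤ j) (hj : j < k) : be k D i ≤ be k D j := by
  induction j with
  | zero =>
    have h0 : i = 0 := Nat.le_zero.1 hij
    subst h0; exact le_rfl
  | succ j ih =>
    rcases Nat.eq_or_lt_of_le hij with he | hlt
    · subst he; exact le_rfl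
    · exact (ih (by omega) (by omega)).trans (be_succ hstep hD0 hj)

end Hyp

lemma be_le_al (i : ℕ) : be k D i ≤ al k D i := Nat.sub_le _ _

/-- downward closed finsets of ℕ -/
lemma mem_iff_lt_card {S : Finset ℕ} (hdc : ∀ x ∈ S, ∀ y, y ≤ x → y ∈ S) (i : ℕ) :
    i ∈ S ↔ i < S.card := by
  constructor
  · intro hi
    have hsub : range (i + 1) ⊆ S := fun y hy => hdc i hi y (Nat.lt_succ_iff.1 (mem_range.1 hy))
    have := card_le_card hsub
    simpa using this
  · intro hi
    by_contra hni
    have hsub : S ⊆ range i := fun x hx =>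
      mem_range.2 (lt_of_not_ge fun hle => hni (hdc x hx i hle))
    have := card_le_card hsub
    simp at this
    omega

section Hyp2
variable (hstep : ∀ i, i + 1 < k → D (i + 1) ≤ D i + 1) (hD0 : D 0 = 0)
include hstep hD0

lemma lt_F_iff {i j : ℕ} (hi : i < k) : i < F k D j ↔ be k D i ≤ al k D j := by
  have := mem_iff_lt_card (S := (range k).filter (fun i => be k D i ≤ al k D j))
    (fun x hx y hy => by
      simp only [mem_filter, mem_range] at hx ⊢
      exact ⟨by omega, (be_mono hstep hD0 hy hx.1).trans hx.2⟩) i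
  rw [mem_filter, mem_range] at this
  unfold F
  constructor
  · intro h; exact ((this.2 h)).2
  · intro h; exact this.1 ⟨hi, h⟩

end Hyp2

lemma F_le (j : ℕ) : F k D j ≤ k := by
  have := card_filter_le (range k) (fun i => be k D i ≤ al k D j)
  unfold F; simpa using this

lemma count_lt (c : ℕ) : ∀ i, ((range i).filter (fun j => A k D j ∧ al k D j < c)).card
    = min c (al k D i) := by
  intro i
  induction i with
  | zero => simp [al]; rfl
  | succ i ih =>
    rw [range_add_one, filter_insert]
    by_cases hA : A k D i
    · by_cases hc : al k D i < c
      · rw [if_pos ⟨hA, hc⟩, card_insert_of_notMem (by simp), ih, al_succ_of hA]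
        omega
      · rw [if_neg (fun h => hc h.2), ih, al_succ_of hA]
        omega
    · rw [if_neg (fun h => hA h.1), ih, al_succ_of_not hA]

lemma count_ge (c i : ℕ) : ((range i).filter (fun j => A k D j ∧ c ≤ al k D j)).card
    = al k D i - min c (al k D i) := by
  have key := card_filter_add_card_filter_not
    (s := (range i).filter (A k D)) (p := fun j => al k D j < c)
  rw [filter_filter, filter_filter] at key
  have h1 : ((range i).filter (fun j => A k D j ∧ al k D j < c)).card = min c (al k D i) :=
    count_lt c i
  have h2 : ((range i).filter fun a => A k D a ∧ ¬al k D a < c)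
      = ((range i).filter fun j => A k D j ∧ c ≤ al k D j) := by
    apply filter_congr
    intro x _
    simp [not_lt]
  rw [h1, h2] at key
  have : min c (al k D i) ≤ al k D i := min_le_right _ _
  unfold al at key ⊢
  omega


section Hyp3
variable (hstep : ∀ i, i + 1 < k → D (i + 1) ≤ D i + 1) (hD0 : D 0 = 0)
include hstep hD0

lemma M_lt_M {i j : ℕ} (hij : i < j) (hj : j < k) : M k D i < M k D j := by
  have := be_mono hstep hD0 (le_of_lt hij) hj
  unfold M; omega

lemma M_lt_X {i j : ℕ} (hi : i < k) (h : be k D i ≤ al k D j) :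
    M k D i < X k D j := by
  have h1 : i < F k D j := (lt_F_iff hstep hD0 hi).2 h
  unfold M X at *; omega

lemma X_lt_M {i j : ℕ} (hi : i < k) (h : al k D j < be k D i) :
    X k D j < M k D i := by
  have h1 : ¬ (i < F k D j) := fun hlt => absurd ((lt_F_iff hstep hD0 hi).1 hlt) (by omega)
  unfold X M at *; omega

lemma M_ne_X {i j : ℕ} (hi : i < k) : M k D i ≠ X k D j := by
  by_cases h : be k D i ≤ al k D j
  · exact ne_of_lt (M_lt_X hstep hD0 hi h)
  · exact (ne_of_lt (X_lt_M hstep hD0 hi (by omega))).symm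

end Hyp3

lemma al_lt_of_A {j : ℕ} (hA : A k D j) : al k D j < al k D k := by
  have h1 : al k D (j + 1) = al k D j + 1 := al_succ_of hA
  have h2 : al k D (j + 1) ≤ al k D k := al_mono (le_of_lt hA.1)
  omega

lemma al_lt_al_of_A {i j : ℕ} (hA : A k D i) (hij : i < j) : al k D i < al k D j := by
  have h1 := al_succ_of hA
  have h2 : al k D (i + 1) ≤ al k D j := al_mono (by omega)
  omega

lemma X_lt_X {i j : ℕ} (hAi : A k D i) (hij : i < j) : X k D i < X k D j := by
  have hal := al_lt_al_of_A hAi hij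
  have hF : F k D i ≤ F k D j := card_le_card (monotone_filter_right _
    (fun x _ hx => hx.trans (le_of_lt hal)))
  unfold X; omega

lemma count_main (hstep : ∀ i, i + 1 < k → D (i + 1) ≤ D i + 1) (hD0 : D 0 = 0)
    {i : ℕ} (hi : i < k) :
    ((range i).filter (fun j => A k D j ∧ be k D i ≤ al k D j)).card = D i := by
  rw [count_ge]
  have h1 : be k D i ≤ al k D i := be_le_al i
  have h2 : D i ≤ al k D i := D_le_al hstep hD0 i hi
  rw [min_eq_left h1]
  unfold be
  omega

lemma cover (hstep : ∀ i, i + 1 < k → D (i + 1) ≤ D i + 1) (hD0 : D 0 = 0) (hk : 1 ≤ k) :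
    ((range k).image (M k D)) ∪ (((range k).filter (A k D)).image (X k D))
      = range (k + al k D k) := by
  have hMinj : Set.InjOn (M k D) (range k) := by
    intro i hi j hj hij
    simp only [coe_range, Set.mem_Iio] at hi hj
    rcases lt_trichotomy i j with h | h | h
    · exact absurd hij (ne_of_lt (M_lt_M hstep hD0 h hj))
    · exact h
    · exact absurd hij.symm (ne_of_lt (M_lt_M hstep hD0 h hi))
  have hXinj : Set.InjOn (X k D) ((range k).filter (A k D)) := by
    intro i hi j hj hij
    simp only [coe_filter, mem_range, Set.mem_setOf_eq] at hi hj
    rcases lt_trichotomy i j with h | h | h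
    · exact absurd hij (ne_of_lt (X_lt_X hi.2 h))
    · exact h
    · exact absurd hij.symm (ne_of_lt (X_lt_X hj.2 h))
  have hdisj : Disjoint ((range k).image (M k D))
      (((range k).filter (A k D)).image (X k D)) := by
    rw [disjoint_left]
    intro v hv hv'
    simp only [mem_image, mem_range, mem_filter] at hv hv'
    obtain ⟨i, hi, rfl⟩ := hv
    obtain ⟨j, hj, hj'⟩ := hv'
    exact M_ne_X hstep hD0 hi hj'.symm
  have hsub : ((range k).image (M k D)) ∪ (((range k).filter (A k D)).image (X k D))
      ⊆ range (k + al k D k) := by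
    intro v hv
    simp only [mem_union, mem_image, mem_range, mem_filter] at hv
    rcases hv with ⟨i, hi, rfl⟩ | ⟨j, hj, rfl⟩
    · have h1 : be k D i ≤ al k D i := be_le_al i
      have h2 : al k D i ≤ al k D k := al_mono (le_of_lt hi)
      simp only [mem_range]
      unfold M
      omega
    · have h1 : al k D j < al k D k := al_lt_of_A hj.2
      have h2 : F k D j ≤ k := F_le j
      simp only [mem_range]
      unfold X
      omega
  apply (eq_of_subset_of_card_le hsub _).symm.symm
  rw [card_union_of_disjoint hdisj, card_image_of_injOn hMinj, card_image_of_injOn hXinj,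
    card_range]
  have : ((range k).filter (A k D)).card = al k D k := rfl
  rw [this, card_range]

lemma card_fin_filter_lt {k m : ℕ} (hm : m ≤ k) (Q : ℕ → Prop) [DecidablePred Q] :
    ((univ : Finset (Fin k)).filter (fun j : Fin k => (j : ℕ) < m ∧ Q (j : ℕ))).card
      = ((range m).filter Q).card := by
  apply card_bij (fun (j : Fin k) _ => (j : ℕ))
  · intro a ha
    simp only [mem_filter, mem_univ, true_and] at ha
    simp [mem_filter, mem_range, ha.1, ha.2]
  · intro a _ b _ h
    exact Fin.val_injective h
  · intro b hb
    simp only [mem_filter, mem_range] at hb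
    exact ⟨⟨b, lt_of_lt_of_le hb.1 hm⟩, by simp [mem_filter, hb.1, hb.2], rfl⟩


lemma backward (n k : ℕ) (hk : 1 ≤ k) (d : Fin k → ℕ)
    (h0 : d ⟨0, hk⟩ = 0)
    (hstep' : ∀ i j : Fin k, (j : ℕ) = (i : ℕ) + 1 → d j ≤ d i + 1)
    (hn : k + Nat.card {i : Fin k // ∃ j : Fin k, (j : ℕ) = (i : ℕ) + 1 ∧ d i < d j} ≤ n) :
    (∃ (π : Fin k → Finset (Fin n)) (hne : ∀ i, (π i).Nonempty),
      (∀ i j, i ≠ j → Disjoint (π i) (π j)) ∧ (∀ v : Fin n, ∃ i, v ∈ π i) ∧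
      (∀ i j : Fin k, i < j → (π i).min' (hne i) < (π j).min' (hne j)) ∧
      (∀ i : Fin k, d i = Nat.card {j : Fin k // j < i ∧
        ¬((π j).max' (hne j) < (π i).min' (hne i)) ∧
        ¬((π i).max' (hne i) < (π j).min' (hne j))})) := by
  classical
  set D : ℕ → ℕ := fun i => if h : i < k then d ⟨i, h⟩ else 0 with hD
  have hDd : ∀ i : Fin k, D (i : ℕ) = d i := fun i => by simp [hD, i.isLt]
  have hstep : ∀ i, i + 1 < k → D (i + 1) ≤ D i + 1 := by
    intro i h
    have h1 : i < k := by omega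
    have := hstep' ⟨i, h1⟩ ⟨i + 1, h⟩ rfl
    simpa [hD, h, h1] using this
  have hD0 : D 0 = 0 := by
    have h1 : 0 < k := hk
    simpa [hD, h1] using h0
  -- ascents correspondence
  have hascA : ∀ i : Fin k, (∃ j : Fin k, (j : ℕ) = (i : ℕ) + 1 ∧ d i < d j) ↔ A k D (i : ℕ) := by
    intro i
    constructor
    · rintro ⟨j, hj, hlt⟩
      have h1 : (i : ℕ) + 1 < k := hj ▸ j.isLt
      have hj' : j = ⟨(i : ℕ) + 1, h1⟩ := Fin.ext hj
      subst hj'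
      have h2 : D ((i : ℕ) + 1) = d ⟨(i : ℕ) + 1, h1⟩ := by simp [hD, h1]
      have h3 := hstep (i : ℕ) h1
      have h4 := hDd i
      exact ⟨h1, by omega⟩
    · rintro ⟨h1, he⟩
      refine ⟨⟨(i : ℕ) + 1, h1⟩, rfl, ?_⟩
      have h2 : D ((i : ℕ) + 1) = d ⟨(i : ℕ) + 1, h1⟩ := by simp [hD, h1]
      have h4 := hDd i
      omega
  set a := al k D k with ha
  have hcard : Nat.card {i : Fin k // ∃ j : Fin k, (j : ℕ) = (i : ℕ) + 1 ∧ d i < d j} = a := by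
    rw [Nat.card_eq_fintype_card, Fintype.card_subtype]
    have he : (univ.filter (fun i : Fin k => ∃ j : Fin k, (j : ℕ) = (i : ℕ) + 1 ∧ d i < d j))
        = (univ.filter (fun i : Fin k => (i : ℕ) < k ∧ A k D (i : ℕ))) := by
      apply filter_congr
      intro i _
      simp only [hascA i, i.isLt, true_and]
    rw [he, card_fin_filter_lt le_rfl (A k D)]
    rfl
  have hn' : k + a ≤ n := by rw [hcard] at hn; exact hn
  -- numeric bounds
  have hbe_a : ∀ i : ℕ, i < k → be k D i ≤ a := fun i hi => (be_le_al i).trans (al_mono hi.le)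
  have hMlt : ∀ i : ℕ, i < k → M k D i < k + a := by
    intro i hi
    have := hbe_a i hi
    unfold M; omega
  have hXlt : ∀ j : ℕ, A k D j → X k D j < k + a := by
    intro j hA
    have h1 : al k D j < a := al_lt_of_A hA
    have h2 : F k D j ≤ k := F_le j
    unfold X; omega
  have hMn : ∀ i : ℕ, i < k → M k D i < n := fun i hi => lt_of_lt_of_le (hMlt i hi) hn'
  have hXn : ∀ j : ℕ, A k D j → X k D j < n := fun j hA => lt_of_lt_of_le (hXlt j hA) hn'
  -- the partition
  set P : Fin k → Finset (Fin n) := fun i => univ.filter (fun v : Fin n =>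
    (v : ℕ) = M k D (i : ℕ) ∨ (A k D (i : ℕ) ∧ (v : ℕ) = X k D (i : ℕ)) ∨
    ((i : ℕ) = k - 1 ∧ k + a ≤ (v : ℕ))) with hP
  have hmem : ∀ (i : Fin k) (v : Fin n), v ∈ P i ↔
      ((v : ℕ) = M k D (i : ℕ) ∨ (A k D (i : ℕ) ∧ (v : ℕ) = X k D (i : ℕ)) ∨
      ((i : ℕ) = k - 1 ∧ k + a ≤ (v : ℕ))) := by
    intro i v; simp [hP]
  have hne : ∀ i, (P i).Nonempty :=
    fun i => ⟨⟨M k D (i : ℕ), hMn _ i.isLt⟩, (hmem i _).2 (Or.inl rfl)⟩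
  have hMX : ∀ i : Fin k, A k D (i : ℕ) → M k D (i : ℕ) < X k D (i : ℕ) :=
    fun i hA => M_lt_X hstep hD0 i.isLt (be_le_al _)
  -- min' value
  have hmin : ∀ i : Fin k, ((P i).min' (hne i) : ℕ) = M k D (i : ℕ) := by
    intro i
    have h1 : (P i).min' (hne i) ≤ ⟨M k D (i : ℕ), hMn _ i.isLt⟩ :=
      min'_le _ _ ((hmem i _).2 (Or.inl rfl))
    have h2 : ∀ v ∈ P i, M k D (i : ℕ) ≤ (v : ℕ) := by
      intro v hv
      rcases (hmem i v).1 hv with h | ⟨hA, h⟩ | ⟨_, h⟩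
      · omega
      · have := hMX i hA; omega
      · have := hMlt (i : ℕ) i.isLt; omega
    have h3 := h2 _ (min'_mem _ (hne i))
    have h4 : ((P i).min' (hne i) : ℕ) ≤ M k D (i : ℕ) := h1
    omega
  -- max' value for non-last blocks
  have hmaxA : ∀ j : Fin k, A k D (j : ℕ) → ((P j).max' (hne j) : ℕ) = X k D (j : ℕ) := by
    intro j hA
    have h1 : (⟨X k D (j : ℕ), hXn _ hA⟩ : Fin n) ≤ (P j).max' (hne j) :=
      le_max' _ _ ((hmem j _).2 (Or.inr (Or.inl ⟨hA, rfl⟩)))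
    have h2 : ∀ v ∈ P j, (v : ℕ) ≤ X k D (j : ℕ) := by
      intro v hv
      rcases (hmem j v).1 hv with h | ⟨_, h⟩ | ⟨hl, _⟩
      · have := hMX j hA; omega
      · omega
      · exfalso; have := hA.1; omega
    have h3 := h2 _ (max'_mem _ (hne j))
    have h4 : X k D (j : ℕ) ≤ ((P j).max' (hne j) : ℕ) := h1
    omega
  have hmaxNA : ∀ j : Fin k, ¬ A k D (j : ℕ) → (j : ℕ) ≠ k - 1 →
      ((P j).max' (hne j) : ℕ) = M k D (j : ℕ) := by
    intro j hA hl
    have h1 : (⟨M k D (j : ℕ), hMn _ j.isLt⟩ : Fin n) ≤ (P j).max' (hne j) :=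
      le_max' _ _ ((hmem j _).2 (Or.inl rfl))
    have h2 : ∀ v ∈ P j, (v : ℕ) ≤ M k D (j : ℕ) := by
      intro v hv
      rcases (hmem j v).1 hv with h | ⟨hA', _⟩ | ⟨hl', _⟩
      · omega
      · exact absurd hA' hA
      · exact absurd hl' hl
    have h3 := h2 _ (max'_mem _ (hne j))
    have h4 : M k D (j : ℕ) ≤ ((P j).max' (hne j) : ℕ) := h1
    omega
  refine ⟨P, hne, ?_, ?_, ?_, ?_⟩
  · -- disjoint
    intro i j hij
    rw [disjoint_left]
    intro v hvi hvj
    have hvij : (i : ℕ) ≠ (j : ℕ) := fun h => hij (Fin.ext h)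
    rcases (hmem i v).1 hvi with h1 | ⟨hAi, h1⟩ | ⟨hl1, h1⟩ <;>
      rcases (hmem j v).1 hvj with h2 | ⟨hAj, h2⟩ | ⟨hl2, h2⟩
    · -- M i = M j
      rcases Nat.lt_or_ge (i : ℕ) (j : ℕ) with h | h
      · have := M_lt_M hstep hD0 h j.isLt; omega
      · have := M_lt_M hstep hD0 (by omega : (j : ℕ) < (i : ℕ)) i.isLt; omega
    · exact M_ne_X hstep hD0 i.isLt (j := (j : ℕ)) (by omega)
    · have := hMlt (i : ℕ) i.isLt; omega
    · exact M_ne_X hstep hD0 j.isLt (j := (i : ℕ)) (by omega)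
    · -- X i = X j
      rcases Nat.lt_or_ge (i : ℕ) (j : ℕ) with h | h
      · have := X_lt_X hAi h; omega
      · have := X_lt_X hAj (by omega : (j : ℕ) < (i : ℕ)); omega
    · have := hXlt (i : ℕ) hAi; omega
    · have := hMlt (j : ℕ) j.isLt; omega
    · have := hXlt (j : ℕ) hAj; omega
    · omega
  · -- cover
    intro v
    rcases Nat.lt_or_ge (v : ℕ) (k + a) with hv | hv
    · have hU : (v : ℕ) ∈ ((range k).image (M k D)) ∪
          (((range k).filter (A k D)).image (X k D)) := by
        rw [cover hstep hD0 hk, mem_range]; exact hv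
      rcases mem_union.1 hU with hU | hU
      · obtain ⟨i, hi, hMi⟩ := mem_image.1 hU
        rw [mem_range] at hi
        exact ⟨⟨i, hi⟩, (hmem _ _).2 (Or.inl hMi.symm)⟩
      · obtain ⟨j, hj, hXj⟩ := mem_image.1 hU
        rw [mem_filter, mem_range] at hj
        exact ⟨⟨j, hj.1⟩, (hmem _ _).2 (Or.inr (Or.inl ⟨hj.2, hXj.symm⟩))⟩
    · exact ⟨⟨k - 1, by omega⟩, (hmem _ _).2 (Or.inr (Or.inr ⟨rfl, hv⟩))⟩
  · -- min' mono
    intro i j hij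
    rw [Fin.lt_def, hmin i, hmin j]
    exact M_lt_M hstep hD0 (Fin.lt_def.1 hij) j.isLt
  · -- degrees
    intro i
    rw [Nat.card_eq_fintype_card, Fintype.card_subtype]
    have hiff : ∀ j : Fin k, (j < i ∧
        ¬((P j).max' (hne j) < (P i).min' (hne i)) ∧
        ¬((P i).max' (hne i) < (P j).min' (hne j))) ↔
        ((j : ℕ) < (i : ℕ) ∧ (A k D (j : ℕ) ∧ be k D (i : ℕ) ≤ al k D (j : ℕ))) := by
      intro j
      constructor
      · rintro ⟨hji, hov1, _⟩
        have hji' : (j : ℕ) < (i : ℕ) := Fin.lt_def.1 hji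
        have hjl : (j : ℕ) ≠ k - 1 := by have := i.isLt; omega
        refine ⟨hji', ?_⟩
        rw [Fin.lt_def, hmin i] at hov1
        by_cases hAj : A k D (j : ℕ)
        · rw [hmaxA j hAj] at hov1
          refine ⟨hAj, ?_⟩
          by_contra hc
          exact hov1 (X_lt_M hstep hD0 i.isLt (by omega))
        · rw [hmaxNA j hAj hjl] at hov1
          exact absurd (M_lt_M hstep hD0 hji' i.isLt) hov1
      · rintro ⟨hji', hAj, hbe⟩
        have hji : j < i := Fin.lt_def.2 hji'
        refine ⟨hji, ?_, ?_⟩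
        · rw [Fin.lt_def, hmin i, hmaxA j hAj]
          have := M_lt_X hstep hD0 i.isLt hbe
          omega
        · rw [Fin.lt_def, hmin j]
          have h1' : (P i).min' (hne i) ≤ (P i).max' (hne i) :=
            min'_le _ _ (max'_mem _ (hne i))
          have h1 : ((P i).min' (hne i) : ℕ) ≤ ((P i).max' (hne i) : ℕ) := h1'
          rw [hmin i] at h1
          have h2 := M_lt_M hstep hD0 hji' i.isLt
          omega
    have he : (univ.filter (fun j : Fin k => j < i ∧
        ¬((P j).max' (hne j) < (P i).min' (hne i)) ∧
        ¬((P i).max' (hne i) < (P j).min' (hne j))))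
        = (univ.filter (fun j : Fin k => (j : ℕ) < (i : ℕ) ∧
          (A k D (j : ℕ) ∧ be k D (i : ℕ) ≤ al k D (j : ℕ)))) := by
      apply filter_congr
      intro j _
      exact iff_of_eq (by rw [eq_iff_iff]; exact hiff j)
    rw [he, card_fin_filter_lt (le_of_lt i.isLt)
      (fun x => A k D x ∧ be k D (i : ℕ) ≤ al k D x),
      count_main hstep hD0 i.isLt, hDd i]



lemma forward (n k : ℕ) (hk : 1 ≤ k) (d : Fin k → ℕ)
    (h : ∃ (π : Fin k → Finset (Fin n)) (hne : ∀ i, (π i).Nonempty),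
      (∀ i j, i ≠ j → Disjoint (π i) (π j)) ∧ (∀ v : Fin n, ∃ i, v ∈ π i) ∧
      (∀ i j : Fin k, i < j → (π i).min' (hne i) < (π j).min' (hne j)) ∧
      (∀ i : Fin k, d i = Nat.card {j : Fin k // j < i ∧
        ¬((π j).max' (hne j) < (π i).min' (hne i)) ∧
        ¬((π i).max' (hne i) < (π j).min' (hne j))})) :
    (d ⟨0, hk⟩ = 0 ∧
      (∀ i j : Fin k, (j : ℕ) = (i : ℕ) + 1 → d j ≤ d i + 1) ∧
      k + Nat.card {i : Fin k // ∃ j : Fin k, (j : ℕ) = (i : ℕ) + 1 ∧ d i < d j} ≤ n) := by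
  classical
  obtain ⟨π, hne, hdisj, hcover, hmono, hdeg⟩ := h
  set Dset : Fin k → Finset (Fin k) := fun i => univ.filter (fun j : Fin k => j < i ∧
      ¬((π j).max' (hne j) < (π i).min' (hne i)) ∧
      ¬((π i).max' (hne i) < (π j).min' (hne j))) with hDset
  have hdeg' : ∀ i : Fin k, d i = (Dset i).card := by
    intro i
    rw [hdeg i, Nat.card_eq_fintype_card, Fintype.card_subtype]
  have hmm : ∀ i : Fin k, (π i).min' (hne i) ≤ (π i).max' (hne i) :=
    fun i => min'_le _ _ (max'_mem _ (hne i))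
  -- key inclusion
  have hincl : ∀ i j : Fin k, (j : ℕ) = (i : ℕ) + 1 →
      ∀ x : Fin k, x ∈ Dset j → x < i → x ∈ Dset i := by
    intro i j hji x hx hxi
    simp only [hDset, mem_filter, mem_univ, true_and] at hx ⊢
    obtain ⟨hxj, hov1, hov2⟩ := hx
    have hij : i < j := Fin.lt_def.2 (by omega)
    refine ⟨hxi, ?_, ?_⟩
    · intro hc
      exact hov1 (hc.trans (hmono i j hij))
    · intro hc
      have h1 := hmono x i hxi
      have h2 := hmm i
      exact absurd (h1.trans_le h2) (not_lt.2 hc.le)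
  have hsub : ∀ i j : Fin k, (j : ℕ) = (i : ℕ) + 1 → Dset j ⊆ insert i (Dset i) := by
    intro i j hji x hx
    by_cases hxi : x = i
    · simp [hxi]
    · have hxj : x < j := (mem_filter.1 hx).2.1
      have hxi' : x < i := by
        rw [Fin.lt_def] at hxj ⊢
        have : (x : ℕ) ≠ (i : ℕ) := fun h => hxi (Fin.ext h)
        omega
      exact mem_insert_of_mem (hincl i j hji x hx hxi')
  refine ⟨?_, ?_, ?_⟩
  · -- d_0 = 0
    rw [hdeg' ⟨0, hk⟩, card_eq_zero.2]
    rw [eq_empty_iff_forall_notMem]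
    intro x hx
    have := (mem_filter.1 hx).2.1
    rw [Fin.lt_def] at this
    simp at this
  · -- step
    intro i j hji
    rw [hdeg' j, hdeg' i]
    calc (Dset j).card ≤ (insert i (Dset i)).card := card_le_card (hsub i j hji)
    _ ≤ (Dset i).card + 1 := card_insert_le _ _
  · -- ascents
    set Asc : Finset (Fin k) := univ.filter
      (fun i : Fin k => ∃ j : Fin k, (j : ℕ) = (i : ℕ) + 1 ∧ d i < d j) with hAsc
    have hcard : Nat.card {i : Fin k // ∃ j : Fin k, (j : ℕ) = (i : ℕ) + 1 ∧ d i < d j}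
        = Asc.card := by
      rw [Nat.card_eq_fintype_card, Fintype.card_subtype]
    rw [hcard]
    -- each ascent block has ≥ 2 elements
    have h2card : ∀ i ∈ Asc, 2 ≤ (π i).card := by
      intro i hi
      rw [hAsc, mem_filter] at hi
      obtain ⟨-, j, hji, hlt⟩ := hi
      have hij : i < j := Fin.lt_def.2 (by omega)
      -- show min_j ≤ max_i
      have hkey : ¬ ((π i).max' (hne i) < (π j).min' (hne j)) := by
        intro hc
        have hsub2 : Dset j ⊆ Dset i := by
          intro x hx
          have hxj : x < j := (mem_filter.1 hx).2.1
          by_cases hxi : x = i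
          · exfalso
            have := (mem_filter.1 hx).2.2.1
            rw [hxi] at this
            exact this hc
          · have hxi' : x < i := by
              rw [Fin.lt_def] at hxj ⊢
              have : (x : ℕ) ≠ (i : ℕ) := fun h => hxi (Fin.ext h)
              omega
            exact hincl i j hji x hx hxi'
        have := card_le_card hsub2
        rw [← hdeg' i, ← hdeg' j] at this
        omega
      have hlt2 : (π i).min' (hne i) < (π i).max' (hne i) :=
        lt_of_lt_of_le (hmono i j hij) (not_lt.1 hkey)
      exact one_lt_card.2 ⟨_, min'_mem _ (hne i), _, max'_mem _ (hne i), ne_of_lt hlt2⟩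
    have hsum1 : ∑ i : Fin k, (π i).card ≤ n := by
      rw [← card_biUnion (fun i _ j _ hij => hdisj i j hij)]
      simpa using card_le_univ ((univ : Finset (Fin k)).biUnion π)
    have hsum2 : k + Asc.card ≤ ∑ i : Fin k, (π i).card := by
      have hb : ∀ i : Fin k, (1 + if i ∈ Asc then 1 else 0) ≤ (π i).card := by
        intro i
        by_cases hi : i ∈ Asc
        · simpa [hi] using h2card i hi
        · simpa [hi] using (hne i).card_pos
      calc k + Asc.card = ∑ i : Fin k, (1 + if i ∈ Asc then 1 else 0) := by
            rw [sum_add_distrib, sum_const, card_univ, Fintype.card_fin, smul_eq_mul, mul_one]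
            congr 1
            rw [sum_ite_mem, univ_inter, sum_const, smul_eq_mul, mul_one]
        _ ≤ ∑ i : Fin k, (π i).card := sum_le_sum (fun i _ => hb i)
    omega


end Stmt18

/-- Proposition: a sequence `(d₁,…,d_k)` of nonnegative integers is the vertex-order lower
degree sequence of the overlap graph `Γ_π` of some partition `π` of `[n]` into `k` blocks
(ordered by least element) iff `d₁ = 0`, `d_{i+1} ≤ d_i + 1` for all `i`, and
`n ≥ k +` the number of ascents of the sequence. -/
theorem stmt_18 (n k : ℕ) (hk : 1 ≤ k) (d : Fin k → ℕ) :
    (∃ (π : Fin k → Finset (Fin n)) (hne : ∀ i, (π i).Nonempty),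
      (∀ i j, i ≠ j → Disjoint (π i) (π j)) ∧ (∀ v : Fin n, ∃ i, v ∈ π i) ∧
      (∀ i j : Fin k, i < j → (π i).min' (hne i) < (π j).min' (hne j)) ∧
      (∀ i : Fin k, d i = Nat.card {j : Fin k // j < i ∧
        ¬((π j).max' (hne j) < (π i).min' (hne i)) ∧
        ¬((π i).max' (hne i) < (π j).min' (hne j))})) ↔
    (d ⟨0, hk⟩ = 0 ∧
      (∀ i j : Fin k, (j : ℕ) = (i : ℕ) + 1 → d j ≤ d i + 1) ∧
      k + Nat.card {i : Fin k // ∃ j : Fin k, (j : ℕ) = (i : ℕ) + 1 ∧ d i < d j} ≤ n) := by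
  constructor
  · exact Stmt18.forward n k hk d
  · rintro ⟨h0, hstep, hn⟩
    exact Stmt18.backward n k hk d h0 hstep hn
end
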